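/- arXiv:2107.08984 — 10 statements merged into one kernel-verified Lean document; each statement's English description precedes it below -/
import Mathlib

section
/- Let p be an odd prime and let a, b be integers with p not dividing a(1-a). Then the number of x in {0, 1, ..., p-1} such that the least nonnegative residue of ax+b modulo p is greater than x equals (p-1)/2. -/
open Finset

private lemma inj_aux (p : ℕ) (hp : p.Prime) (c d : ℤ) (hc : ¬(p : ℤ) ∣ c) :
    ∀ x ∈ Finset.range p, ∀ y ∈ Finset.range p,
      ((c * x + d) % p).toNat = ((c * y + d) % p).toNat → x = y := by
  intro x hx y hy hxy
  rw [Finset.mem_range] at hx hy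
  have hp0 : (p : ℤ) ≠ 0 := by exact_mod_cast hp.pos.ne'
  have h1 : (c * x + d) % p = (c * y + d) % p := by
    have e1 := Int.toNat_of_nonneg (Int.emod_nonneg (c * x + d) hp0)
    have e2 := Int.toNat_of_nonneg (Int.emod_nonneg (c * y + d) hp0)
    omega
  have hdvd : (p : ℤ) ∣ c * ((y : ℤ) - x) := by
    have h2 := Int.ModEq.dvd (h1 : Int.ModEq p (c * x + d) (c * y + d))
    have h3 : (c * (y : ℤ) + d) - (c * (x : ℤ) + d) = c * ((y : ℤ) - x) := by ring
    rwa [h3] at h2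
  have hpI : Prime (p : ℤ) := Nat.prime_iff_prime_int.mp hp
  have h4 := (hpI.dvd_mul.mp hdvd).resolve_left hc
  have h0 : (y : ℤ) - x = 0 := by
    refine Int.eq_zero_of_dvd_of_natAbs_lt_natAbs h4 ?_
    omega
  omega

private lemma img_aux (p : ℕ) (hp : p.Prime) (c d : ℤ) (hc : ¬(p : ℤ) ∣ c) :
    (Finset.range p).image (fun x : ℕ => ((c * x + d) % p).toNat) = Finset.range p := by
  apply Finset.eq_of_subset_of_card_le
  · intro y hy
    simp only [Finset.mem_image] at hy
    obtain ⟨x, hx, rfl⟩ := hy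
    have hp0 : (0 : ℤ) < p := by exact_mod_cast hp.pos
    have h1 := Int.emod_lt_of_pos (c * x + d) hp0
    have h2 := Int.emod_nonneg (c * x + d) hp0.ne'
    simp only [Finset.mem_range]
    omega
  · rw [Finset.card_image_of_injOn]
    intro x hx y hy h
    exact inj_aux p hp c d hc x (by simpa using hx) y (by simpa using hy) h

private lemma sum_aux (p : ℕ) (hp : p.Prime) (c d : ℤ) (hc : ¬(p : ℤ) ∣ c) :
    ∑ x ∈ Finset.range p, ((c * x + d) % p) = ∑ x ∈ Finset.range p, (x : ℤ) := by
  have hp0 : (p : ℤ) ≠ 0 := by exact_mod_cast hp.pos.ne'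
  calc ∑ x ∈ Finset.range p, ((c * x + d) % p)
      = ∑ x ∈ Finset.range p, ((((c * x + d) % p).toNat : ℕ) : ℤ) := by
        refine Finset.sum_congr rfl fun x _ => ?_
        rw [Int.toNat_of_nonneg (Int.emod_nonneg _ hp0)]
    _ = ∑ y ∈ (Finset.range p).image (fun x : ℕ => ((c * x + d) % p).toNat), (y : ℤ) :=
        (Finset.sum_image (inj_aux p hp c d hc)).symm
    _ = ∑ y ∈ Finset.range p, (y : ℤ) := by rw [img_aux p hp c d hc]

private lemma zero_aux (p : ℕ) (hp : p.Prime) (c d : ℤ) (hc : ¬(p : ℤ) ∣ c) :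
    ((Finset.range p).filter (fun x : ℕ => (c * x + d) % p = 0)).card = 1 := by
  have hp0 : (p : ℤ) ≠ 0 := by exact_mod_cast hp.pos.ne'
  have h0 : (0 : ℕ) ∈ (Finset.range p).image (fun x : ℕ => ((c * x + d) % p).toNat) := by
    rw [img_aux p hp c d hc]; exact Finset.mem_range.mpr hp.pos
  obtain ⟨x0, hx0, hgx0⟩ := Finset.mem_image.mp h0
  rw [Finset.card_eq_one]
  refine ⟨x0, ?_⟩
  ext y
  simp only [Finset.mem_filter, Finset.mem_singleton]
  constructor
  · rintro ⟨hy, hy0⟩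
    refine inj_aux p hp c d hc y hy x0 hx0 ?_
    rw [hy0, hgx0]
    rfl
  · intro hy
    rw [hy]
    refine ⟨hx0, ?_⟩
    have h1 := Int.toNat_of_nonneg (Int.emod_nonneg (c * x0 + d) hp0)
    omega

theorem stmt_0 (p : ℕ) (hp : p.Prime) (hodd : Odd p) (a b : ℤ)
    (ha : ¬ (p : ℤ) ∣ a * (1 - a)) :
    ((Finset.range p).filter
      (fun x : ℕ => (a * (x : ℤ) + b) % p > (x : ℤ))).card = (p - 1) / 2 := by
  have hp0 : (0 : ℤ) < p := by exact_mod_cast hp.pos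
  have hA : ¬ (p : ℤ) ∣ a := fun h => ha (h.mul_right _)
  have hA1 : ¬ (p : ℤ) ∣ (a - 1) := by
    intro h
    apply ha
    have h2 : (p : ℤ) ∣ (1 - a) := by
      have h3 := h.neg_right
      simpa using h3
    exact h2.mul_left a
  set r : ℕ → ℤ := fun x => ((a - 1) * x + b) % p with hr
  have hrnn : ∀ x : ℕ, 0 ≤ r x := fun x => Int.emod_nonneg _ hp0.ne'
  have hrlt : ∀ x : ℕ, r x < p := fun x => Int.emod_lt_of_pos _ hp0
  set M := (p - 1) / 2 with hM
  have hpM : p = 2 * M + 1 := by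
    obtain ⟨k, hk⟩ := hodd
    omega
  -- pointwise identity
  have hkey : ∀ x ∈ Finset.range p, (a * x + b) % p
      = (x : ℤ) + r x - (if (p : ℤ) ≤ (x : ℤ) + r x then (p : ℤ) else 0) := by
    intro x hx
    rw [Finset.mem_range] at hx
    have hxlt : (x : ℤ) < p := by exact_mod_cast hx
    have h1 : (a * x + b) % p = ((x : ℤ) + r x) % p := by
      have h2 : Int.ModEq p (((a - 1) * x + b) % p) ((a - 1) * x + b) :=
        Int.emod_emod_of_dvd _ dvd_rfl
      have h3 := h2.add_left (x : ℤ)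
      have h4 : (x : ℤ) + ((a - 1) * x + b) = a * x + b := by ring
      rw [h4] at h3
      exact h3.symm
    rw [h1]
    split_ifs with hcase
    · rw [Int.emod_eq_sub_self_emod,
        Int.emod_eq_of_lt (by omega) (by have := hrlt x; omega)]
    · rw [Int.emod_eq_of_lt (by have := hrnn x; omega) (by omega)]
      ring
  have hsum1 := sum_aux p hp a b hA
  have hsum2 := sum_aux p hp (a - 1) b hA1
  set N := ((Finset.range p).filter (fun x : ℕ => (p : ℤ) ≤ (x : ℤ) + r x)).card with hN
  have hsplit : ∑ x ∈ Finset.range p, ((a * x + b) % p)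
      = (∑ x ∈ Finset.range p, ((x : ℤ) + r x)) - (N : ℤ) * p := by
    rw [Finset.sum_congr rfl hkey, Finset.sum_sub_distrib]
    congr 1
    rw [← Finset.sum_filter, Finset.sum_const, nsmul_eq_mul]
  have hSnat : ∑ x ∈ Finset.range p, x = p * M := by
    have h6 := Finset.sum_range_id_mul_two p
    have h7 : p * (p - 1) = (p * M) * 2 := by
      have h8 : p - 1 = 2 * M := by omega
      rw [h8]; ring
    refine Nat.eq_of_mul_eq_mul_right (by norm_num : 0 < 2) ?_
    rw [h6, h7]
  have hSum : ∑ x ∈ Finset.range p, (x : ℤ) = (p : ℤ) * M := by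
    have h9 : ((∑ x ∈ Finset.range p, x : ℕ) : ℤ) = ∑ x ∈ Finset.range p, (x : ℤ) := by
      push_cast
      rfl
    rw [← h9, hSnat]
    push_cast
    ring
  have hNp : (N : ℤ) * p = (p : ℤ) * M := by
    rw [hsum1, Finset.sum_add_distrib, hsum2] at hsplit
    linarith [hSum, hsplit]
  have hNM : N = M := by
    have h10 : (p : ℤ) * N = (p : ℤ) * M := by linarith [hNp]
    have h11 := mul_left_cancel₀ hp0.ne' h10
    exact_mod_cast h11
  -- characterize complement
  have hnchar : ∀ x ∈ Finset.range p,
      (¬ ((a * (x : ℤ) + b) % p > (x : ℤ)) ↔ ((p : ℤ) ≤ (x : ℤ) + r x ∨ r x = 0)) := by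
    intro x hx
    have hk := hkey x hx
    have h1 := hrnn x
    have h2 := hrlt x
    rw [Finset.mem_range] at hx
    have hxlt : (x : ℤ) < p := by exact_mod_cast hx
    rw [hk]
    split_ifs with h <;> omega
  have hcompl : (Finset.range p).filter (fun x : ℕ => ¬ ((a * (x : ℤ) + b) % p > (x : ℤ)))
      = ((Finset.range p).filter (fun x : ℕ => (p : ℤ) ≤ (x : ℤ) + r x))
        ∪ ((Finset.range p).filter (fun x : ℕ => r x = 0)) := by
    ext y
    simp only [Finset.mem_filter, Finset.mem_union]
    constructor
    · rintro ⟨hy, hny⟩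
      rcases (hnchar y hy).mp hny with h | h
      · exact Or.inl ⟨hy, h⟩
      · exact Or.inr ⟨hy, h⟩
    · rintro (⟨hy, h⟩ | ⟨hy, h⟩)
      · exact ⟨hy, (hnchar y hy).mpr (Or.inl h)⟩
      · exact ⟨hy, (hnchar y hy).mpr (Or.inr h)⟩
  have hdisj : Disjoint ((Finset.range p).filter (fun x : ℕ => (p : ℤ) ≤ (x : ℤ) + r x))
      ((Finset.range p).filter (fun x : ℕ => r x = 0)) := by
    rw [Finset.disjoint_left]
    intro x hx1 hx2
    rw [Finset.mem_filter] at hx1 hx2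
    obtain ⟨hxr, h1⟩ := hx1
    obtain ⟨-, h2⟩ := hx2
    rw [Finset.mem_range] at hxr
    have hxlt : (x : ℤ) < p := by exact_mod_cast hxr
    omega
  have hVcard : ((Finset.range p).filter (fun x : ℕ => r x = 0)).card = 1 := by
    simp only [hr]
    exact zero_aux p hp (a - 1) b hA1
  have hcomplcard : ((Finset.range p).filter
      (fun x : ℕ => ¬ ((a * (x : ℤ) + b) % p > (x : ℤ)))).card = N + 1 := by
    rw [hcompl, Finset.card_union_of_disjoint hdisj, hVcard]
  have htotal := Finset.card_filter_add_card_filter_not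
    (s := Finset.range p) (p := fun x : ℕ => (a * (x : ℤ) + b) % p > (x : ℤ))
  rw [Finset.card_range] at htotal
  omega
end

section
/- Let p be a prime with p ≡ 1 (mod 4). Then for every integer a with 2 ≤ a ≤ p-1, the number of integers x with 1 ≤ x ≤ (p-1)/2 such that {x^2}_p > {a·x^2}_p equals (p-1)/4. -/
/-- `N_p(a,b)`: number of `x` with `1 ≤ x ≤ (p-1)/2` and `{x²+b}_p > {a·x²+b}_p`. -/
def Np (p : ℕ) (a b : ℤ) : ℕ :=
  ((Finset.Icc 1 ((p - 1) / 2)).filter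
    (fun x : ℕ => ((x : ℤ) ^ 2 + b) % p > (a * (x : ℤ) ^ 2 + b) % p)).card

theorem stmt_1 (p : ℕ) (hp : p.Prime) (hp4 : p % 4 = 1) (a : ℤ)
    (ha : 2 ≤ a) (ha' : a ≤ (p : ℤ) - 1) :
    Np p a 0 = (p - 1) / 4 := by
  haveI : Fact p.Prime := ⟨hp⟩
  obtain ⟨k, hk⟩ : ∃ k, p = 4 * k + 1 := ⟨p / 4, by omega⟩
  have hk1 : 1 ≤ k := by have := hp.two_le; omega
  obtain ⟨z, hz⟩ : IsSquare (-1 : ZMod p) :=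
    ZMod.exists_sq_eq_neg_one_iff.mpr (by omega)
  have hzsq : z * z = -1 := hz.symm
  have hz0 : z ≠ 0 := by
    rintro rfl
    simp only [mul_zero] at hzsq
    exact one_ne_zero (neg_eq_zero.mp hzsq.symm)
  have hA : (a : ZMod p) ≠ 0 := by
    intro h
    have hd := (ZMod.intCast_zmod_eq_zero_iff_dvd a p).mp h
    have := Int.le_of_dvd (by omega) hd
    omega
  have hA1 : (a : ZMod p) ≠ 1 := by
    intro h
    have h0 : ((a - 1 : ℤ) : ZMod p) = 0 := by push_cast; rw [h]; ring
    have hd := (ZMod.intCast_zmod_eq_zero_iff_dvd (a - 1) p).mp h0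
    have := Int.le_of_dvd (by omega) hd
    omega
  -- the folding involution
  set f : ℕ → ℕ := fun x =>
    if (z * (x : ZMod p)).val ≤ 2 * k then (z * (x : ZMod p)).val
    else p - (z * (x : ZMod p)).val with hf
  -- basic facts for x in range
  have hxz : ∀ x : ℕ, 1 ≤ x → x ≤ 2 * k → (x : ZMod p) ≠ 0 := by
    intro x h1 h2 h
    have hd := (ZMod.natCast_eq_zero_iff x p).mp h
    have := Nat.le_of_dvd (by omega) hd
    omega
  have hfmem : ∀ x : ℕ, 1 ≤ x → x ≤ 2 * k → 1 ≤ f x ∧ f x ≤ 2 * k := by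
    intro x h1 h2
    have hm0 : z * (x : ZMod p) ≠ 0 := mul_ne_zero hz0 (hxz x h1 h2)
    have hmv : (z * (x : ZMod p)).val ≠ 0 := by
      simpa [ZMod.val_eq_zero] using hm0
    have hmlt : (z * (x : ZMod p)).val < p := ZMod.val_lt _
    rw [hf]
    by_cases hc : (z * (x : ZMod p)).val ≤ 2 * k
    · simp only [if_pos hc]; omega
    · simp only [if_neg hc]; omega
  have hfcast : ∀ x : ℕ, ((f x : ℕ) : ZMod p) = z * x ∨ ((f x : ℕ) : ZMod p) = -(z * x) := by
    intro x
    rw [hf]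
    by_cases hc : (z * (x : ZMod p)).val ≤ 2 * k
    · left; simp only [if_pos hc]; exact ZMod.natCast_rightInverse _
    · right; simp only [if_neg hc]
      have hle : (z * (x : ZMod p)).val ≤ p := le_of_lt (ZMod.val_lt _)
      push_cast [Nat.cast_sub hle]
      rw [ZMod.natCast_rightInverse, ZMod.natCast_self]
      ring
  have hfsq : ∀ x : ℕ, ((f x : ℕ) : ZMod p) ^ 2 = -((x : ZMod p) ^ 2) := by
    intro x
    rcases hfcast x with h | h <;> rw [h] <;>
      · ring_nf
        rw [show z ^ 2 = z * z by ring, hzsq]; ring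
  -- squaring recovers x on the range
  have hval_id : ∀ x : ℕ, x ≤ 2 * k → ((x : ZMod p)).val = x := by
    intro x h2; exact ZMod.val_cast_of_lt (by omega)
  have hinv : ∀ x : ℕ, 1 ≤ x → x ≤ 2 * k → f (f x) = x := by
    intro x h1 h2
    obtain ⟨hf1, hf2⟩ := hfmem x h1 h2
    obtain ⟨hg1, hg2⟩ := hfmem (f x) hf1 hf2
    have hsq2 : ((f (f x) : ℕ) : ZMod p) ^ 2 = ((x : ZMod p)) ^ 2 := by
      rw [hfsq (f x), hfsq x, neg_neg]
    have hfac : (((f (f x) : ℕ) : ZMod p) - x) * (((f (f x) : ℕ) : ZMod p) + x) = 0 := by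
      have : ((f (f x) : ℕ) : ZMod p) ^ 2 - ((x : ZMod p)) ^ 2 = 0 := by
        rw [hsq2]; ring
      linear_combination this
    rcases mul_eq_zero.mp hfac with h | h
    · have heq : ((f (f x) : ℕ) : ZMod p) = (x : ZMod p) := by
        linear_combination h
      have := congrArg ZMod.val heq
      rwa [hval_id _ hg2, hval_id _ h2] at this
    · exfalso
      have heq : ((f (f x) : ℕ) : ZMod p) = -(x : ZMod p) := by
        linear_combination h
      have := congrArg ZMod.val heq
      rw [hval_id _ hg2, ZMod.neg_val, if_neg (hxz x h1 h2), hval_id _ h2] at this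
      omega
  -- rewrite the condition via ZMod values
  have hmod : ∀ c : ℤ, c % (p : ℤ) = (((c : ZMod p)).val : ℤ) := fun c =>
    (ZMod.val_intCast c).symm
  have hcond : ∀ x : ℕ,
      ((((x : ℤ) ^ 2 + 0) % p > (a * (x : ℤ) ^ 2 + 0) % p)) ↔
      ((a : ZMod p) * (x : ZMod p) ^ 2).val < ((x : ZMod p) ^ 2).val := by
    intro x
    rw [add_zero, add_zero, hmod, hmod]
    have e1 : (((x : ℤ) ^ 2 : ℤ) : ZMod p) = (x : ZMod p) ^ 2 := by push_cast; ring
    have e2 : ((a * (x : ℤ) ^ 2 : ℤ) : ZMod p) = (a : ZMod p) * (x : ZMod p) ^ 2 := by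
      push_cast; ring
    rw [e1, e2]
    exact_mod_cast Iff.rfl
  -- values flip under f
  have hflip : ∀ x : ℕ, 1 ≤ x → x ≤ 2 * k →
      (((f x : ℕ) : ZMod p) ^ 2).val = p - ((x : ZMod p) ^ 2).val ∧
      ((a : ZMod p) * ((f x : ℕ) : ZMod p) ^ 2).val
        = p - ((a : ZMod p) * (x : ZMod p) ^ 2).val := by
    intro x h1 h2
    have hx2 : (x : ZMod p) ^ 2 ≠ 0 := pow_ne_zero _ (hxz x h1 h2)
    have hax2 : (a : ZMod p) * (x : ZMod p) ^ 2 ≠ 0 := mul_ne_zero hA hx2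
    constructor
    · rw [hfsq x, ZMod.neg_val, if_neg hx2]
    · rw [hfsq x, show (a : ZMod p) * -((x : ZMod p) ^ 2) = -((a : ZMod p) * (x : ZMod p) ^ 2)
        by ring, ZMod.neg_val, if_neg hax2]
  -- the two values are never equal
  have hne : ∀ x : ℕ, 1 ≤ x → x ≤ 2 * k →
      ((a : ZMod p) * (x : ZMod p) ^ 2).val ≠ ((x : ZMod p) ^ 2).val := by
    intro x h1 h2 h
    have heq : (a : ZMod p) * (x : ZMod p) ^ 2 = (x : ZMod p) ^ 2 := by
      have := congrArg (fun n : ℕ => (n : ZMod p)) h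
      simpa [ZMod.natCast_rightInverse _] using this
    have hx2 : (x : ZMod p) ^ 2 ≠ 0 := pow_ne_zero _ (hxz x h1 h2)
    have : ((a : ZMod p) - 1) * ((x : ZMod p) ^ 2) = 0 := by
      linear_combination heq
    rcases mul_eq_zero.mp this with h' | h'
    · exact hA1 (by linear_combination h')
    · exact hx2 h'
  -- condition flips under f
  have hvlt : ∀ u : ZMod p, u.val < p := fun u => ZMod.val_lt u
  have hswap : ∀ x : ℕ, 1 ≤ x → x ≤ 2 * k →
      ((((x : ℤ) ^ 2 + 0) % p > (a * (x : ℤ) ^ 2 + 0) % p) ↔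
       ¬ (((f x : ℤ) ^ 2 + 0) % p > (a * (f x : ℤ) ^ 2 + 0) % p)) := by
    intro x h1 h2
    rw [hcond x, hcond (f x)]
    obtain ⟨e1, e2⟩ := hflip x h1 h2
    rw [e1, e2]
    have := hne x h1 h2
    have := hvlt ((x : ZMod p) ^ 2)
    have := hvlt ((a : ZMod p) * (x : ZMod p) ^ 2)
    omega
  -- counting
  unfold Np
  have hIcc : Finset.Icc 1 ((p - 1) / 2) = Finset.Icc 1 (2 * k) := by
    congr 1; omega
  rw [hIcc]
  set P : ℕ → Prop := fun x : ℕ => ((x : ℤ) ^ 2 + 0) % p > (a * (x : ℤ) ^ 2 + 0) % p with hP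
  have hcardeq :
      ((Finset.Icc 1 (2 * k)).filter P).card
        = ((Finset.Icc 1 (2 * k)).filter (fun x => ¬ P x)).card := by
    apply Finset.card_bij' (fun x _ => f x) (fun x _ => f x)
    · intro x hx
      rw [Finset.mem_filter, Finset.mem_Icc] at hx
      obtain ⟨⟨h1, h2⟩, hPx⟩ := hx
      rw [Finset.mem_filter, Finset.mem_Icc]
      refine ⟨⟨(hfmem x h1 h2).1, (hfmem x h1 h2).2⟩, ?_⟩
      exact (hswap x h1 h2).mp hPx
    · intro x hx
      rw [Finset.mem_filter, Finset.mem_Icc] at hx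
      obtain ⟨⟨h1, h2⟩, hPx⟩ := hx
      rw [Finset.mem_filter, Finset.mem_Icc]
      obtain ⟨hf1, hf2⟩ := hfmem x h1 h2
      refine ⟨⟨hf1, hf2⟩, ?_⟩
      have hiff := hswap (f x) hf1 hf2
      rw [hinv x h1 h2] at hiff
      exact hiff.mpr hPx
    · intro x hx
      rw [Finset.mem_filter, Finset.mem_Icc] at hx
      exact hinv x hx.1.1 hx.1.2
    · intro x hx
      rw [Finset.mem_filter, Finset.mem_Icc] at hx
      exact hinv x hx.1.1 hx.1.2
  have hsum := Finset.card_filter_add_card_filter_not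
    (s := Finset.Icc 1 (2 * k)) (p := P)
  have hcardIcc : (Finset.Icc 1 (2 * k)).card = 2 * k := by
    rw [Nat.card_Icc]; omega
  rw [hcardIcc, ← hcardeq] at hsum
  have : ((Finset.Icc 1 (2 * k)).filter P).card = k := by omega
  rw [this]
  omega
end

section
/- Let p > 3 be a prime with p ≡ 3 (mod 4). Then there exist integers a, a' with 2 ≤ a, a' ≤ p-2 such that (a/p) = 1, (a(1-a)/p) = 1, and (a'/p) = -1, (a'(1-a')/p) = 1. -/
open ZMod

private lemma aux_sq (p : ℕ) [Fact p.Prime] (hp4 : p % 4 = 3) :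
    ∃ s : ZMod p, ¬ IsSquare (1 + s ^ 2) := by
  by_contra hcon
  push_neg at hcon
  have hall : ∀ n : ℕ, IsSquare ((n : ZMod p)) := by
    intro n
    induction n with
    | zero => simp
    | succ n ih =>
      obtain ⟨t, ht⟩ := ih
      have h2 := hcon t
      have : ((n + 1 : ℕ) : ZMod p) = 1 + t ^ 2 := by
        push_cast
        rw [ht]; ring
      rwa [this]
  have hm1 : IsSquare (-1 : ZMod p) := by
    have h := hall (p - 1)
    have hp1 : 1 ≤ p := (Fact.out : p.Prime).one_lt.le
    have : ((p - 1 : ℕ) : ZMod p) = -1 := by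
      rw [Nat.cast_sub hp1, ZMod.natCast_self]; ring
    rwa [this] at h
  exact (ZMod.exists_sq_eq_neg_one_iff.mp hm1) hp4

private lemma aux_range (p : ℕ) [NeZero p] (hp : 3 < p) (x : ZMod p)
    (h0 : x ≠ 0) (h1 : x ≠ 1) (hm : x ≠ -1) :
    2 ≤ (x.val : ℤ) ∧ (x.val : ℤ) ≤ (p : ℤ) - 2 := by
  have hlt := x.val_lt
  have hne0 : x.val ≠ 0 := fun h => h0 (by rw [← x.natCast_zmod_val, h]; simp)
  have hne1 : x.val ≠ 1 := fun h => h1 (by rw [← x.natCast_zmod_val, h]; simp)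
  have hnem : x.val ≠ p - 1 := by
    intro h
    apply hm
    rw [← x.natCast_zmod_val, h, Nat.cast_sub (by omega), ZMod.natCast_self]
    ring
  omega

private lemma aux_leg (p : ℕ) [Fact p.Prime] (x : ZMod p) :
    legendreSym p ((x.val : ℤ)) = quadraticChar (ZMod p) x ∧
    legendreSym p ((x.val : ℤ) * (1 - (x.val : ℤ))) = quadraticChar (ZMod p) (x * (1 - x)) := by
  constructor <;>
  · rw [legendreSym]
    congr 1
    push_cast [ZMod.natCast_zmod_val]
    ring

theorem stmt_9 (p : ℕ) [Fact p.Prime] (hp4 : p % 4 = 3) (hp3 : 3 < p) :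
    ∃ a a' : ℤ, 2 ≤ a ∧ a ≤ (p : ℤ) - 2 ∧ 2 ≤ a' ∧ a' ≤ (p : ℤ) - 2 ∧
      legendreSym p a = 1 ∧ legendreSym p (a * (1 - a)) = 1 ∧
      legendreSym p a' = -1 ∧ legendreSym p (a' * (1 - a')) = 1 := by
  have hp : p.Prime := Fact.out
  have hp7 : 7 ≤ p := by
    rcases Nat.lt_or_ge p 7 with h | h
    · interval_cases p <;> omega
    · exact h
  have hm1 : ¬ IsSquare (-1 : ZMod p) := fun h => (ZMod.exists_sq_eq_neg_one_iff.mp h) hp4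
  have hχm1 : quadraticChar (ZMod p) (-1) = -1 :=
    quadraticChar_neg_one_iff_not_isSquare.mpr hm1
  have hn : ∀ k : ℕ, k ≠ 0 → k < p → ((k : ℕ) : ZMod p) ≠ 0 := by
    intro k hk hkp h
    rw [ZMod.natCast_eq_zero_iff] at h
    exact absurd (Nat.le_of_dvd (Nat.pos_of_ne_zero hk) h) (by omega)
  have h2 : (2 : ZMod p) ≠ 0 := by have := hn 2 (by norm_num) (by omega); push_cast at this; exact this
  have h3 : (3 : ZMod p) ≠ 0 := by have := hn 3 (by norm_num) (by omega); push_cast at this; exact this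
  have h4 : (4 : ZMod p) ≠ 0 := by have := hn 4 (by norm_num) (by omega); push_cast at this; exact this
  have h5 : (5 : ZMod p) ≠ 0 := by have := hn 5 (by norm_num) (by omega); push_cast at this; exact this
  -- Construction of a
  set t : ZMod p := 3 * (5 : ZMod p)⁻¹ with ht_def
  have ht : t ≠ 0 := mul_ne_zero h3 (inv_ne_zero h5)
  set x : ZMod p := t ^ 2 with hx_def
  have hx0 : x ≠ 0 := pow_ne_zero _ ht
  have hu : (4 * (5 : ZMod p)⁻¹) ≠ 0 := mul_ne_zero h4 (inv_ne_zero h5)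
  have h1x : 1 - x = (4 * (5 : ZMod p)⁻¹) ^ 2 := by
    rw [hx_def, ht_def]
    field_simp
    ring
  have hx1 : x ≠ 1 := by
    intro h
    apply pow_ne_zero 2 hu
    rw [← h1x, h, sub_self]
  have hxm1 : x ≠ -1 := by
    intro h
    exact hm1 ⟨t, by rw [← h, hx_def, sq]⟩
  have hχx : quadraticChar (ZMod p) x = 1 := quadraticChar_sq_one' ht
  have hχx2 : quadraticChar (ZMod p) (x * (1 - x)) = 1 := by
    rw [h1x, hx_def, ← mul_pow]
    exact quadraticChar_sq_one' (mul_ne_zero ht hu)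
  obtain ⟨hxr1, hxr2⟩ := aux_range p hp3 x hx0 hx1 hxm1
  obtain ⟨hxl1, hxl2⟩ := aux_leg p x
  -- Construction of a'
  have hy : ∃ y : ZMod p, y ≠ 0 ∧ y ≠ 1 ∧ y ≠ -1 ∧ quadraticChar (ZMod p) y = -1 ∧
      quadraticChar (ZMod p) (y * (1 - y)) = -1 * -1 := by
    by_cases hsq2 : IsSquare (2 : ZMod p)
    · obtain ⟨s, hs⟩ := aux_sq p hp4
      have hs0 : s ≠ 0 := by rintro rfl; exact hs (by simp)
      have hs1 : s ^ 2 ≠ 1 := by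
        intro h
        apply hs
        rw [h]
        convert hsq2 using 1
        norm_num
      refine ⟨-s ^ 2, ?_, ?_, ?_, ?_, ?_⟩
      · exact neg_ne_zero.mpr (pow_ne_zero _ hs0)
      · intro h
        exact hm1 ⟨s, by linear_combination h⟩
      · intro h
        exact hs1 (by linear_combination -h)
      · have : (-s ^ 2 : ZMod p) = -1 * s ^ 2 := by ring
        rw [this, map_mul, hχm1, quadraticChar_sq_one' hs0, neg_one_mul]
      · have h1 : (1 : ZMod p) - (-s ^ 2) = 1 + s ^ 2 := by ring
        have hχ1 : quadraticChar (ZMod p) (1 + s ^ 2) = -1 :=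
          quadraticChar_neg_one_iff_not_isSquare.mpr hs
        have h2' : (-s ^ 2 : ZMod p) = -1 * s ^ 2 := by ring
        rw [map_mul, h1, hχ1, h2', map_mul, hχm1, quadraticChar_sq_one' hs0]
        ring
    · refine ⟨2, h2, ?_, ?_, ?_, ?_⟩
      · intro h
        exact one_ne_zero (α := ZMod p) (by linear_combination h)
      · intro h
        exact h3 (by linear_combination h)
      · exact quadraticChar_neg_one_iff_not_isSquare.mpr hsq2
      · have he : (2 : ZMod p) * (1 - 2) = -1 * 2 := by ring
        rw [he, map_mul, hχm1, quadraticChar_neg_one_iff_not_isSquare.mpr hsq2]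
  obtain ⟨y, hy0, hy1, hym1, hχy, hχy2⟩ := hy
  obtain ⟨hyr1, hyr2⟩ := aux_range p hp3 y hy0 hy1 hym1
  obtain ⟨hyl1, hyl2⟩ := aux_leg p y
  refine ⟨(x.val : ℤ), (y.val : ℤ), hxr1, hxr2, hyr1, hyr2, ?_, ?_, ?_, ?_⟩
  · rw [hxl1, hχx]
  · rw [hxl2, hχx2]
  · rw [hyl1, hχy]
  · rw [hyl2, hχy2]; ring
end

section
/- Let p be an odd prime, b an integer, and a an integer with 2 ≤ a ≤ p-1 and (a/p) = 1. Then N_p(a,b) = (p-1)/2 - (1/p)·Σ_{z=1,...,p-1, (z/p)=δ} z, where δ = (a(1-a)/p). In particular, for quadratic residues a, the value N_p(a,b) does not depend on b. -/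
open Finset

section Aux

variable (p : ℕ) [Fact p.Prime]

lemma leg_congr {x y : ℤ} (h : (x : ZMod p) = (y : ZMod p)) :
    legendreSym p x = legendreSym p y := by
  rw [legendreSym.mod p x, legendreSym.mod p y,
    (ZMod.intCast_eq_intCast_iff' x y p).mp h]

lemma aux_ind (q u v w : ℤ) (hq : 0 < q) (hu : 0 ≤ u) (hu' : u < q)
    (hv : 0 ≤ v) (hv' : v < q) (hw : 0 < w) (hw' : w < q)
    (hd : q ∣ (v - u - w)) : (if v < u then q else 0) = w + u - v := by
  have h0 : v - u - w = -q ∨ v - u - w = 0 := by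
    rcases lt_or_ge (v - u - w) 0 with h | h
    · left
      have h1 : q ∣ v - u - w + q := hd.add dvd_rfl
      have h2 : v - u - w + q = 0 :=
        Int.eq_zero_of_abs_lt_dvd h1 (abs_lt.mpr ⟨by omega, by omega⟩)
      omega
    · right
      exact Int.eq_zero_of_abs_lt_dvd hd (abs_lt.mpr ⟨by omega, by omega⟩)
  split_ifs with h <;> omega

lemma key_sum (hodd : Odd p) (t : ℤ) (ht : ¬ (p : ℤ) ∣ t) (f : ℤ → ℤ) :
    ∑ x ∈ Finset.Icc 1 ((p - 1) / 2), f ((t * (x : ℤ) ^ 2) % p)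
      = ∑ z ∈ (Finset.Icc (1 : ℤ) ((p : ℤ) - 1)).filter
          (fun z => legendreSym p z = legendreSym p t), f z := by
  have hp : p.Prime := Fact.out
  have hpodd : p % 2 = 1 := Nat.odd_iff.mp hodd
  have hp3 : 3 ≤ p := by have := hp.two_le; omega
  have hpI : Prime ((p : ℕ) : ℤ) := Nat.prime_iff_prime_int.mp hp
  have hp0 : (0 : ℤ) < p := by exact_mod_cast Nat.pos_of_ne_zero (by omega)
  -- basic fact: x in range is not divisible by p
  have hxndvd : ∀ x : ℕ, x ∈ Finset.Icc 1 ((p - 1) / 2) → ¬ (p : ℤ) ∣ (x : ℤ) := by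
    intro x hx hdvd
    simp only [Finset.mem_Icc] at hx
    have h1 : (0 : ℤ) < (x : ℤ) := by exact_mod_cast hx.1
    have h2 := Int.le_of_dvd h1 hdvd
    have h3 : (x : ℤ) ≤ ((p - 1) / 2 : ℕ) := by exact_mod_cast hx.2
    have h4 : ((p - 1) / 2 : ℕ) < p := by omega
    have h5 : (((p - 1) / 2 : ℕ) : ℤ) < (p : ℤ) := by exact_mod_cast h4
    omega
  have hndvd : ∀ x : ℕ, x ∈ Finset.Icc 1 ((p - 1) / 2) → ¬ (p : ℤ) ∣ t * (x : ℤ) ^ 2 := by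
    intro x hx hdvd
    rcases hpI.dvd_mul.mp hdvd with h | h
    · exact ht h
    · rw [sq] at h
      rcases hpI.dvd_mul.mp h with h' | h' <;> exact hxndvd x hx h'
  refine Finset.sum_bij (fun x _ => (t * (x : ℤ) ^ 2) % p) ?_ ?_ ?_ ?_
  · -- membership
    intro x hx
    have hnd := hndvd x hx
    have hz0 : 0 ≤ (t * (x : ℤ) ^ 2) % p := Int.emod_nonneg _ (by omega)
    have hz1 : (t * (x : ℤ) ^ 2) % p < p := Int.emod_lt_of_pos _ hp0
    have hzne : (t * (x : ℤ) ^ 2) % p ≠ 0 := by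
      intro h
      exact hnd (Int.dvd_of_emod_eq_zero h)
    simp only [Finset.mem_filter, Finset.mem_Icc]
    refine ⟨⟨by omega, by omega⟩, ?_⟩
    rw [← legendreSym.mod]
    have hx0 : (((x : ℤ)) : ZMod p) ≠ 0 := by
      rw [Ne, ZMod.intCast_zmod_eq_zero_iff_dvd]
      exact hxndvd x hx
    rw [legendreSym.mul, legendreSym.sq_one' p hx0, mul_one]
  · -- injectivity
    intro x hx y hy hxy
    simp only [Finset.mem_Icc] at hx hy
    have hdvd : (p : ℤ) ∣ t * (y : ℤ) ^ 2 - t * (x : ℤ) ^ 2 := Int.ModEq.dvd hxy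
    have hfac : t * (y : ℤ) ^ 2 - t * (x : ℤ) ^ 2
        = t * (((y : ℤ) - x) * ((y : ℤ) + x)) := by ring
    rw [hfac] at hdvd
    have hxb : (x : ℤ) ≤ ((p - 1) / 2 : ℕ) := by exact_mod_cast hx.2
    have hyb : (y : ℤ) ≤ ((p - 1) / 2 : ℕ) := by exact_mod_cast hy.2
    have hx1 : (1 : ℤ) ≤ (x : ℤ) := by exact_mod_cast hx.1
    have hy1 : (1 : ℤ) ≤ (y : ℤ) := by exact_mod_cast hy.1
    have hhb : (((p - 1) / 2 : ℕ) : ℤ) * 2 + 1 ≤ (p : ℤ) := by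
      have e : ((p - 1) / 2) * 2 + 1 ≤ p := by omega
      exact_mod_cast e
    rcases hpI.dvd_mul.mp hdvd with h | h
    · exact absurd h ht
    · rcases hpI.dvd_mul.mp h with h' | h'
      · have : (y : ℤ) - x = 0 :=
          Int.eq_zero_of_abs_lt_dvd h' (abs_lt.mpr ⟨by omega, by omega⟩)
        exact_mod_cast (by omega : (x : ℤ) = y)
      · have h1 : (0 : ℤ) < (y : ℤ) + x := by omega
        have h2 := Int.le_of_dvd h1 h'
        omega
  · -- surjectivity
    intro z hz
    simp only [Finset.mem_filter, Finset.mem_Icc] at hz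
    obtain ⟨⟨hz1, hz2⟩, hχ⟩ := hz
    have hzp : ¬ (p : ℤ) ∣ z := by
      intro h
      have := Int.le_of_dvd (by omega) h
      omega
    have hz0 : ((z : ℤ) : ZMod p) ≠ 0 := by
      rwa [Ne, ZMod.intCast_zmod_eq_zero_iff_dvd]
    have ht0 : ((t : ℤ) : ZMod p) ≠ 0 := by
      rwa [Ne, ZMod.intCast_zmod_eq_zero_iff_dvd]
    have hsq : IsSquare (((z * t : ℤ)) : ZMod p) := by
      apply (legendreSym.eq_one_iff p ?_).mp
      · rw [legendreSym.mul, hχ, ← sq]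
        exact legendreSym.sq_one p ht0
      · push_cast
        exact mul_ne_zero hz0 ht0
    obtain ⟨s, hs⟩ := hsq
    have hzt : ((z : ℤ) : ZMod p) * ((t : ℤ) : ZMod p) = s * s := by
      push_cast at hs; exact hs
    set s' : ZMod p := s * ((t : ℤ) : ZMod p)⁻¹ with hs'def
    have hkey : ((t : ℤ) : ZMod p) * s' ^ 2 = ((z : ℤ) : ZMod p) := by
      rw [hs'def]
      field_simp
      linear_combination hzt.symm
    have hs'0 : s' ≠ 0 := by
      intro h
      rw [h] at hkey
      simp at hkey
      exact hz0 hkey.symm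
    have hn1 : 0 < s'.val := ZMod.val_pos.mpr hs'0
    have hn2 : s'.val < p := ZMod.val_lt s'
    set n := s'.val with hndef
    refine ⟨min n (p - n), ?_, ?_⟩
    · simp only [Finset.mem_Icc]
      omega
    · -- value equality
      have hcast : (((min n (p - n) : ℕ)) : ZMod p) ^ 2 = s' ^ 2 := by
        rcases min_cases n (p - n) with ⟨hmin, _⟩ | ⟨hmin, _⟩
        · rw [hmin, hndef, ZMod.natCast_val, ZMod.cast_id]
        · rw [hmin]
          have : ((p - n : ℕ) : ZMod p) = -s' := by
            have hcast2 : ((p - n : ℕ) : ZMod p) = (p : ZMod p) - (n : ZMod p) := by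
              have hle : n ≤ p := by omega
              push_cast [hle]
              ring
            rw [hcast2, ZMod.natCast_self, hndef, ZMod.natCast_val, ZMod.cast_id]
            ring
          rw [this, neg_sq]
      have hzmod : ((t * ((min n (p - n) : ℕ) : ℤ) ^ 2 : ℤ) : ZMod p) = ((z : ℤ) : ZMod p) := by
        rw [Int.cast_mul, Int.cast_pow, Int.cast_natCast, hcast]
        exact hkey
      have hmodeq : t * ((min n (p - n) : ℕ) : ℤ) ^ 2 ≡ z [ZMOD (p : ℕ)] :=
        (ZMod.intCast_eq_intCast_iff _ _ _).mp hzmod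
      have heq : (t * ((min n (p - n) : ℕ) : ℤ) ^ 2) % p = z % p := hmodeq
      show (t * ((min n (p - n) : ℕ) : ℤ) ^ 2) % p = z
      rw [heq, Int.emod_eq_of_lt (by omega) (by omega)]
  · intro x hx
    rfl

lemma card_leg_filter (hodd : Odd p) (t : ℤ) (ht : ¬ (p : ℤ) ∣ t) :
    (((Finset.Icc (1 : ℤ) ((p : ℤ) - 1)).filter
      (fun z => legendreSym p z = legendreSym p t)).card : ℤ) = ((p - 1) / 2 : ℕ) := by
  have := key_sum p hodd t ht (fun _ => (1 : ℤ))
  simp only [Finset.sum_const, nsmul_eq_mul, mul_one] at this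
  rw [← this, Nat.card_Icc]
  simp

end Aux

lemma main_formula (p : ℕ) [Fact p.Prime] (hodd : Odd p) (a b : ℤ)
    (ha : 2 ≤ a) (ha' : a ≤ (p : ℤ) - 1) (haQR : legendreSym p a = 1) :
    ((Np p a b : ℚ) = ((p : ℚ) - 1) / 2 - (1 / (p : ℚ)) *
      ∑ z ∈ (Finset.Icc (1 : ℤ) ((p : ℤ) - 1)).filter
        (fun z => legendreSym p z = legendreSym p (a * (1 - a))), (z : ℚ)) := by
  have hp : p.Prime := Fact.out
  have hpodd : p % 2 = 1 := Nat.odd_iff.mp hodd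
  have hp3 : 3 ≤ p := by have := hp.two_le; omega
  have hpI : Prime ((p : ℕ) : ℤ) := Nat.prime_iff_prime_int.mp hp
  have hp0 : (0 : ℤ) < p := by exact_mod_cast Nat.pos_of_ne_zero (by omega)
  have hp3' : (3 : ℤ) ≤ (p : ℤ) := by exact_mod_cast hp3
  set h : ℕ := (p - 1) / 2 with hh
  have h2h : 2 * h + 1 = p := by omega
  have hta : ¬ (p : ℤ) ∣ a := by
    intro hd; have := Int.le_of_dvd (by omega) hd; omega
  have hta1 : ¬ (p : ℤ) ∣ (a - 1) := by
    intro hd; have := Int.le_of_dvd (by omega) hd; omega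
  have ht1 : ¬ (p : ℤ) ∣ (1 : ℤ) := by
    intro hd; have := Int.le_of_dvd (by omega) hd; omega
  have hxndvd : ∀ x : ℕ, x ∈ Finset.Icc 1 h → ¬ (p : ℤ) ∣ (x : ℤ) := by
    intro x hx hdvd
    simp only [Finset.mem_Icc] at hx
    have h1 : (0 : ℤ) < (x : ℤ) := by exact_mod_cast hx.1
    have h2 := Int.le_of_dvd h1 hdvd
    have h3 : (x : ℤ) ≤ (h : ℕ) := by exact_mod_cast hx.2
    have h4 : ((h : ℕ) : ℤ) < (p : ℤ) := by exact_mod_cast (by omega : h < p)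
    omega
  -- Step 1: p * Np = ∑ (w + u - v)
  have step1 : (p : ℤ) * (Np p a b : ℤ)
      = ∑ x ∈ Finset.Icc 1 h, (((a - 1) * (x : ℤ) ^ 2) % p
          + (((x : ℤ) ^ 2 + b) % p - ((a * (x : ℤ) ^ 2 + b) % p))) := by
    have e1 : (p : ℤ) * (Np p a b : ℤ)
        = ∑ x ∈ Finset.Icc 1 h,
            (if ((a * (x : ℤ) ^ 2 + b) % p < ((x : ℤ) ^ 2 + b) % p) then (p : ℤ) else 0) := by
      rw [Finset.sum_ite, Finset.sum_const, Finset.sum_const]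
      simp only [nsmul_eq_mul, mul_zero, add_zero]
      rw [Np, hh]
      have : ((Finset.Icc 1 h).filter
          (fun x : ℕ => (a * (x : ℤ) ^ 2 + b) % p < ((x : ℤ) ^ 2 + b) % p))
          = ((Finset.Icc 1 ((p-1)/2)).filter
          (fun x : ℕ => ((x : ℤ) ^ 2 + b) % p > (a * (x : ℤ) ^ 2 + b) % p)) := rfl
      rw [this]
      ring
    rw [e1]
    apply Finset.sum_congr rfl
    intro x hx
    have hnd : ¬ (p : ℤ) ∣ (a - 1) * (x : ℤ) ^ 2 := by
      intro hdvd
      rcases hpI.dvd_mul.mp hdvd with hd | hd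
      · exact hta1 hd
      · rw [sq] at hd
        rcases hpI.dvd_mul.mp hd with hd' | hd' <;> exact hxndvd x hx hd'
    set u := ((x : ℤ) ^ 2 + b) % p with hu
    set v := (a * (x : ℤ) ^ 2 + b) % p with hv
    set w := ((a - 1) * (x : ℤ) ^ 2) % p with hw
    have hu0 : 0 ≤ u := Int.emod_nonneg _ (by omega)
    have hu1 : u < p := Int.emod_lt_of_pos _ hp0
    have hv0 : 0 ≤ v := Int.emod_nonneg _ (by omega)
    have hv1 : v < p := Int.emod_lt_of_pos _ hp0
    have hw0 : 0 ≤ w := Int.emod_nonneg _ (by omega)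
    have hw1 : w < p := Int.emod_lt_of_pos _ hp0
    have hwne : w ≠ 0 := by
      intro hh0
      exact hnd (Int.dvd_of_emod_eq_zero hh0)
    have hd : (p : ℤ) ∣ (v - u - w) := by
      have mu : u ≡ (x : ℤ) ^ 2 + b [ZMOD (p : ℕ)] := Int.emod_emod_of_dvd _ dvd_rfl
      have mv : v ≡ a * (x : ℤ) ^ 2 + b [ZMOD (p : ℕ)] := Int.emod_emod_of_dvd _ dvd_rfl
      have mw : w ≡ (a - 1) * (x : ℤ) ^ 2 [ZMOD (p : ℕ)] := Int.emod_emod_of_dvd _ dvd_rfl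
      have hcomb : v - u - w ≡ (a * (x : ℤ) ^ 2 + b) - ((x : ℤ) ^ 2 + b)
          - (a - 1) * (x : ℤ) ^ 2 [ZMOD (p : ℕ)] := (mv.sub mu).sub mw
      have hzero : (a * (x : ℤ) ^ 2 + b) - ((x : ℤ) ^ 2 + b) - (a - 1) * (x : ℤ) ^ 2 = 0 := by
        ring
      rw [hzero] at hcomb
      have hdd : (p : ℤ) ∣ 0 - (v - u - w) := Int.ModEq.dvd hcomb
      rw [zero_sub] at hdd
      exact dvd_neg.mp hdd
    have haux := aux_ind (p : ℤ) u v w hp0 hu0 hu1 hv0 hv1 (by omega) hw1 hd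
    rw [haux]
    ring
  -- Step 2: ∑ u = ∑ v
  have hsumuv : ∑ x ∈ Finset.Icc 1 ((p - 1) / 2), ((x : ℤ) ^ 2 + b) % p
      = ∑ x ∈ Finset.Icc 1 ((p - 1) / 2), ((a * (x : ℤ) ^ 2 + b) % p) := by
    have k1 := key_sum p hodd 1 ht1 (fun z => (z + b) % p)
    have k2 := key_sum p hodd a hta (fun z => (z + b) % p)
    simp only [one_mul, Int.emod_add_emod, legendreSym.at_one, haQR] at k1 k2
    rw [k1, k2]
  -- Step 3: ∑ w = sum over residue class of (a - 1)
  have hsumw : ∑ x ∈ Finset.Icc 1 ((p - 1) / 2), ((a - 1) * (x : ℤ) ^ 2) % p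
      = ∑ z ∈ (Finset.Icc (1 : ℤ) ((p : ℤ) - 1)).filter
          (fun z => legendreSym p z = legendreSym p (a - 1)), z :=
    key_sum p hodd (a - 1) hta1 (fun z => z)
  -- Step 4: reflection z ↦ p - z
  have hm1 : ((-1 : ℤ) : ZMod p) ≠ 0 := by
    push_cast
    exact neg_ne_zero.mpr one_ne_zero
  have hχm1 : legendreSym p (-1) ≠ 0 := by
    intro h0
    have := legendreSym.sq_one p hm1
    rw [h0] at this
    simp at this
  have hX : legendreSym p (a * (1 - a)) = legendreSym p (-1) * legendreSym p (a - 1) := by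
    rw [legendreSym.mul, haQR, one_mul]
    have e : (1 - a) = (-1) * (a - 1) := by ring
    rw [e, legendreSym.mul]
  have hpz : ∀ z : ℤ, legendreSym p ((p : ℤ) - z) = legendreSym p (-1) * legendreSym p z := by
    intro z
    have e : (((p : ℤ) - z : ℤ) : ZMod p) = ((-1 * z : ℤ) : ZMod p) := by
      push_cast [ZMod.natCast_self]
      ring
    rw [leg_congr p e, legendreSym.mul]
  have hiff : ∀ z : ℤ, (legendreSym p z = legendreSym p (a - 1)
      ↔ legendreSym p ((p : ℤ) - z) = legendreSym p (a * (1 - a))) := by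
    intro z
    rw [hX, hpz z]
    constructor
    · intro hzz; rw [hzz]
    · intro hzz; exact mul_left_cancel₀ hχm1 hzz
  have hmem : ∀ z ∈ (Finset.Icc (1 : ℤ) ((p : ℤ) - 1)).filter
      (fun z => legendreSym p z = legendreSym p (a - 1)),
      (p : ℤ) - z ∈ (Finset.Icc (1 : ℤ) ((p : ℤ) - 1)).filter
      (fun z => legendreSym p z = legendreSym p (a * (1 - a))) := by
    intro z hz
    simp only [Finset.mem_filter, Finset.mem_Icc] at hz ⊢
    exact ⟨⟨by omega, by omega⟩, (hiff z).mp hz.2⟩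
  have hmem' : ∀ z ∈ (Finset.Icc (1 : ℤ) ((p : ℤ) - 1)).filter
      (fun z => legendreSym p z = legendreSym p (a * (1 - a))),
      (p : ℤ) - z ∈ (Finset.Icc (1 : ℤ) ((p : ℤ) - 1)).filter
      (fun z => legendreSym p z = legendreSym p (a - 1)) := by
    intro z hz
    simp only [Finset.mem_filter, Finset.mem_Icc] at hz ⊢
    refine ⟨⟨by omega, by omega⟩, ?_⟩
    apply (hiff ((p : ℤ) - z)).mpr
    have e : (p : ℤ) - ((p : ℤ) - z) = z := by ring
    rw [e]
    exact hz.2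
  have hsum4 : ∑ z ∈ (Finset.Icc (1 : ℤ) ((p : ℤ) - 1)).filter
      (fun z => legendreSym p z = legendreSym p (a - 1)), z
      = ∑ z ∈ (Finset.Icc (1 : ℤ) ((p : ℤ) - 1)).filter
      (fun z => legendreSym p z = legendreSym p (a * (1 - a))), ((p : ℤ) - z) := by
    refine Finset.sum_nbij' (fun z => (p : ℤ) - z) (fun z => (p : ℤ) - z)
      hmem hmem' ?_ ?_ ?_
    · intro z _; ring
    · intro z _; ring
    · intro z _; ring
  have hcardT : ((((Finset.Icc (1 : ℤ) ((p : ℤ) - 1)).filter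
      (fun z => legendreSym p z = legendreSym p (a * (1 - a)))).card : ℤ))
      = (((p - 1) / 2 : ℕ) : ℤ) := by
    have hcS := card_leg_filter p hodd (a - 1) hta1
    have hce : ((Finset.Icc (1 : ℤ) ((p : ℤ) - 1)).filter
        (fun z => legendreSym p z = legendreSym p (a * (1 - a)))).card
        = ((Finset.Icc (1 : ℤ) ((p : ℤ) - 1)).filter
        (fun z => legendreSym p z = legendreSym p (a - 1))).card := by
      refine Finset.card_nbij' (fun z => (p : ℤ) - z) (fun z => (p : ℤ) - z)
        hmem' hmem ?_ ?_
      · intro z _; ring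
      · intro z _; ring
    rw [hce]
    exact hcS
  have hsum5 : ∑ z ∈ (Finset.Icc (1 : ℤ) ((p : ℤ) - 1)).filter
      (fun z => legendreSym p z = legendreSym p (a * (1 - a))), ((p : ℤ) - z)
      = (((p - 1) / 2 : ℕ) : ℤ) * p - ∑ z ∈ (Finset.Icc (1 : ℤ) ((p : ℤ) - 1)).filter
      (fun z => legendreSym p z = legendreSym p (a * (1 - a))), z := by
    rw [Finset.sum_sub_distrib, Finset.sum_const, nsmul_eq_mul, hcardT]
  -- combine everything over ℤ
  have final : (p : ℤ) * (Np p a b : ℤ)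
      = (((p - 1) / 2 : ℕ) : ℤ) * p - ∑ z ∈ (Finset.Icc (1 : ℤ) ((p : ℤ) - 1)).filter
          (fun z => legendreSym p z = legendreSym p (a * (1 - a))), z := by
    rw [step1, Finset.sum_add_distrib, Finset.sum_sub_distrib, hsumuv, sub_self, add_zero,
      hsumw, hsum4, hsum5]
  -- move to ℚ
  have hq : (p : ℚ) ≠ 0 := Nat.cast_ne_zero.mpr (by omega)
  have hfQ : (p : ℚ) * (Np p a b : ℚ)
      = (((p - 1) / 2 : ℕ) : ℚ) * p - ∑ z ∈ (Finset.Icc (1 : ℤ) ((p : ℤ) - 1)).filter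
          (fun z => legendreSym p z = legendreSym p (a * (1 - a))), (z : ℚ) := by
    have := congrArg (fun n : ℤ => (n : ℚ)) final
    push_cast at this
    convert this using 2
    norm_cast
  have hhQ : (((p - 1) / 2 : ℕ) : ℚ) = ((p : ℚ) - 1) / 2 := by
    have e : (2 * ((p - 1) / 2) + 1 : ℕ) = p := by omega
    have := congrArg (fun n : ℕ => (n : ℚ)) e
    push_cast at this
    linarith
  rw [hhQ] at hfQ
  field_simp
  linarith [hfQ]

theorem stmt_11 (p : ℕ) [Fact p.Prime] (hodd : Odd p) (a b : ℤ)
    (ha : 2 ≤ a) (ha' : a ≤ (p : ℤ) - 1) (haQR : legendreSym p a = 1) :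
    ((Np p a b : ℚ) = ((p : ℚ) - 1) / 2 - (1 / (p : ℚ)) *
      ∑ z ∈ (Finset.Icc (1 : ℤ) ((p : ℤ) - 1)).filter
        (fun z => legendreSym p z = legendreSym p (a * (1 - a))), (z : ℚ)) ∧
    ∀ b' : ℤ, Np p a b' = Np p a b := by
  refine ⟨main_formula p hodd a b ha ha' haQR, fun b' => ?_⟩
  have h1 := main_formula p hodd a b ha ha' haQR
  have h2 := main_formula p hodd a b' ha ha' haQR
  have : (Np p a b' : ℚ) = (Np p a b : ℚ) := by rw [h1, h2]
  exact_mod_cast this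
end

section
/- Let p ≡ 1 (mod 4) be a prime and b an integer. Then for every integer a with 2 ≤ a ≤ p-1, we have N_p(a,b) = (p-1)/4 whenever (a/p) = 1; that is, the set {N_p(a,b) : 1 < a < p, (a/p) = 1} equals {(p-1)/4}. -/
namespace NpAux

variable (p : ℕ) [Fact p.Prime]

/-- representative in `[1,(p-1)/2]` of `±z`. -/
def rr (z : ZMod p) : ℕ := min z.val (p - z.val)

lemma rr_cast_or (z : ZMod p) :
    ((rr p z : ℕ) : ZMod p) = z ∨ ((rr p z : ℕ) : ZMod p) = -z := by
  have hv : z.val < p := ZMod.val_lt z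
  rcases le_total z.val (p - z.val) with h | h
  · left
    rw [rr, min_eq_left h]
    exact ZMod.natCast_rightInverse z
  · right
    rw [rr, min_eq_right h]
    push_cast [Nat.cast_sub hv.le]
    rw [ZMod.natCast_self, ZMod.natCast_rightInverse z]
    ring

lemma rr_sq (z : ZMod p) : ((rr p z : ℕ) : ZMod p) ^ 2 = z ^ 2 := by
  rcases rr_cast_or p z with h | h <;> rw [h] <;> ring

lemma rr_mem (hodd : p % 2 = 1) {z : ZMod p} (hz : z ≠ 0) :
    rr p z ∈ Finset.Icc 1 ((p - 1) / 2) := by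
  have hv : z.val < p := ZMod.val_lt z
  have hv0 : z.val ≠ 0 := fun h => hz ((ZMod.val_eq_zero z).1 h)
  rw [Finset.mem_Icc, rr]
  omega

lemma rr_neg (z : ZMod p) : rr p (-z) = rr p z := by
  by_cases hz : z = 0
  · simp [hz]
  · have hv : z.val < p := ZMod.val_lt z
    have h : (-z).val = p - z.val := by rw [ZMod.neg_val, if_neg hz]
    rw [rr, rr, h]
    omega

lemma rr_coe {x : ℕ} (hx : x ∈ Finset.Icc 1 ((p - 1) / 2)) :
    rr p ((x : ℕ) : ZMod p) = x := by
  rw [Finset.mem_Icc] at hx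
  have hp2 : 2 ≤ p := (Fact.out : p.Prime).two_le
  have hxp : x < p := by omega
  rw [rr, ZMod.val_cast_of_lt hxp]
  omega

lemma coe_ne_zero {x : ℕ} (hx : x ∈ Finset.Icc 1 ((p - 1) / 2)) :
    ((x : ℕ) : ZMod p) ≠ 0 := by
  rw [Finset.mem_Icc] at hx
  have hp2 : 2 ≤ p := (Fact.out : p.Prime).two_le
  have hxp : x < p := by omega
  intro h
  have := ZMod.val_cast_of_lt hxp
  rw [h, ZMod.val_zero] at this
  omega

lemma sum_reindex (hodd : p % 2 = 1) (c : ZMod p) (hc : c ≠ 0) (f : ZMod p → ℤ) :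
    ∑ x ∈ Finset.Icc 1 ((p - 1) / 2), f (c ^ 2 * ((x : ℕ) : ZMod p) ^ 2)
      = ∑ x ∈ Finset.Icc 1 ((p - 1) / 2), f (((x : ℕ) : ZMod p) ^ 2) := by
  refine Finset.sum_nbij' (fun x => rr p (c * (x : ℕ)))
    (fun y => rr p (c⁻¹ * (y : ℕ))) ?_ ?_ ?_ ?_ ?_
  · intro x hx
    exact rr_mem p hodd (mul_ne_zero hc (coe_ne_zero p hx))
  · intro y hy
    exact rr_mem p hodd (mul_ne_zero (inv_ne_zero hc) (coe_ne_zero p hy))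
  · intro x hx
    show rr p (c⁻¹ * ((rr p (c * (x : ℕ)) : ℕ) : ZMod p)) = x
    rcases rr_cast_or p (c * (x : ℕ)) with h | h <;> rw [h]
    · rw [← mul_assoc, inv_mul_cancel₀ hc, one_mul, rr_coe p hx]
    · rw [mul_neg, ← mul_assoc, inv_mul_cancel₀ hc, one_mul, rr_neg, rr_coe p hx]
  · intro y hy
    show rr p (c * ((rr p (c⁻¹ * (y : ℕ)) : ℕ) : ZMod p)) = y
    rcases rr_cast_or p (c⁻¹ * (y : ℕ)) with h | h <;> rw [h]
    · rw [← mul_assoc, mul_inv_cancel₀ hc, one_mul, rr_coe p hy]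
    · rw [mul_neg, ← mul_assoc, mul_inv_cancel₀ hc, one_mul, rr_neg, rr_coe p hy]
  · intro x hx
    show f (c ^ 2 * ((x : ℕ) : ZMod p) ^ 2) = f (((rr p (c * (x : ℕ)) : ℕ) : ZMod p) ^ 2)
    rw [rr_sq, mul_pow]

lemma val_eq_emod (m : ℤ) (z : ZMod p) (hz : z = ((m : ℤ) : ZMod p)) :
    ((z.val : ℕ) : ℤ) = m % p := by
  rw [hz, ZMod.val_intCast]

/-- The key indicator identity. -/
lemma indicator_eq (m n : ℤ) (hd : (m - n) % (p : ℤ) ≠ 0) :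
    (if n % (p : ℤ) < m % (p : ℤ) then (p : ℤ) else 0)
      = m % p - n % p - (m - n) % p + p := by
  have hp0 : (0 : ℤ) < p := by
    exact_mod_cast (Fact.out : p.Prime).pos
  have hm1 : 0 ≤ m % p := Int.emod_nonneg _ hp0.ne'
  have hm2 : m % (p : ℤ) < p := Int.emod_lt_of_pos _ hp0
  have hn1 : 0 ≤ n % p := Int.emod_nonneg _ hp0.ne'
  have hn2 : n % (p : ℤ) < p := Int.emod_lt_of_pos _ hp0
  have hsub : (m - n) % (p : ℤ) = (m % p - n % p) % p := by rw [Int.sub_emod]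
  by_cases h : n % (p : ℤ) < m % p
  · have he : (m % (p : ℤ) - n % p) % p = m % p - n % p :=
      Int.emod_eq_of_lt (by omega) (by omega)
    rw [if_pos h, hsub, he]
    ring
  · rw [if_neg h]
    have hne : m % (p : ℤ) ≠ n % p := by
      intro he
      exact hd (by rw [hsub, he, sub_self, Int.zero_emod])
    have : (m % (p : ℤ) - n % p) % p = m % p - n % p + p := by
      calc (m % (p : ℤ) - n % p) % p = (m % (p : ℤ) - n % p + p * 1) % p := by
            rw [Int.add_mul_emod_self_left]
        _ = m % (p : ℤ) - n % p + p := by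
            have he : (m % (p : ℤ) - n % p + p) % p = m % p - n % p + p :=
              Int.emod_eq_of_lt (by omega) (by omega)
            rw [mul_one, he]
    rw [hsub, this]
    ring

end NpAux

open NpAux in
lemma Np_eq (p : ℕ) [hp : Fact p.Prime] (hp4 : p % 4 = 1) (b a : ℤ)
    (ha1 : 1 < a) (hap : a < (p : ℤ)) (hA : legendreSym p a = 1) :
    Np p a b = (p - 1) / 4 := by
  have hprime := (Fact.out : p.Prime)
  have hp5 : 5 ≤ p := by
    have := hprime.two_le
    rcases Nat.lt_or_ge p 5 with h | h
    · interval_cases p <;> simp_all <;> omega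
    · exact h
  set k : ℕ := (p - 1) / 4 with hkdef
  have hpk : p = 4 * k + 1 := by omega
  have hodd : p % 2 = 1 := by omega
  have hp0 : (0 : ℤ) < p := by exact_mod_cast hprime.pos
  set I := Finset.Icc 1 ((p - 1) / 2) with hI
  have hcardI : I.card = 2 * k := by
    rw [hI, Nat.card_Icc]; omega
  -- a is a nonzero square mod p
  have haz : ((a : ℤ) : ZMod p) ≠ 0 := by
    rw [Ne, ZMod.intCast_zmod_eq_zero_iff_dvd]
    intro h
    have := Int.le_of_dvd (by omega) h
    omega
  obtain ⟨c, hc⟩ : IsSquare ((a : ℤ) : ZMod p) := (legendreSym.eq_one_iff p haz).mp hA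
  have hc2 : ((a : ℤ) : ZMod p) = c ^ 2 := by rw [hc]; ring
  have hc0 : c ≠ 0 := by
    rintro rfl
    rw [mul_zero] at hc
    exact haz hc
  -- i with i² = -1
  obtain ⟨i, hi⟩ : IsSquare (-1 : ZMod p) :=
    ZMod.exists_sq_eq_neg_one_iff.mpr (by omega)
  have hi2 : i ^ 2 = (-1 : ZMod p) := by rw [pow_two, ← hi]
  have hi0 : i ≠ 0 := by
    rintro rfl
    rw [mul_zero] at hi
    exact (by simp : (-1 : ZMod p) ≠ 0) hi
  -- (1 - a) is nonzero mod p
  have h1a : ((1 - a : ℤ) : ZMod p) ≠ 0 := by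
    rw [Ne, ZMod.intCast_zmod_eq_zero_iff_dvd]
    intro h
    have h' : (p : ℤ) ∣ (a - 1) := by
      have := dvd_neg.mpr h
      rwa [neg_sub] at this
    have := Int.le_of_dvd (by omega) h'
    omega
  -- Lemma A : ∑ (a x² + b) % p = ∑ (x² + b) % p
  have sumA : ∑ x ∈ I, (a * (x : ℤ) ^ 2 + b) % p = ∑ x ∈ I, ((x : ℤ) ^ 2 + b) % p := by
    have h1 : ∀ x ∈ I, (a * (x : ℤ) ^ 2 + b) % p
        = (fun z : ZMod p => ((z + (b : ZMod p)).val : ℤ)) (c ^ 2 * ((x : ℕ) : ZMod p) ^ 2) := by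
      intro x _
      refine (val_eq_emod p (a * (x : ℤ) ^ 2 + b) _ ?_).symm
      rw [← hc2]
      push_cast
      ring
    have h2 : ∀ x ∈ I, ((x : ℤ) ^ 2 + b) % p
        = (fun z : ZMod p => ((z + (b : ZMod p)).val : ℤ)) (((x : ℕ) : ZMod p) ^ 2) := by
      intro x _
      refine (val_eq_emod p ((x : ℤ) ^ 2 + b) _ ?_).symm
      push_cast
      ring
    rw [Finset.sum_congr rfl h1, Finset.sum_congr rfl h2, hI]
    exact sum_reindex p hodd c hc0 (fun z => (((z + (b : ZMod p)).val : ℕ) : ℤ))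
  -- Lemma B : ∑ ((1-a) x²) % p = p * k
  have sumB : ∑ x ∈ I, ((1 - a) * (x : ℤ) ^ 2) % p = (p : ℤ) * k := by
    set g : ZMod p → ℤ := fun z => ((((1 - a : ℤ) : ZMod p) * z).val : ℤ) with hg
    have hg1 : ∀ x ∈ I, ((1 - a) * (x : ℤ) ^ 2) % p = g (((x : ℕ) : ZMod p) ^ 2) := by
      intro x _
      refine (val_eq_emod p ((1 - a) * (x : ℤ) ^ 2) _ ?_).symm
      push_cast
      ring
    have hre : ∑ x ∈ I, g (i ^ 2 * ((x : ℕ) : ZMod p) ^ 2)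
        = ∑ x ∈ I, g (((x : ℕ) : ZMod p) ^ 2) := sum_reindex p hodd i hi0 g
    have hpair : ∀ x ∈ I, g (((x : ℕ) : ZMod p) ^ 2)
        + g (i ^ 2 * ((x : ℕ) : ZMod p) ^ 2) = p := by
      intro x hx
      have hx0 := coe_ne_zero p hx
      set w : ZMod p := ((1 - a : ℤ) : ZMod p) * ((x : ℕ) : ZMod p) ^ 2 with hw
      have hwz : w ≠ 0 := mul_ne_zero h1a (pow_ne_zero 2 hx0)
      have e2 : (-w).val = p - w.val := by rw [ZMod.neg_val, if_neg hwz]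
      have hv : w.val < p := ZMod.val_lt w
      have harg2 : ((1 - a : ℤ) : ZMod p) * (i ^ 2 * ((x : ℕ) : ZMod p) ^ 2) = -w := by
        rw [hi2, hw]; ring
      show ((((1 - a : ℤ) : ZMod p) * ((x : ℕ) : ZMod p) ^ 2).val : ℤ)
        + ((((1 - a : ℤ) : ZMod p) * (i ^ 2 * ((x : ℕ) : ZMod p) ^ 2)).val : ℤ) = p
      rw [harg2, ← hw, e2, Nat.cast_sub hv.le]
      ring
    have h2S : 2 * (∑ x ∈ I, ((1 - a) * (x : ℤ) ^ 2) % p) = 2 * ((p : ℤ) * k) := by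
      have : (∑ x ∈ I, g (((x : ℕ) : ZMod p) ^ 2))
          + (∑ x ∈ I, g (i ^ 2 * ((x : ℕ) : ZMod p) ^ 2)) = (p : ℤ) * (2 * k) := by
        rw [← Finset.sum_add_distrib, Finset.sum_congr rfl hpair, Finset.sum_const, hcardI]
        push_cast
        ring
      rw [Finset.sum_congr rfl hg1]
      linarith [this, hre]
    linarith
  -- per-element indicator identity
  have hind : ∀ x ∈ I,
      (if (a * (x : ℤ) ^ 2 + b) % p < ((x : ℤ) ^ 2 + b) % p then (p : ℤ) else 0)
        = ((x : ℤ) ^ 2 + b) % p - (a * (x : ℤ) ^ 2 + b) % p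
          - ((1 - a) * (x : ℤ) ^ 2) % p + p := by
    intro x hx
    have hd : (((x : ℤ) ^ 2 + b) - (a * (x : ℤ) ^ 2 + b)) % (p : ℤ) ≠ 0 := by
      have e : ((x : ℤ) ^ 2 + b) - (a * (x : ℤ) ^ 2 + b) = (1 - a) * (x : ℤ) ^ 2 := by ring
      rw [e]
      intro h
      have hdvd : (p : ℤ) ∣ (1 - a) * (x : ℤ) ^ 2 := Int.dvd_of_emod_eq_zero h
      have : (((1 - a) * (x : ℤ) ^ 2 : ℤ) : ZMod p) = 0 :=
        (ZMod.intCast_zmod_eq_zero_iff_dvd _ _).mpr hdvd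
      push_cast at this
      exact mul_ne_zero h1a (pow_ne_zero 2 (coe_ne_zero p hx)) (by rw [← this]; push_cast; ring)
    have := indicator_eq p ((x : ℤ) ^ 2 + b) (a * (x : ℤ) ^ 2 + b) hd
    rw [show ((x : ℤ) ^ 2 + b) - (a * (x : ℤ) ^ 2 + b) = (1 - a) * (x : ℤ) ^ 2 by ring] at this
    exact this
  -- sum of the indicator equals p * Np
  have hsum1 : ∑ x ∈ I,
      (if (a * (x : ℤ) ^ 2 + b) % p < ((x : ℤ) ^ 2 + b) % p then (p : ℤ) else 0)
        = (Np p a b : ℤ) * p := by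
    rw [← Finset.sum_filter, Finset.sum_const, Np]
    simp only [nsmul_eq_mul, gt_iff_lt, hI]
  -- combine
  have hsum2 : ∑ x ∈ I,
      (if (a * (x : ℤ) ^ 2 + b) % p < ((x : ℤ) ^ 2 + b) % p then (p : ℤ) else 0)
        = (k : ℤ) * p := by
    rw [Finset.sum_congr rfl hind]
    have : ∑ x ∈ I, (((x : ℤ) ^ 2 + b) % p - (a * (x : ℤ) ^ 2 + b) % p
        - ((1 - a) * (x : ℤ) ^ 2) % p + (p : ℤ))
        = (∑ x ∈ I, ((x : ℤ) ^ 2 + b) % p) - (∑ x ∈ I, (a * (x : ℤ) ^ 2 + b) % p)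
          - (∑ x ∈ I, ((1 - a) * (x : ℤ) ^ 2) % p) + I.card * p := by
      rw [Finset.sum_add_distrib, Finset.sum_sub_distrib, Finset.sum_sub_distrib,
        Finset.sum_const, nsmul_eq_mul]
    rw [this, sumA, sumB, hcardI]
    push_cast
    ring
  have : (Np p a b : ℤ) = k := by
    have h := hsum1.symm.trans hsum2
    exact mul_right_cancel₀ hp0.ne' h
  exact_mod_cast this

theorem stmt_12 (p : ℕ) [Fact p.Prime] (hp4 : p % 4 = 1) (b : ℤ) :
    (∀ a : ℤ, 1 < a → a < (p : ℤ) → legendreSym p a = 1 → Np p a b = (p - 1) / 4) ∧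
    ((Finset.Ioo (1 : ℤ) (p : ℤ)).filter (fun a => legendreSym p a = 1)).image
      (fun a => Np p a b) = {(p - 1) / 4} := by
  have hprime := (Fact.out : p.Prime)
  have hp5 : 5 ≤ p := by
    have := hprime.two_le
    rcases Nat.lt_or_ge p 5 with h | h
    · interval_cases p <;> simp_all <;> omega
    · exact h
  have key : ∀ a : ℤ, 1 < a → a < (p : ℤ) → legendreSym p a = 1 → Np p a b = (p - 1) / 4 :=
    fun a h1 h2 h3 => Np_eq p hp4 b a h1 h2 h3
  refine ⟨key, ?_⟩
  have h4z : ((4 : ℤ) : ZMod p) ≠ 0 := by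
    rw [Ne, ZMod.intCast_zmod_eq_zero_iff_dvd]
    intro h
    have := Int.le_of_dvd (by norm_num) h
    have : (p : ℤ) ≤ 4 := this
    exact_mod_cast absurd (by exact_mod_cast this : p ≤ 4) (by omega)
  have h4 : legendreSym p (4 : ℤ) = 1 := by
    rw [legendreSym.eq_one_iff p h4z]
    exact ⟨2, by push_cast; norm_num⟩
  ext n
  simp only [Finset.mem_image, Finset.mem_filter, Finset.mem_Ioo, Finset.mem_singleton]
  constructor
  · rintro ⟨a, ⟨⟨ha1, ha2⟩, ha3⟩, rfl⟩
    exact key a ha1 ha2 ha3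
  · rintro rfl
    refine ⟨4, ⟨⟨by norm_num, by exact_mod_cast (by omega : (4 : ℕ) < p)⟩, h4⟩, ?_⟩
    exact key 4 (by norm_num) (by exact_mod_cast (by omega : (4 : ℕ) < p)) h4
end

section
/- Let p > 3 be a prime with p ≡ 3 (mod 4), and let b be an integer. Then the set T = {N_p(a,b) : 1 < a < p, (a/p) = -1} has exactly two elements. -/
namespace Aux15

open Finset

noncomputable instance decIsSquare (p : ℕ) : DecidablePred (IsSquare : ZMod p → Prop) :=
  fun _ => Classical.propDecidable _

variable (p : ℕ) [Fact p.Prime]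

/-- nonzero squares -/
noncomputable def QS : Finset (ZMod p) := univ.filter (fun z => z ≠ 0 ∧ IsSquare z)
/-- nonsquares -/
noncomputable def NS : Finset (ZMod p) := univ.filter (fun z => z ≠ 0 ∧ ¬ IsSquare z)

variable {p}

lemma hp0 : 0 < p := (Fact.out : p.Prime).pos

/-- cast of x ∈ [1, (p-1)/2] is nonzero -/
lemma cast_ne_zero_of_mem (hp2 : p % 2 = 1) {x : ℕ} (hx : x ∈ Icc 1 ((p-1)/2)) :
    ((x : ZMod p)) ≠ 0 := by
  simp only [mem_Icc] at hx
  rw [Ne, ZMod.natCast_eq_zero_iff]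
  intro hdvd
  have := Nat.le_of_dvd (by omega) hdvd
  omega

/-- the map x ↦ c x² is injective on [1, (p-1)/2] -/
lemma sq_injOn (hp2 : p % 2 = 1) (c : ZMod p) (hc : c ≠ 0) :
    ∀ x ∈ Icc 1 ((p-1)/2), ∀ y ∈ Icc 1 ((p-1)/2),
      c * (x : ZMod p) ^ 2 = c * (y : ZMod p) ^ 2 → x = y := by
  intro x hx y hy h
  simp only [mem_Icc] at hx hy
  have h2 : (x : ZMod p) ^ 2 = (y : ZMod p) ^ 2 := mul_left_cancel₀ hc h
  have h3 : ((x : ZMod p) - y) * ((x : ZMod p) + y) = 0 := by ring_nf; ring_nf at h2; linear_combination h2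
  rcases mul_eq_zero.mp h3 with h4 | h4
  · have h5 : (x : ZMod p) = y := by linear_combination h4
    have hx' : x < p := by omega
    have hy' : y < p := by omega
    have := ZMod.val_cast_of_lt hx' ▸ ZMod.val_cast_of_lt hy' ▸ congrArg ZMod.val h5
    simpa [ZMod.val_cast_of_lt hx', ZMod.val_cast_of_lt hy'] using this
  · exfalso
    have h5 : ((x + y : ℕ) : ZMod p) = 0 := by push_cast; linear_combination h4
    rw [ZMod.natCast_eq_zero_iff] at h5
    have := Nat.le_of_dvd (by omega) h5
    omega

/-- image of x ↦ x² on [1,(p-1)/2] is the set of nonzero squares -/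
lemma sq_injOn' (hp2 : p % 2 = 1) :
    ∀ x ∈ Icc 1 ((p-1)/2), ∀ y ∈ Icc 1 ((p-1)/2),
      (x : ZMod p) ^ 2 = (y : ZMod p) ^ 2 → x = y := fun x hx y hy h =>
  sq_injOn hp2 1 one_ne_zero x hx y hy (by rw [one_mul, one_mul, h])

lemma image_sq (hp2 : p % 2 = 1) :
    (Icc 1 ((p-1)/2)).image (fun x : ℕ => ((x : ZMod p)) ^ 2) = QS p := by
  haveI : NeZero p := ⟨(Fact.out : p.Prime).ne_zero⟩
  apply Finset.Subset.antisymm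
  · intro z hz
    simp only [mem_image] at hz
    obtain ⟨x, hx, rfl⟩ := hz
    have hx0 := cast_ne_zero_of_mem hp2 hx
    simp only [QS, mem_filter, mem_univ, true_and]
    exact ⟨pow_ne_zero _ hx0, ⟨(x : ZMod p), sq (x : ZMod p)⟩⟩
  · intro z hz
    simp only [QS, mem_filter, mem_univ, true_and] at hz
    obtain ⟨hz0, w, hw⟩ := hz
    have hw0 : w ≠ 0 := by rintro rfl; simp at hw; exact hz0 hw
    have hv1 : 1 ≤ w.val := by
      rcases Nat.eq_zero_or_pos w.val with h | h
      · exact absurd ((ZMod.val_eq_zero w).mp h) hw0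
      · exact h
    have hvp : w.val < p := ZMod.val_lt w
    simp only [mem_image]
    by_cases hle : w.val ≤ (p-1)/2
    · refine ⟨w.val, mem_Icc.mpr ⟨hv1, hle⟩, ?_⟩
      rw [ZMod.natCast_zmod_val, hw, sq]
    · refine ⟨p - w.val, mem_Icc.mpr ⟨by omega, by omega⟩, ?_⟩
      have hcast : ((p - w.val : ℕ) : ZMod p) = - w := by
        push_cast [Nat.cast_sub hvp.le]
        simp [ZMod.natCast_self, ZMod.natCast_zmod_val]
      rw [hcast, hw]; ring

lemma card_QS (hp2 : p % 2 = 1) : (QS p).card = (p-1)/2 := by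
  rw [← image_sq hp2, Finset.card_image_of_injOn fun x hx y hy h => sq_injOn' hp2 x hx y hy h]
  simp [Nat.card_Icc]

lemma card_NS (hp2 : p % 2 = 1) : (NS p).card = (p-1)/2 := by
  haveI : NeZero p := ⟨(Fact.out : p.Prime).ne_zero⟩
  have hdisj : Disjoint (QS p) (NS p) := by
    simp only [Finset.disjoint_left, QS, NS, mem_filter, mem_univ, true_and]
    tauto
  have hunion : QS p ∪ NS p = univ.filter (fun z : ZMod p => z ≠ 0) := by
    ext z
    simp only [QS, NS, mem_union, mem_filter, mem_univ, true_and]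
    tauto
  have hcard : (univ.filter (fun z : ZMod p => z ≠ 0)).card = p - 1 := by
    rw [Finset.filter_ne', Finset.card_erase_of_mem (mem_univ 0), Finset.card_univ, ZMod.card]
  have := Finset.card_union_of_disjoint hdisj
  rw [hunion, hcard, card_QS hp2] at this
  have hp1 : 1 < p := (Fact.out : p.Prime).one_lt
  omega

lemma image_mul_sq (hp2 : p % 2 = 1) (c : ZMod p) (hc : c ≠ 0) :
    (Icc 1 ((p-1)/2)).image (fun x : ℕ => c * ((x : ZMod p)) ^ 2)
      = if IsSquare c then QS p else NS p := by
  have hcardim : ((Icc 1 ((p-1)/2)).image (fun x : ℕ => c * ((x : ZMod p)) ^ 2)).card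
      = (p-1)/2 := by
    rw [Finset.card_image_of_injOn fun x hx y hy h => sq_injOn hp2 c hc x hx y hy h]
    simp [Nat.card_Icc]
  by_cases hsq : IsSquare c
  · rw [if_pos hsq]
    apply Finset.eq_of_subset_of_card_le
    · intro z hz
      simp only [mem_image] at hz
      obtain ⟨x, hx, rfl⟩ := hz
      have hx0 := cast_ne_zero_of_mem hp2 hx
      obtain ⟨w, hw⟩ := hsq
      simp only [QS, mem_filter, mem_univ, true_and]
      refine ⟨mul_ne_zero hc (pow_ne_zero _ hx0), ⟨w * (x : ZMod p), ?_⟩⟩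
      rw [hw]; ring
    · rw [card_QS hp2, hcardim]
  · rw [if_neg hsq]
    apply Finset.eq_of_subset_of_card_le
    · intro z hz
      simp only [mem_image] at hz
      obtain ⟨x, hx, rfl⟩ := hz
      have hx0 := cast_ne_zero_of_mem hp2 hx
      simp only [NS, mem_filter, mem_univ, true_and]
      refine ⟨mul_ne_zero hc (pow_ne_zero _ hx0), fun hcx => hsq ?_⟩
      obtain ⟨d, hd⟩ := hcx
      refine ⟨d * ((x : ZMod p))⁻¹, ?_⟩
      field_simp
      linear_combination hd
    · rw [card_NS hp2, hcardim]

lemma sum_transfer (hp2 : p % 2 = 1) (c : ZMod p) (hc : c ≠ 0) (F : ZMod p → ℤ) :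
    ∑ x ∈ Icc 1 ((p-1)/2), F (c * ((x : ZMod p)) ^ 2)
      = ∑ z ∈ (if IsSquare c then QS p else NS p), F z := by
  rw [← image_mul_sq hp2 c hc, Finset.sum_image (sq_injOn hp2 c hc)]

/-- per-term identity -/
lemma key_ite (u v : ℤ) (hne : (u - v) % p ≠ 0) :
    (if u % p > v % p then (p:ℤ) else 0) = p + u % p - v % p - (u - v) % p := by
  have hp' : (0:ℤ) < p := by exact_mod_cast (hp0 (p := p))
  have hu : 0 ≤ u % p := Int.emod_nonneg u hp'.ne'
  have hv : 0 ≤ v % p := Int.emod_nonneg v hp'.ne'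
  have hu' : u % p < p := Int.emod_lt_of_pos u hp'
  have hv' : v % p < p := Int.emod_lt_of_pos v hp'
  have he : (u - v) % p = (u % p - v % p) % p := Int.sub_emod u v p
  by_cases h : u % p > v % p
  · have h4 : (u % p - v % p) % p = u % p - v % p := Int.emod_eq_of_lt (by omega) (by omega)
    rw [if_pos h, he, h4]
    ring
  · rw [if_neg h]
    have hne' : u % p ≠ v % p := by
      intro heq
      apply hne
      rw [he, heq, sub_self, Int.zero_emod]
    have hlt : u % p < v % p := by omega
    have h2 : (u % p - v % p) % p = u % p - v % p + p := by
      have h3 : (u % p - v % p + p) % p = (u % p - v % p) % p := by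
        have := Int.add_mul_emod_self_left (a := u % p - v % p) (b := (p:ℤ)) (c := 1)
        rw [mul_one] at this
        exact this
      have h4 : (u % p - v % p + p) % p = u % p - v % p + p :=
        Int.emod_eq_of_lt (by omega) (by omega)
      rw [← h3, h4]
    rw [he, h2]
    ring

/-- main formula -/
lemma main_formula (hp2 : p % 2 = 1) (b a : ℤ) (ha : ¬ IsSquare ((a : ZMod p))) :
    (Np p a b : ℤ) * p = (p : ℤ) * ((p-1)/2 : ℕ)
      + (∑ z ∈ QS p, ((z.val : ℤ) + b) % p) - (∑ z ∈ NS p, ((z.val : ℤ) + b) % p)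
      - ∑ z ∈ (if IsSquare (((1 - a : ℤ) : ZMod p)) then QS p else NS p), (z.val : ℤ) := by
  haveI : NeZero p := ⟨(Fact.out : p.Prime).ne_zero⟩
  have hp' : (0:ℤ) < p := by exact_mod_cast (hp0 (p := p))
  set m := (p-1)/2 with hm
  have ha0 : ((a : ZMod p)) ≠ 0 := by
    intro h
    exact ha (h ▸ ⟨0, by simp⟩)
  have h1a : (((1 - a : ℤ) : ZMod p)) ≠ 0 := by
    intro h
    push_cast at h
    have : ((a : ZMod p)) = 1 := by linear_combination -h
    exact ha (this ▸ IsSquare.one)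
  -- step 1: card to sum of ite
  have hcard : (Np p a b : ℤ) * p
      = ∑ x ∈ Icc 1 m, (if ((x:ℤ)^2 + b) % p > (a * (x:ℤ)^2 + b) % p then (p:ℤ) else 0) := by
    rw [← Finset.sum_filter, Finset.sum_const, nsmul_eq_mul, Np]
  -- step 2: per-term identity
  have hterm : ∀ x ∈ Icc 1 m,
      (if ((x:ℤ)^2 + b) % p > (a * (x:ℤ)^2 + b) % p then (p:ℤ) else 0)
        = p + ((x:ℤ)^2 + b) % p - (a * (x:ℤ)^2 + b) % p - ((1-a) * (x:ℤ)^2) % p := by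
    intro x hx
    have hsub : ((x:ℤ)^2 + b) - (a * (x:ℤ)^2 + b) = (1-a) * (x:ℤ)^2 := by ring
    have hne : (((x:ℤ)^2 + b) - (a * (x:ℤ)^2 + b)) % p ≠ 0 := by
      rw [hsub]
      intro h
      have hdvd : (p:ℤ) ∣ (1-a) * (x:ℤ)^2 := Int.dvd_iff_emod_eq_zero.mpr h
      have : (((1-a) * (x:ℤ)^2 : ℤ) : ZMod p) = 0 := by
        rw [ZMod.intCast_zmod_eq_zero_iff_dvd]
        exact_mod_cast hdvd
      push_cast at this
      have hx0 := cast_ne_zero_of_mem hp2 hx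
      exact (mul_ne_zero h1a (pow_ne_zero 2 hx0)) (by push_cast at h1a ⊢; linear_combination this)
    have := key_ite (p := p) ((x:ℤ)^2 + b) (a * (x:ℤ)^2 + b) hne
    rw [hsub] at this
    exact this
  rw [hcard, Finset.sum_congr rfl hterm]
  -- step 3: split sums
  have hsplit : ∑ x ∈ Icc 1 m,
      ((p:ℤ) + ((x:ℤ)^2 + b) % p - (a * (x:ℤ)^2 + b) % p - ((1-a) * (x:ℤ)^2) % p)
      = (p:ℤ) * m + (∑ x ∈ Icc 1 m, ((x:ℤ)^2 + b) % p)
        - (∑ x ∈ Icc 1 m, (a * (x:ℤ)^2 + b) % p)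
        - (∑ x ∈ Icc 1 m, ((1-a) * (x:ℤ)^2) % p) := by
    rw [Finset.sum_sub_distrib, Finset.sum_sub_distrib, Finset.sum_add_distrib,
      Finset.sum_const, nsmul_eq_mul, Nat.card_Icc]
    simp [mul_comm]
  rw [hsplit]
  -- step 4: identify each sum
  have hF1 : ∀ x : ℕ, ((x:ℤ)^2 + b) % p
      = ((((1 : ZMod p) * ((x : ZMod p))^2).val : ℤ) + b) % p := by
    intro x
    rw [one_mul]
    have : (((x : ZMod p))^2).val = (((x:ℤ)^2 : ℤ) : ZMod p).val := by
      norm_cast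
    rw [this, ZMod.val_intCast, Int.emod_add_emod]
  have hF2 : ∀ x : ℕ, (a * (x:ℤ)^2 + b) % p
      = (((((a : ZMod p)) * ((x : ZMod p))^2).val : ℤ) + b) % p := by
    intro x
    have : (((a : ZMod p)) * ((x : ZMod p))^2).val = ((a * (x:ℤ)^2 : ℤ) : ZMod p).val := by
      norm_cast
    rw [this, ZMod.val_intCast, Int.emod_add_emod]
  have hF3 : ∀ x : ℕ, ((1-a) * (x:ℤ)^2) % p
      = (((((1 - a : ℤ) : ZMod p)) * ((x : ZMod p))^2).val : ℤ) := by
    intro x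
    have : ((((1 - a : ℤ) : ZMod p)) * ((x : ZMod p))^2).val
        = (((1-a) * (x:ℤ)^2 : ℤ) : ZMod p).val := by
      norm_cast
    rw [this, ZMod.val_intCast]
  rw [Finset.sum_congr rfl (fun x _ => hF1 x), Finset.sum_congr rfl (fun x _ => hF2 x),
    Finset.sum_congr rfl (fun x _ => hF3 x)]
  rw [sum_transfer hp2 1 one_ne_zero (fun z => ((z.val : ℤ) + b) % p),
    sum_transfer hp2 ((a : ZMod p)) ha0 (fun z => ((z.val : ℤ) + b) % p),
    sum_transfer hp2 (((1 - a : ℤ) : ZMod p)) h1a (fun z => (z.val : ℤ))]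
  rw [if_pos IsSquare.one, if_neg ha]

lemma sum_univ_val : (∑ z : ZMod p, (z.val : ℤ)) * 2 = (p : ℤ) * (p - 1) := by
  haveI : NeZero p := ⟨(Fact.out : p.Prime).ne_zero⟩
  have h1 : (∑ i ∈ range p, i) = ∑ z : ZMod p, z.val := by
    apply Finset.sum_bij (i := fun (i : ℕ) (_ : i ∈ range p) => (i : ZMod p))
    · intro i _; exact mem_univ _
    · intro i hi j hj h
      rw [mem_range] at hi hj
      have := congrArg ZMod.val h
      rwa [ZMod.val_cast_of_lt hi, ZMod.val_cast_of_lt hj] at this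
    · intro z _
      exact ⟨z.val, mem_range.mpr (ZMod.val_lt z), (ZMod.natCast_zmod_val z)⟩
    · intro i hi
      rw [mem_range] at hi
      rw [ZMod.val_cast_of_lt hi]
  have h2 := Finset.sum_range_id_mul_two p
  have hp1 : 1 ≤ p := (Fact.out : p.Prime).one_lt.le
  have : ((∑ z : ZMod p, z.val) * 2 : ℕ) = p * (p-1) := by rw [← h1, h2]
  have := congrArg (fun n : ℕ => (n : ℤ)) this
  push_cast [Nat.cast_sub hp1] at this
  exact_mod_cast this

lemma sum_QS_add_NS :
    (∑ z ∈ QS p, (z.val : ℤ)) + (∑ z ∈ NS p, (z.val : ℤ)) = ∑ z : ZMod p, (z.val : ℤ) := by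
  haveI : NeZero p := ⟨(Fact.out : p.Prime).ne_zero⟩
  have hdisj : Disjoint (QS p) (NS p) := by
    simp only [Finset.disjoint_left, QS, NS, mem_filter, mem_univ, true_and]
    tauto
  have hunion : QS p ∪ NS p = univ.filter (fun z : ZMod p => z ≠ 0) := by
    ext z
    simp only [QS, NS, mem_union, mem_filter, mem_univ, true_and]
    tauto
  rw [← Finset.sum_union hdisj, hunion, Finset.filter_ne',
    Finset.sum_erase _ (by simp)]

lemma sum_val_odd (hp4 : p % 4 = 3) :
    ¬ (∑ z ∈ QS p, (z.val : ℤ)) = (∑ z ∈ NS p, (z.val : ℤ)) := by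
  intro h
  have h1 := sum_QS_add_NS (p := p)
  have h2 := sum_univ_val (p := p)
  rw [h] at h1
  obtain ⟨k, hk⟩ : ∃ k : ℕ, p = 4*k+3 := ⟨p/4, by omega⟩
  set n := ∑ z ∈ NS p, (z.val : ℤ) with hn
  have h3 : (4:ℤ) * n = (p:ℤ) * (p - 1) := by
    rw [← h2, ← h1]; ring
  rw [hk] at h3
  push_cast at h3
  have h4 : (4:ℤ) * n = 16 * ((k:ℤ)*(k:ℤ)) + 20 * (k:ℤ) + 6 := by ring_nf; ring_nf at h3; linarith
  generalize ((k:ℤ)*(k:ℤ)) = K at h4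
  omega

lemma chi_neg_one (hp4 : p % 4 = 3) (hp3 : 3 < p) : legendreSym p (-1) = -1 := by
  rw [legendreSym.at_neg_one (by omega), ZMod.χ₄_nat_three_mod_four hp4]

lemma cast_nat_ne_zero {k : ℕ} (h1 : 1 ≤ k) (h2 : k < p) : ((k : ℕ) : ZMod p) ≠ 0 := by
  rw [Ne, ZMod.natCast_eq_zero_iff]
  intro hdvd
  have := Nat.le_of_dvd (by omega) hdvd
  omega

lemma chi_one_of {k : ℕ} (h1 : 1 ≤ k) (h2 : k < p) (h3 : legendreSym p (k:ℤ) ≠ -1) :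
    legendreSym p (k:ℤ) = 1 := by
  have hne : (((k:ℤ)) : ZMod p) ≠ 0 := by
    push_cast
    exact cast_nat_ne_zero h1 h2
  rcases legendreSym.eq_one_or_neg_one p hne with h | h
  · exact h
  · exact absurd h h3

/-- existence: nonresidue a with 1-a nonresidue -/
lemma exists_minus (hp4 : p % 4 = 3) (hp3 : 3 < p) :
    ∃ a : ℤ, 1 < a ∧ a < p ∧ legendreSym p a = -1 ∧ ¬ IsSquare (((1 - a : ℤ) : ZMod p)) := by
  classical
  haveI : NeZero p := ⟨(Fact.out : p.Prime).ne_zero⟩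
  have hp2 : p % 2 = 1 := by omega
  have hNS : (NS p).Nonempty := Finset.card_pos.mp (by rw [card_NS hp2]; omega)
  obtain ⟨z, hz⟩ := hNS
  simp only [NS, mem_filter, mem_univ, true_and] at hz
  have hwit : legendreSym p ((z.val : ℕ) : ℤ) = -1 := by
    rw [legendreSym.eq_neg_one_iff']
    rw [ZMod.natCast_zmod_val]
    exact hz.2
  have hex : ∃ k : ℕ, legendreSym p (k : ℤ) = -1 := ⟨z.val, hwit⟩
  set n := Nat.find hex with hn
  have hfind : legendreSym p (n : ℤ) = -1 := Nat.find_spec hex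
  have hnle : n ≤ z.val := Nat.find_min' hex hwit
  have hnp : n < p := lt_of_le_of_lt hnle (ZMod.val_lt z)
  have hn2 : 2 ≤ n := by
    by_contra h
    interval_cases n
    · rw [Nat.cast_zero, legendreSym.at_zero] at hfind; omega
    · rw [Nat.cast_one, legendreSym.at_one] at hfind; omega
  have hmin : legendreSym p ((n-1 : ℕ) : ℤ) ≠ -1 := Nat.find_min hex (by omega)
  have hprev : legendreSym p ((n-1 : ℕ) : ℤ) = 1 := chi_one_of (by omega) (by omega) hmin
  refine ⟨(n : ℤ), by exact_mod_cast hn2, by exact_mod_cast hnp, hfind, ?_⟩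
  rw [← legendreSym.eq_neg_one_iff]
  have harg : (1 - (n:ℤ)) = (-1) * (((n-1 : ℕ) : ℤ)) := by
    push_cast [Nat.cast_sub (by omega : 1 ≤ n)]
    ring
  rw [harg, legendreSym.mul, chi_neg_one hp4 hp3, hprev]
  ring

lemma card_Nr (hp2 : p % 2 = 1) :
    ((Icc 1 (p-1)).filter (fun k : ℕ => legendreSym p (k:ℤ) = -1)).card = (p-1)/2 := by
  haveI : NeZero p := ⟨(Fact.out : p.Prime).ne_zero⟩
  rw [← card_NS hp2]
  apply Finset.card_bij (i := fun (k : ℕ) _ => (k : ZMod p))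
  · intro k hk
    simp only [mem_filter, mem_Icc] at hk
    simp only [NS, mem_filter, mem_univ, true_and]
    constructor
    · exact cast_nat_ne_zero hk.1.1 (by omega)
    · rw [← legendreSym.eq_neg_one_iff']
      exact hk.2
  · intro i hi j hj h
    simp only [mem_filter, mem_Icc] at hi hj
    have := congrArg ZMod.val h
    rwa [ZMod.val_cast_of_lt (by omega), ZMod.val_cast_of_lt (by omega)] at this
  · intro z hz
    simp only [NS, mem_filter, mem_univ, true_and] at hz
    refine ⟨z.val, ?_, ZMod.natCast_zmod_val z⟩
    simp only [mem_filter, mem_Icc]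
    have hv1 : 1 ≤ z.val := by
      rcases Nat.eq_zero_or_pos z.val with h | h
      · exact absurd ((ZMod.val_eq_zero z).mp h) hz.1
      · exact h
    refine ⟨⟨hv1, by have := ZMod.val_lt z; omega⟩, ?_⟩
    rw [legendreSym.eq_neg_one_iff', ZMod.natCast_zmod_val]
    exact hz.2

lemma card_R (hp2 : p % 2 = 1) :
    ((Icc 1 (p-1)).filter (fun k : ℕ => legendreSym p (k:ℤ) = 1)).card = (p-1)/2 := by
  haveI : NeZero p := ⟨(Fact.out : p.Prime).ne_zero⟩
  rw [← card_QS hp2]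
  apply Finset.card_bij (i := fun (k : ℕ) _ => (k : ZMod p))
  · intro k hk
    simp only [mem_filter, mem_Icc] at hk
    simp only [QS, mem_filter, mem_univ, true_and]
    have hne := cast_nat_ne_zero (p := p) hk.1.1 (by omega)
    constructor
    · exact hne
    · rw [← legendreSym.eq_one_iff' p (by exact hne)]
      exact hk.2
  · intro i hi j hj h
    simp only [mem_filter, mem_Icc] at hi hj
    have := congrArg ZMod.val h
    rwa [ZMod.val_cast_of_lt (by omega), ZMod.val_cast_of_lt (by omega)] at this
  · intro z hz
    simp only [QS, mem_filter, mem_univ, true_and] at hz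
    refine ⟨z.val, ?_, ZMod.natCast_zmod_val z⟩
    simp only [mem_filter, mem_Icc]
    have hv1 : 1 ≤ z.val := by
      rcases Nat.eq_zero_or_pos z.val with h | h
      · exact absurd ((ZMod.val_eq_zero z).mp h) hz.1
      · exact h
    refine ⟨⟨hv1, by have := ZMod.val_lt z; omega⟩, ?_⟩
    rw [legendreSym.eq_one_iff' p (by rw [ZMod.natCast_zmod_val]; exact hz.1),
      ZMod.natCast_zmod_val]
    exact hz.2

/-- existence: nonresidue a with 1-a residue -/
lemma exists_plus (hp4 : p % 4 = 3) (hp3 : 3 < p) :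
    ∃ a : ℤ, 1 < a ∧ a < p ∧ legendreSym p a = -1 ∧ IsSquare (((1 - a : ℤ) : ZMod p)) := by
  classical
  haveI : NeZero p := ⟨(Fact.out : p.Prime).ne_zero⟩
  have hp2 : p % 2 = 1 := by omega
  have hp7 : 7 ≤ p := by
    have := (Fact.out : p.Prime).two_le
    rcases Nat.lt_or_ge p 7 with h | h
    · interval_cases p <;> omega
    · exact h
  by_contra hcon
  push_neg at hcon
  -- no two consecutive nonresidues
  have Hnoadj : ∀ k : ℕ, 2 ≤ k → k ≤ p - 1 → legendreSym p (k:ℤ) = -1 →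
      legendreSym p ((k-1 : ℕ):ℤ) ≠ -1 := by
    intro k hk2 hkp hk hprev
    have h1 : (1:ℤ) < (k:ℤ) := by exact_mod_cast hk2
    have h2 : (k:ℤ) < p := by exact_mod_cast (by omega : k < p)
    have := hcon (k:ℤ) h1 h2 hk
    apply this
    rw [← legendreSym.eq_one_iff]
    · have harg : (1 - (k:ℤ)) = (-1) * (((k-1 : ℕ) : ℤ)) := by
        push_cast [Nat.cast_sub (by omega : 1 ≤ k)]
        ring
      rw [harg, legendreSym.mul, chi_neg_one hp4 hp3, hprev]
      ring
    · have hcast : (((1 - (k:ℤ)) : ℤ) : ZMod p) = - (((k-1:ℕ) : ℤ) : ZMod p) := by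
        push_cast [Nat.cast_sub (by omega : 1 ≤ k)]
        ring
      rw [hcast, neg_ne_zero]
      push_cast
      exact cast_nat_ne_zero (by omega) (by omega)
  set Nr := (Icc 1 (p-1)).filter (fun k : ℕ => legendreSym p (k:ℤ) = -1) with hNr
  set R := (Icc 1 (p-1)).filter (fun k : ℕ => legendreSym p (k:ℤ) = 1) with hR
  -- k ↦ k-1 maps Nr into R
  have hmap : ∀ k ∈ Nr, k - 1 ∈ R := by
    intro k hk
    simp only [hNr, mem_filter, mem_Icc] at hk
    have hk2 : 2 ≤ k := by
      rcases Nat.lt_or_ge k 2 with h | h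
      · interval_cases k
        · omega
        · rw [Nat.cast_one, legendreSym.at_one] at hk; omega
      · exact h
    simp only [hR, mem_filter, mem_Icc]
    refine ⟨⟨by omega, by omega⟩, ?_⟩
    exact chi_one_of (by omega) (by omega) (Hnoadj k hk2 hk.1.2 hk.2)
  have hinj : ∀ a₁ a₂, a₁ ∈ Nr → a₂ ∈ Nr → a₁ - 1 = a₂ - 1 → a₁ = a₂ := by
    intro a₁ a₂ ha₁ ha₂ h
    simp only [hNr, mem_filter, mem_Icc] at ha₁ ha₂
    omega
  have hsurj := Finset.surj_on_of_inj_on_of_card_le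
    (f := fun (k : ℕ) (_ : k ∈ Nr) => k - 1) hmap hinj
    (by rw [card_Nr hp2, card_R hp2])
  -- 1 ∈ R
  have h1R : (1:ℕ) ∈ R := by
    simp only [hR, mem_filter, mem_Icc]
    exact ⟨⟨le_refl 1, by omega⟩, by rw [Nat.cast_one, legendreSym.at_one]⟩
  obtain ⟨k2, hk2mem, hk2eq⟩ := hsurj 1 h1R
  have hk2' : k2 = 2 := by
    have heq : (1:ℕ) = k2 - 1 := hk2eq
    simp only [hNr, mem_filter, mem_Icc] at hk2mem
    omega
  subst hk2'
  simp only [hNr, mem_filter, mem_Icc] at hk2mem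
  have hchi2 : legendreSym p (2:ℤ) = -1 := by exact_mod_cast hk2mem.2
  -- 3 ∈ R
  have h3R : (3:ℕ) ∈ R := by
    simp only [hR, mem_filter, mem_Icc]
    refine ⟨⟨by omega, by omega⟩, ?_⟩
    apply chi_one_of (by omega) (by omega)
    intro h3
    have := Hnoadj 3 (by omega) (by omega) h3
    apply this
    norm_num
    exact hchi2
  obtain ⟨k4, hk4mem, hk4eq⟩ := hsurj 3 h3R
  have hk4' : k4 = 4 := by
    have heq : (3:ℕ) = k4 - 1 := hk4eq
    simp only [hNr, mem_filter, mem_Icc] at hk4mem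
    omega
  subst hk4'
  simp only [hNr, mem_filter, mem_Icc] at hk4mem
  have hchi4 : legendreSym p (4:ℤ) = -1 := by exact_mod_cast hk4mem.2
  have : legendreSym p (4:ℤ) = 1 := by
    have : (4:ℤ) = 2 * 2 := by norm_num
    rw [this, legendreSym.mul, hchi2]
    ring
  omega

end Aux15

theorem stmt_15 (p : ℕ) [Fact p.Prime] (hp4 : p % 4 = 3) (hp3 : 3 < p) (b : ℤ) :
    (((Finset.Ioo (1 : ℤ) (p : ℤ)).filter (fun a => legendreSym p a = -1)).image
      (fun a => Np p a b)).card = 2 := by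
  classical
  have hp2 : p % 2 = 1 := by omega
  obtain ⟨a₁, ha₁1, ha₁p, ha₁χ, ha₁s⟩ := Aux15.exists_minus (p := p) hp4 hp3
  obtain ⟨a₂, ha₂1, ha₂p, ha₂χ, ha₂s⟩ := Aux15.exists_plus (p := p) hp4 hp3
  set s := (Finset.Ioo (1 : ℤ) (p : ℤ)).filter (fun a => legendreSym p a = -1) with hs
  have hmem₁ : a₁ ∈ s := by simp [hs, Finset.mem_filter, Finset.mem_Ioo, ha₁1, ha₁p, ha₁χ]
  have hmem₂ : a₂ ∈ s := by simp [hs, Finset.mem_filter, Finset.mem_Ioo, ha₂1, ha₂p, ha₂χ]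
  have hval : ∀ a ∈ s, Np p a b = Np p a₁ b ∨ Np p a b = Np p a₂ b := by
    intro a hamem
    simp only [hs, Finset.mem_filter, Finset.mem_Ioo] at hamem
    have ha : ¬ IsSquare ((a : ZMod p)) := by
      have := (legendreSym.eq_neg_one_iff p (a := a)).mp hamem.2
      exact this
    have h1 := Aux15.main_formula hp2 b a ha
    by_cases hsq : IsSquare (((1 - a : ℤ) : ZMod p))
    · right
      have h2 := Aux15.main_formula hp2 b a₂ (by exact (legendreSym.eq_neg_one_iff p).mp ha₂χ)
      rw [if_pos hsq] at h1
      rw [if_pos ha₂s] at h2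
      have : (Np p a b : ℤ) * p = (Np p a₂ b : ℤ) * p := by rw [h1, h2]
      have hp' : (p : ℤ) ≠ 0 := by exact_mod_cast (Aux15.hp0 (p := p)).ne'
      exact_mod_cast mul_right_cancel₀ hp' this
    · left
      have h2 := Aux15.main_formula hp2 b a₁ (by exact (legendreSym.eq_neg_one_iff p).mp ha₁χ)
      rw [if_neg hsq] at h1
      rw [if_neg ha₁s] at h2
      have : (Np p a b : ℤ) * p = (Np p a₁ b : ℤ) * p := by rw [h1, h2]
      have hp' : (p : ℤ) ≠ 0 := by exact_mod_cast (Aux15.hp0 (p := p)).ne'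
      exact_mod_cast mul_right_cancel₀ hp' this
  have hne : Np p a₁ b ≠ Np p a₂ b := by
    intro h
    have h1 := Aux15.main_formula (p := p) hp2 b a₁ ((legendreSym.eq_neg_one_iff p).mp ha₁χ)
    have h2 := Aux15.main_formula (p := p) hp2 b a₂ ((legendreSym.eq_neg_one_iff p).mp ha₂χ)
    rw [if_neg ha₁s] at h1
    rw [if_pos ha₂s] at h2
    rw [h] at h1
    rw [h1] at h2
    have := Aux15.sum_val_odd (p := p) hp4
    omega
  have himg : s.image (fun a => Np p a b) = {Np p a₁ b, Np p a₂ b} := by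
    apply Finset.Subset.antisymm
    · intro n hn
      simp only [Finset.mem_image] at hn
      obtain ⟨a, hamem, rfl⟩ := hn
      rcases hval a hamem with h | h <;> simp [h]
    · intro n hn
      simp only [Finset.mem_insert, Finset.mem_singleton] at hn
      rcases hn with rfl | rfl
      · exact Finset.mem_image_of_mem _ hmem₁
      · exact Finset.mem_image_of_mem _ hmem₂
  rw [himg, Finset.card_pair hne]
end

section
/- Let p > 3 be a prime and b an integer. Then the set {N_p(a,b) : 1 < a < p, (a/p) = 1} has exactly (3 - (-1/p))/2 elements, i.e., one element if p ≡ 1 (mod 4) and two elements if p ≡ 3 (mod 4); moreover this set does not depend on b. -/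
open Finset
open scoped Classical

section Aux

variable (p : ℕ) [Fact p.Prime]

noncomputable def Ssq : Finset (ZMod p) := Finset.univ.filter (fun z => z ≠ 0 ∧ IsSquare z)

variable {p}

lemma mem_Ssq {z : ZMod p} : z ∈ Ssq p ↔ z ≠ 0 ∧ IsSquare z := by
  simp [Ssq]

-- indicator lemma
lemma indicator_lemma (u v : ZMod p) (huv : u ≠ v) :
    (if ((u.val : ℤ) > (v.val : ℤ)) then (p : ℤ) else 0)
      = p + u.val - v.val - ((u - v).val : ℤ) := by
  have hp0 : (NeZero p) := ⟨(Fact.out : p.Prime).ne_zero⟩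
  have hu : u.val < p := ZMod.val_lt u
  have hv : v.val < p := ZMod.val_lt v
  have hne : u.val ≠ v.val := fun h => huv (ZMod.val_injective p h)
  have hcast : ((u.val : ℤ) - v.val : ℤ) % p = ((u - v).val : ℤ) := by
    rw [← ZMod.val_intCast (n := p) ((u.val : ℤ) - (v.val : ℤ))]
    congr 1
    push_cast
    simp [ZMod.natCast_val, ZMod.intCast_cast, ZMod.cast_id]
  by_cases h : (u.val : ℤ) > (v.val : ℤ)
  · have h1 : ((u.val : ℤ) - v.val) % p = (u.val : ℤ) - v.val :=
      Int.emod_eq_of_lt (by omega) (by omega)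
    rw [if_pos h]
    omega
  · have h1 : ((u.val : ℤ) - v.val) % p = (u.val : ℤ) - v.val + p := by
      have h2 : ((u.val : ℤ) - v.val + p) % p = (u.val : ℤ) - v.val + p :=
        Int.emod_eq_of_lt (by omega) (by omega)
      have h3 : ((u.val : ℤ) - v.val + p) % p = ((u.val : ℤ) - v.val) % p :=
        by simpa using Int.add_mul_emod_self_left (a := (u.val : ℤ) - v.val) (b := (p:ℤ)) (c := 1)
      omega
    rw [if_neg h]
    omega


lemma card_filter_Icc_eq (hp3 : 3 < p) (P : ZMod p → Prop) [DecidablePred P] :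
    ((Finset.Icc 1 ((p - 1) / 2)).filter (fun x : ℕ => P ((x : ZMod p) ^ 2))).card
      = ((Ssq p).filter P).card := by
  have hodd : p % 2 = 1 := Nat.Prime.eq_two_or_odd (Fact.out) |>.resolve_left (by omega)
  refine Finset.card_bij (fun x _ => ((x : ZMod p) ^ 2)) ?_ ?_ ?_
  · rintro x hx
    simp only [Finset.mem_filter, Finset.mem_Icc] at hx ⊢
    obtain ⟨⟨hx1, hx2⟩, hP⟩ := hx
    refine ⟨mem_Ssq.2 ⟨?_, ⟨x, (sq (x : ZMod p)).symm ▸ (sq (x:ZMod p))⟩⟩, hP⟩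
    · intro h
      have : (x : ZMod p) = 0 := by
        have := pow_eq_zero_iff (n := 2) (by norm_num) |>.1 h
        exact this
      rw [ZMod.natCast_eq_zero_iff] at this
      have := Nat.le_of_dvd (by omega) this
      omega
  · rintro x hx y hy h
    simp only [Finset.mem_filter, Finset.mem_Icc] at hx hy
    obtain ⟨⟨hx1, hx2⟩, -⟩ := hx
    obtain ⟨⟨hy1, hy2⟩, -⟩ := hy
    have hfac : ((x : ZMod p) - y) * ((x : ZMod p) + y) = 0 := by ring_nf; rw [← sub_eq_zero] at h ⊢; linear_combination h
    rcases mul_eq_zero.1 hfac with h1 | h1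
    · have : (x : ZMod p) = y := sub_eq_zero.1 h1
      rw [ZMod.natCast_eq_natCast_iff] at this
      have hx' : x % p = x := Nat.mod_eq_of_lt (by omega)
      have hy' : y % p = y := Nat.mod_eq_of_lt (by omega)
      unfold Nat.ModEq at this
      omega
    · exfalso
      have : ((x + y : ℕ) : ZMod p) = 0 := by push_cast; linear_combination h1
      rw [ZMod.natCast_eq_zero_iff] at this
      have := Nat.le_of_dvd (by omega) this
      omega
  · rintro z hz
    simp only [Finset.mem_filter] at hz
    obtain ⟨hz1, hP⟩ := hz
    obtain ⟨hz0, c, hc⟩ := mem_Ssq.1 hz1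
    have hc0 : c ≠ 0 := by rintro rfl; simp at hc; exact hz0 hc
    have hcv : 1 ≤ c.val := Nat.one_le_iff_ne_zero.2 (fun h => hc0 ((ZMod.val_eq_zero c).1 h))
    have hcv2 : c.val < p := ZMod.val_lt c
    by_cases hle : c.val ≤ (p - 1) / 2
    · have hcast : ((c.val : ZMod p)) = c := by simp [ZMod.natCast_val, ZMod.cast_id]
      have heq : ((c.val : ZMod p)) ^ 2 = z := by rw [hcast, sq, ← hc]
      exact ⟨c.val, Finset.mem_filter.2 ⟨Finset.mem_Icc.2 ⟨hcv, hle⟩,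
        by rw [heq]; exact hP⟩, heq⟩
    · have hcast : (((p - c.val : ℕ) : ZMod p)) = -c := by
        push_cast [Nat.cast_sub (le_of_lt hcv2)]
        simp [ZMod.natCast_val, ZMod.cast_id]
      have heq : (((p - c.val : ℕ) : ZMod p)) ^ 2 = z := by rw [hcast, neg_sq, sq, ← hc]
      exact ⟨p - c.val, Finset.mem_filter.2 ⟨Finset.mem_Icc.2 ⟨by omega, by omega⟩,
        by rw [heq]; exact hP⟩, heq⟩

lemma card_Ssq (hp3 : 3 < p) : (Ssq p).card = (p - 1) / 2 := by
  have := card_filter_Icc_eq (p := p) hp3 (fun _ => True)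
  simpa using this.symm

lemma sum_Ssq_mul (α : ZMod p) (h0 : α ≠ 0) (hsq : IsSquare α) (f : ZMod p → ℤ) :
    ∑ z ∈ Ssq p, f (α * z) = ∑ z ∈ Ssq p, f z := by
  apply Finset.sum_nbij' (fun z => α * z) (fun z => α⁻¹ * z)
  · intro z hz
    obtain ⟨hz0, hzs⟩ := mem_Ssq.1 hz
    exact mem_Ssq.2 ⟨mul_ne_zero h0 hz0, hsq.mul hzs⟩
  · intro z hz
    obtain ⟨hz0, hzs⟩ := mem_Ssq.1 hz
    refine mem_Ssq.2 ⟨mul_ne_zero (inv_ne_zero h0) hz0, ?_⟩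
    obtain ⟨c, hc⟩ := hsq
    exact (IsSquare.mul ⟨c⁻¹, by rw [hc, mul_inv]⟩ hzs)
  · intro z _; field_simp
  · intro z _; field_simp
  · intro z _; rfl


noncomputable def Qsum {p : ℕ} [Fact p.Prime] (γ : ZMod p) : ℤ :=
  ∑ z ∈ Ssq p, ((γ * z).val : ℤ)

lemma Qsum_eq_of (γ γ' s : ZMod p) (hs0 : s ≠ 0) (hs : IsSquare s) (h : γ = γ' * s) :
    Qsum γ = Qsum γ' := by
  unfold Qsum
  rw [← sum_Ssq_mul s hs0 hs (fun z => ((γ' * z).val : ℤ))]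
  apply Finset.sum_congr rfl
  intro z _
  rw [h, mul_assoc]

lemma key_value (hp3 : 3 < p) (a b : ℤ) (h0 : (a : ZMod p) ≠ 0) (h1 : (a : ZMod p) ≠ 1)
    (hsq : IsSquare ((a : ZMod p))) :
    (p : ℤ) * Np p a b = p * (((p - 1) / 2 : ℕ) : ℤ) - Qsum (1 - (a : ZMod p)) := by
  set α := (a : ZMod p) with hα
  set β := (b : ZMod p) with hβ
  have hNp : Np p a b = ((Ssq p).filter
      (fun z => (((z + β).val : ℤ) > ((α * z + β).val : ℤ)))).card := by
    rw [Np, ← card_filter_Icc_eq hp3 (fun z => (((z + β).val : ℤ) > ((α * z + β).val : ℤ)))]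
    congr 1
    apply Finset.filter_congr
    intro x _
    have c1 : (((x : ℤ) ^ 2 + b : ℤ) : ZMod p) = ((x : ZMod p) ^ 2 + β) := by push_cast; ring
    have c2 : ((a * (x : ℤ) ^ 2 + b : ℤ) : ZMod p) = (α * (x : ZMod p) ^ 2 + β) := by
      push_cast; ring
    rw [show ((x : ℤ) ^ 2 + b) % (p : ℤ) = (((((x : ℤ) ^ 2 + b : ℤ) : ZMod p)).val : ℤ) from
        (ZMod.val_intCast _).symm,
      show (a * (x : ℤ) ^ 2 + b) % (p : ℤ) = ((((a * (x : ℤ) ^ 2 + b : ℤ) : ZMod p)).val : ℤ) from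
        (ZMod.val_intCast _).symm, c1, c2]
  have hne : ∀ z ∈ Ssq p, (z + β) ≠ (α * z + β) := by
    intro z hz heq
    obtain ⟨hz0, -⟩ := mem_Ssq.1 hz
    have hzz : (1 - α) * z = 0 := by linear_combination heq
    rcases mul_eq_zero.1 hzz with h | h
    · exact (sub_ne_zero.2 (Ne.symm h1)) h
    · exact hz0 h
  have hsum : (p : ℤ) * (((Ssq p).filter
        (fun z => (((z + β).val : ℤ) > ((α * z + β).val : ℤ)))).card : ℤ)
      = ∑ z ∈ Ssq p, ((p : ℤ) + ((z + β).val : ℤ) - ((α * z + β).val : ℤ)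
          - (((1 - α) * z).val : ℤ)) := by
    rw [mul_comm, ← nsmul_eq_mul, ← Finset.sum_const, Finset.sum_filter]
    apply Finset.sum_congr rfl
    intro z hz
    have := indicator_lemma (z + β) (α * z + β) (hne z hz)
    rw [show (z + β) - (α * z + β) = (1 - α) * z from by ring] at this
    rw [this]
  rw [hNp, hsum, Finset.sum_sub_distrib, Finset.sum_sub_distrib, Finset.sum_add_distrib,
    Finset.sum_const, card_Ssq hp3,
    show ∑ z ∈ Ssq p, ((α * z + β).val : ℤ) = ∑ z ∈ Ssq p, ((z + β).val : ℤ) from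
      sum_Ssq_mul α h0 hsq (fun z => (((z + β).val : ℤ)))]
  rw [nsmul_eq_mul]
  unfold Qsum
  ring


noncomputable def Nsq (p : ℕ) [Fact p.Prime] : Finset (ZMod p) :=
  Finset.univ.filter (fun z => z ≠ 0 ∧ ¬IsSquare z)

lemma mem_Nsq {z : ZMod p} : z ∈ Nsq p ↔ z ≠ 0 ∧ ¬IsSquare z := by
  simp [Nsq]

lemma ringChar_ne_two (hp3 : 3 < p) : ringChar (ZMod p) ≠ 2 := by
  rw [ZMod.ringChar_zmod_n]; omega

lemma isSquare_inv_mul (hp3 : 3 < p) {γ ν : ZMod p} (hγ0 : γ ≠ 0) (hγ : ¬IsSquare γ)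
    (hν0 : ν ≠ 0) (hν : ¬IsSquare ν) : IsSquare (ν⁻¹ * γ) := by
  have h1 : quadraticChar (ZMod p) γ = -1 := (quadraticChar_neg_one_iff_not_isSquare).2 hγ
  have h2 : quadraticChar (ZMod p) ν = -1 := (quadraticChar_neg_one_iff_not_isSquare).2 hν
  have hmul : quadraticChar (ZMod p) (ν * (ν⁻¹ * γ)) = quadraticChar (ZMod p) γ := by
    rw [mul_inv_cancel_left₀ hν0]
  rw [map_mul, h2, h1] at hmul
  have hprod : quadraticChar (ZMod p) (ν⁻¹ * γ) = 1 := by linarith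
  exact (quadraticChar_one_iff_isSquare (mul_ne_zero (inv_ne_zero hν0) hγ0)).1 hprod

lemma Qsum_of_square {γ : ZMod p} (h0 : γ ≠ 0) (h : IsSquare γ) : Qsum γ = Qsum (1 : ZMod p) :=
  Qsum_eq_of γ 1 γ h0 h (one_mul γ).symm

lemma Qsum_of_nonsquare (hp3 : 3 < p) {γ ν : ZMod p} (hγ0 : γ ≠ 0) (hγ : ¬IsSquare γ)
    (hν0 : ν ≠ 0) (hν : ¬IsSquare ν) : Qsum γ = Qsum ν :=
  Qsum_eq_of γ ν (ν⁻¹ * γ) (mul_ne_zero (inv_ne_zero hν0) hγ0)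
    (isSquare_inv_mul hp3 hγ0 hγ hν0 hν) (by field_simp)

lemma Qsum_one_eq : Qsum (1 : ZMod p) = ∑ z ∈ Ssq p, (z.val : ℤ) := by
  unfold Qsum; simp

lemma Qsum_nonsquare_eq (hp3 : 3 < p) {ν : ZMod p} (hν0 : ν ≠ 0) (hν : ¬IsSquare ν) :
    Qsum ν = ∑ z ∈ Nsq p, (z.val : ℤ) := by
  unfold Qsum
  apply Finset.sum_nbij' (fun z => ν * z) (fun z => ν⁻¹ * z)
  · intro z hz
    obtain ⟨hz0, hzs⟩ := mem_Ssq.1 hz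
    refine mem_Nsq.2 ⟨mul_ne_zero hν0 hz0, fun hsq => hν ?_⟩
    have : ν = (ν * z) * z⁻¹ := by field_simp
    rw [this]
    obtain ⟨c, hc⟩ := hzs
    exact hsq.mul ⟨c⁻¹, by rw [hc, mul_inv]⟩
  · intro z hz
    obtain ⟨hz0, hzs⟩ := mem_Nsq.1 hz
    exact mem_Ssq.2 ⟨mul_ne_zero (inv_ne_zero hν0) hz0, isSquare_inv_mul hp3 hz0 hzs hν0 hν⟩
  · intro z _; field_simp
  · intro z _; field_simp
  · intro z _; rfl

lemma two_mul_sum_val {T : Finset (ZMod p)} (h0 : (0 : ZMod p) ∉ T)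
    (hneg : ∀ z ∈ T, -z ∈ T) :
    2 * ∑ z ∈ T, (z.val : ℤ) = p * T.card := by
  have hrev : ∑ z ∈ T, (z.val : ℤ) = ∑ z ∈ T, (((-z).val : ℤ)) := by
    apply Finset.sum_nbij' (fun z => -z) (fun z => -z)
    · exact hneg
    · exact hneg
    · intro z _; simp
    · intro z _; simp
    · intro z _; simp
  have hpt : ∀ z ∈ T, (z.val : ℤ) + ((-z).val : ℤ) = p := by
    intro z hz
    have hz0 : z ≠ 0 := fun h => h0 (h ▸ hz)
    have h1 : (-z).val = p - z.val := by
      rw [ZMod.neg_val, if_neg hz0]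
    have h2 : 1 ≤ z.val := Nat.one_le_iff_ne_zero.2 (fun h => hz0 ((ZMod.val_eq_zero z).1 h))
    have h3 : z.val < p := ZMod.val_lt z
    rw [h1]
    push_cast [Nat.cast_sub (le_of_lt h3)]
    ring
  calc 2 * ∑ z ∈ T, (z.val : ℤ) = ∑ z ∈ T, ((z.val : ℤ) + ((-z).val : ℤ)) := by
        rw [Finset.sum_add_distrib, ← hrev]; ring
    _ = ∑ z ∈ T, (p : ℤ) := Finset.sum_congr rfl hpt
    _ = p * T.card := by rw [Finset.sum_const, nsmul_eq_mul]; ring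

lemma card_Nsq (hp3 : 3 < p) : (Nsq p).card = (p - 1) / 2 := by
  have hodd : p % 2 = 1 := Nat.Prime.eq_two_or_odd (Fact.out) |>.resolve_left (by omega)
  have hsplit := Finset.card_filter_add_card_filter_not
    (s := (Finset.univ : Finset (ZMod p)).filter (fun z => z ≠ 0)) (p := fun z => IsSquare z)
  rw [Finset.filter_filter, Finset.filter_filter] at hsplit
  have e1 : (Finset.univ : Finset (ZMod p)).filter (fun z => z ≠ 0 ∧ IsSquare z) = Ssq p := rfl
  have e2 : (Finset.univ : Finset (ZMod p)).filter (fun z => z ≠ 0 ∧ ¬IsSquare z) = Nsq p := rfl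
  rw [e1, e2] at hsplit
  have hcard : ((Finset.univ : Finset (ZMod p)).filter (fun z => z ≠ 0)).card = p - 1 := by
    rw [Finset.filter_ne', Finset.card_erase_of_mem (Finset.mem_univ 0), Finset.card_univ,
      ZMod.card]
  rw [hcard, card_Ssq hp3] at hsplit
  omega

lemma Qsum_add_eq (hp3 : 3 < p) {ν : ZMod p} (hν0 : ν ≠ 0) (hν : ¬IsSquare ν) :
    2 * (Qsum (1 : ZMod p) + Qsum ν) = p * (p - 1) := by
  have hodd : p % 2 = 1 := Nat.Prime.eq_two_or_odd (Fact.out) |>.resolve_left (by omega)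
  have hT : 2 * ∑ z ∈ (Finset.univ : Finset (ZMod p)).filter (fun z => z ≠ 0), (z.val : ℤ)
      = p * (p - 1) := by
    have h0 : (0 : ZMod p) ∉ (Finset.univ : Finset (ZMod p)).filter (fun z => z ≠ 0) := by simp
    have hneg : ∀ z ∈ (Finset.univ : Finset (ZMod p)).filter (fun z => z ≠ 0),
        -z ∈ (Finset.univ : Finset (ZMod p)).filter (fun z => z ≠ 0) := by
      intro z hz; simp only [Finset.mem_filter, Finset.mem_univ, true_and] at hz ⊢
      exact neg_ne_zero.2 hz
    have := two_mul_sum_val h0 hneg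
    rw [this, Finset.filter_ne', Finset.card_erase_of_mem (Finset.mem_univ 0),
      Finset.card_univ, ZMod.card]
    push_cast [Nat.cast_sub (by omega : 1 ≤ p)]
    ring
  have hsum : Qsum (1 : ZMod p) + Qsum ν
      = ∑ z ∈ (Finset.univ : Finset (ZMod p)).filter (fun z => z ≠ 0), (z.val : ℤ) := by
    rw [Qsum_one_eq, Qsum_nonsquare_eq hp3 hν0 hν]
    have := Finset.sum_filter_add_sum_filter_not
      ((Finset.univ : Finset (ZMod p)).filter (fun z => z ≠ 0)) (fun z => IsSquare z)
      (fun z => (z.val : ℤ))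
    rw [Finset.filter_filter, Finset.filter_filter] at this
    exact this
  rw [hsum, hT]

lemma Qsum_eq_of_one_mod_four (hp3 : 3 < p) (hp1 : p % 4 = 1) {ν : ZMod p} (hν0 : ν ≠ 0)
    (hν : ¬IsSquare ν) : Qsum (1 : ZMod p) = Qsum ν := by
  have hneg1 : IsSquare (-1 : ZMod p) := by
    rw [ZMod.exists_sq_eq_neg_one_iff]; omega
  have hQ1 : 2 * Qsum (1 : ZMod p) = p * ((Ssq p).card) := by
    rw [Qsum_one_eq]
    apply two_mul_sum_val
    · intro h; exact (mem_Ssq.1 h).1 rfl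
    · intro z hz
      obtain ⟨hz0, hzs⟩ := mem_Ssq.1 hz
      refine mem_Ssq.2 ⟨neg_ne_zero.2 hz0, ?_⟩
      rw [show -z = (-1) * z from by ring]
      exact hneg1.mul hzs
  have hQν : 2 * Qsum ν = p * ((Nsq p).card) := by
    rw [Qsum_nonsquare_eq hp3 hν0 hν]
    apply two_mul_sum_val
    · intro h; exact (mem_Nsq.1 h).1 rfl
    · intro z hz
      obtain ⟨hz0, hzs⟩ := mem_Nsq.1 hz
      refine mem_Nsq.2 ⟨neg_ne_zero.2 hz0, fun hsq => hzs ?_⟩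
      rw [show z = (-1) * (-z) from by ring]
      exact hneg1.mul hsq
  rw [card_Ssq hp3] at hQ1
  rw [card_Nsq hp3] at hQν
  omega


lemma exists_pair (hp3 : 3 < p) (hpm : p % 4 = 3) :
    (∃ z : ZMod p, (z ≠ 0 ∧ z ≠ 1 ∧ IsSquare z) ∧ IsSquare (1 - z)) ∧
    (∃ z : ZMod p, (z ≠ 0 ∧ z ≠ 1 ∧ IsSquare z) ∧ ¬IsSquare (1 - z)) := by
  have hchar := ringChar_ne_two hp3
  set χ := quadraticChar (ZMod p) with hχ
  set U : Finset (ZMod p) := Finset.univ.filter (fun z => z ≠ 0 ∧ z ≠ 1) with hU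
  set A' : Finset (ZMod p) := Finset.univ.filter (fun z => z ≠ 0 ∧ z ≠ 1 ∧ IsSquare z) with hA'
  have hneg1 : χ (-1) = -1 := by
    apply quadraticChar_neg_one_iff_not_isSquare.2
    intro h
    exact absurd (ZMod.exists_sq_eq_neg_one_iff.1 h) (by omega)
  have hsum0 : ∑ z : ZMod p, χ z = 0 := quadraticChar_sum_zero hchar
  have h01 : (0 : ZMod p) ≠ 1 := fun h => one_ne_zero (α := ZMod p) h.symm
  have hmem1 : (1 : ZMod p) ∈ Finset.univ.erase (0 : ZMod p) :=
    Finset.mem_erase.2 ⟨fun h => h01 h.symm, Finset.mem_univ 1⟩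
  have hsplit : ∀ f : ZMod p → ℤ, ∑ z : ZMod p, f z = f 0 + f 1 + ∑ z ∈ U, f z := by
    intro f
    have hU' : U = (Finset.univ.erase (0 : ZMod p)).erase 1 := by
      ext z; simp [hU, Finset.mem_erase]; tauto
    rw [hU', ← Finset.add_sum_erase _ f (Finset.mem_univ (0 : ZMod p)),
      ← Finset.add_sum_erase _ f hmem1]
    ring
  have hT1 : ∑ z ∈ U, χ (z - 1) = 1 := by
    have htot : ∑ z : ZMod p, χ (z - 1) = 0 := by
      rw [← hsum0]
      apply Finset.sum_nbij' (fun z => z - 1) (fun z => z + 1) <;> intro z _ <;> simp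
    have hs := hsplit (fun z => χ (z - 1))
    simp only [zero_sub, sub_self] at hs
    rw [htot] at hs
    have hχ0 : χ 0 = 0 := quadraticChar_zero
    rw [hneg1, hχ0] at hs
    linarith
  have hT2 : ∑ z ∈ U, χ z * χ (z - 1) = -1 := by
    have step1 : ∀ z ∈ U, χ z * χ (z - 1) = χ (1 - z⁻¹) := by
      intro z hz
      obtain ⟨hz0, hz1⟩ : z ≠ 0 ∧ z ≠ 1 := by simpa [hU] using hz
      rw [← map_mul]
      have hfac : z * (z - 1) = z ^ 2 * (1 - z⁻¹) := by field_simp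
      rw [hfac, map_mul, quadraticChar_sq_one' hz0, one_mul]
    rw [Finset.sum_congr rfl step1]
    have step2 : ∑ z ∈ U, χ (1 - z⁻¹) = ∑ z ∈ U, χ (1 - z) := by
      apply Finset.sum_nbij' (fun z => z⁻¹) (fun z => z⁻¹)
      · intro z hz
        obtain ⟨hz0, hz1⟩ : z ≠ 0 ∧ z ≠ 1 := by simpa [hU] using hz
        simp only [hU, Finset.mem_filter, Finset.mem_univ, true_and]
        exact ⟨inv_ne_zero hz0, fun h => hz1 (inv_eq_one.1 h)⟩
      · intro z hz
        obtain ⟨hz0, hz1⟩ : z ≠ 0 ∧ z ≠ 1 := by simpa [hU] using hz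
        simp only [hU, Finset.mem_filter, Finset.mem_univ, true_and]
        exact ⟨inv_ne_zero hz0, fun h => hz1 (inv_eq_one.1 h)⟩
      · intro z hz
        obtain ⟨hz0, -⟩ : z ≠ 0 ∧ z ≠ 1 := by simpa [hU] using hz
        simp [inv_inv]
      · intro z hz
        obtain ⟨hz0, -⟩ : z ≠ 0 ∧ z ≠ 1 := by simpa [hU] using hz
        simp [inv_inv]
      · intro z _; rfl
    rw [step2]
    have step3 : ∑ z ∈ U, χ (1 - z) = ∑ z ∈ U, χ z := by
      apply Finset.sum_nbij' (fun z => 1 - z) (fun z => 1 - z)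
      · intro z hz
        obtain ⟨hz0, hz1⟩ : z ≠ 0 ∧ z ≠ 1 := by simpa [hU] using hz
        simp only [hU, Finset.mem_filter, Finset.mem_univ, true_and]
        constructor
        · intro h; exact hz1 (by linear_combination -h)
        · intro h; exact hz0 (by linear_combination -h)
      · intro z hz
        obtain ⟨hz0, hz1⟩ : z ≠ 0 ∧ z ≠ 1 := by simpa [hU] using hz
        simp only [hU, Finset.mem_filter, Finset.mem_univ, true_and]
        constructor
        · intro h; exact hz1 (by linear_combination -h)
        · intro h; exact hz0 (by linear_combination -h)
      · intro z _; ring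
      · intro z _; ring
      · intro z _; rfl
    rw [step3]
    have hs := hsplit χ
    rw [hsum0, quadraticChar_zero, map_one] at hs
    linarith
  have hSU : ∑ z ∈ U, (1 + χ z) * χ (z - 1) = 0 := by
    have hpt : ∀ z ∈ U, (1 + χ z) * χ (z - 1) = χ (z - 1) + χ z * χ (z - 1) := by
      intro z _; ring
    rw [Finset.sum_congr rfl hpt, Finset.sum_add_distrib, hT1, hT2]
    ring
  have hUf : U.filter (fun z => IsSquare z) = A' := by
    ext z; simp only [hU, hA', Finset.mem_filter, Finset.mem_univ, true_and]; tauto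
  have hAU : (∑ z ∈ A', χ (z - 1)) * 2 = 0 := by
    have hsf := Finset.sum_filter_add_sum_filter_not U (fun z => IsSquare z)
      (fun z => (1 + χ z) * χ (z - 1))
    have hz1 : ∀ z ∈ U.filter (fun z => IsSquare z), (1 + χ z) * χ (z - 1) = χ (z - 1) * 2 := by
      intro z hz
      simp only [hU, Finset.mem_filter, Finset.mem_univ, true_and] at hz
      obtain ⟨⟨hz0, -⟩, hzs⟩ := hz
      rw [(quadraticChar_one_iff_isSquare hz0).2 hzs]
      ring
    have hz2 : ∀ z ∈ U.filter (fun z => ¬IsSquare z), (1 + χ z) * χ (z - 1) = 0 := by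
      intro z hz
      simp only [hU, Finset.mem_filter, Finset.mem_univ, true_and] at hz
      obtain ⟨⟨hz0, -⟩, hzs⟩ := hz
      rw [quadraticChar_neg_one_iff_not_isSquare.2 hzs]
      ring
    rw [Finset.sum_congr rfl hz1, Finset.sum_congr rfl hz2, Finset.sum_const_zero, add_zero,
      hUf, hSU, ← Finset.sum_mul] at hsf
    exact hsf
  have hA'sum : ∑ z ∈ A', χ (z - 1) = 0 := by linarith
  have h1S : (1 : ZMod p) ∈ Ssq p := mem_Ssq.2 ⟨one_ne_zero, IsSquare.one⟩
  have hA'e : A' = (Ssq p).erase 1 := by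
    ext z; simp only [hA', Ssq, Finset.mem_filter, Finset.mem_univ, true_and, Finset.mem_erase]
    tauto
  have hA'card : A'.card = (p - 1) / 2 - 1 := by
    rw [hA'e, Finset.card_erase_of_mem h1S, card_Ssq hp3]
  have hpos : 0 < A'.card := by omega
  have hdich : ∀ z ∈ A', χ (z - 1) = 1 ∨ χ (z - 1) = -1 := by
    intro z hz
    obtain ⟨h0, h1, hs⟩ : z ≠ 0 ∧ z ≠ 1 ∧ IsSquare z := by simpa [hA'] using hz
    exact quadraticChar_dichotomy (sub_ne_zero.2 h1)
  have hflip : ∀ z : ZMod p, χ (1 - z) = - χ (z - 1) := by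
    intro z
    rw [show (1 : ZMod p) - z = -1 * (z - 1) from by ring, map_mul, hneg1]
    ring
  have hex1 : ∃ z ∈ A', χ (z - 1) = 1 := by
    by_contra hcon
    push_neg at hcon
    have hall : ∀ z ∈ A', χ (z - 1) = -1 :=
      fun z hz => (hdich z hz).resolve_left (hcon z hz)
    rw [Finset.sum_congr rfl hall, Finset.sum_const, nsmul_eq_mul] at hA'sum
    have : (A'.card : ℤ) = 0 := by linarith
    omega
  have hex2 : ∃ z ∈ A', χ (z - 1) = -1 := by
    by_contra hcon
    push_neg at hcon
    have hall : ∀ z ∈ A', χ (z - 1) = 1 :=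
      fun z hz => (hdich z hz).resolve_right (hcon z hz)
    rw [Finset.sum_congr rfl hall, Finset.sum_const, nsmul_eq_mul] at hA'sum
    have : (A'.card : ℤ) = 0 := by linarith
    omega
  constructor
  · obtain ⟨z, hz, hz1⟩ := hex2
    obtain ⟨h0, h1, hs⟩ : z ≠ 0 ∧ z ≠ 1 ∧ IsSquare z := by simpa [hA'] using hz
    refine ⟨z, ⟨h0, h1, hs⟩, ?_⟩
    have : χ (1 - z) = 1 := by rw [hflip, hz1]; ring
    exact (quadraticChar_one_iff_isSquare (sub_ne_zero.2 (Ne.symm h1))).1 this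
  · obtain ⟨z, hz, hz1⟩ := hex1
    obtain ⟨h0, h1, hs⟩ : z ≠ 0 ∧ z ≠ 1 ∧ IsSquare z := by simpa [hA'] using hz
    refine ⟨z, ⟨h0, h1, hs⟩, ?_⟩
    have : χ (1 - z) = -1 := by rw [hflip, hz1]
    exact quadraticChar_neg_one_iff_not_isSquare.1 this


lemma mem_A_decode (hp3 : 3 < p) {a : ℤ}
    (ha : a ∈ (Finset.Ioo (1 : ℤ) (p : ℤ)).filter (fun a => legendreSym p a = 1)) :
    (a : ZMod p) ≠ 0 ∧ (a : ZMod p) ≠ 1 ∧ IsSquare ((a : ZMod p)) := by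
  rw [Finset.mem_filter, Finset.mem_Ioo] at ha
  obtain ⟨⟨ha1, ha2⟩, haleg⟩ := ha
  have h0 : (a : ZMod p) ≠ 0 := by
    intro h
    rw [ZMod.intCast_zmod_eq_zero_iff_dvd] at h
    have := Int.le_of_dvd (by omega) h
    omega
  have h1 : (a : ZMod p) ≠ 1 := by
    intro h
    have hdvd : ((a - 1 : ℤ) : ZMod p) = 0 := by push_cast; rw [h]; ring
    rw [ZMod.intCast_zmod_eq_zero_iff_dvd] at hdvd
    have := Int.le_of_dvd (by omega) hdvd
    omega
  exact ⟨h0, h1, (legendreSym.eq_one_iff p h0).1 haleg⟩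

lemma lift_mem (hp3 : 3 < p) {z : ZMod p} (h0 : z ≠ 0) (h1 : z ≠ 1) (hs : IsSquare z) :
    ((z.val : ℤ) ∈ (Finset.Ioo (1 : ℤ) (p : ℤ)).filter (fun a => legendreSym p a = 1))
      ∧ (((z.val : ℤ) : ZMod p) = z) := by
  have hcast : (((z.val : ℤ)) : ZMod p) = z := by
    push_cast
    simp [ZMod.natCast_val, ZMod.cast_id]
  have hv0 : z.val ≠ 0 := fun h => h0 ((ZMod.val_eq_zero z).1 h)
  have hv1 : z.val ≠ 1 := by
    intro h
    apply h1
    rw [← hcast, h]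
    norm_num
  have hvp : z.val < p := ZMod.val_lt z
  have hv2 : 1 < z.val := by omega
  refine ⟨Finset.mem_filter.2 ⟨Finset.mem_Ioo.2 ⟨by exact_mod_cast hv2, by exact_mod_cast hvp⟩,
    ?_⟩, hcast⟩
  rw [legendreSym.eq_one_iff p (show (((z.val : ℤ)) : ZMod p) ≠ 0 from by rw [hcast]; exact h0), hcast]
  exact hs

end Aux

theorem stmt_16 (p : ℕ) [Fact p.Prime] (hp3 : 3 < p) (b : ℤ) :
    ((((Finset.Ioo (1 : ℤ) (p : ℤ)).filter (fun a => legendreSym p a = 1)).image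
      (fun a => Np p a b)).card : ℤ) = (3 - legendreSym p (-1)) / 2 ∧
    ∀ b' : ℤ,
      ((Finset.Ioo (1 : ℤ) (p : ℤ)).filter (fun a => legendreSym p a = 1)).image
        (fun a => Np p a b')
      = ((Finset.Ioo (1 : ℤ) (p : ℤ)).filter (fun a => legendreSym p a = 1)).image
        (fun a => Np p a b) := by
  have hodd : p % 2 = 1 := Nat.Prime.eq_two_or_odd (Fact.out) |>.resolve_left (by omega)
  obtain ⟨ν, hνχ⟩ := quadraticChar_exists_neg_one (ringChar_ne_two hp3)
  have hν0 : ν ≠ 0 := by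
    intro h
    rw [h, quadraticChar_zero] at hνχ
    norm_num at hνχ
  have hνns : ¬IsSquare ν := quadraticChar_neg_one_iff_not_isSquare.1 hνχ
  set A := (Finset.Ioo (1 : ℤ) (p : ℤ)).filter (fun a => legendreSym p a = 1) with hA
  have hval : ∀ (b' : ℤ), ∀ a ∈ A, (p : ℤ) * Np p a b' =
      p * (((p - 1) / 2 : ℕ) : ℤ)
        - (if IsSquare (1 - (a : ZMod p)) then Qsum (1 : ZMod p) else Qsum ν) := by
    intro b' a ha
    obtain ⟨h0, h1, hs⟩ := mem_A_decode hp3 ha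
    rw [key_value hp3 a b' h0 h1 hs]
    congr 1
    have hsub : 1 - (a : ZMod p) ≠ 0 := sub_ne_zero.2 (Ne.symm h1)
    by_cases hcase : IsSquare (1 - (a : ZMod p))
    · rw [if_pos hcase]
      exact Qsum_of_square hsub hcase
    · rw [if_neg hcase]
      exact Qsum_of_nonsquare hp3 hsub hcase hν0 hνns
  have hppos : (0 : ℤ) < p := by exact_mod_cast (by omega : 0 < p)
  have hcancel : ∀ x y : ℕ, (p : ℤ) * x = (p : ℤ) * y → x = y := by
    intro x y h
    have := mul_left_cancel₀ (ne_of_gt hppos) h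
    exact_mod_cast this
  have hbind : ∀ b' : ℤ, ∀ a ∈ A, Np p a b' = Np p a b := by
    intro b' a ha
    exact hcancel _ _ ((hval b' a ha).trans (hval b a ha).symm)
  have himgb : ∀ b' : ℤ, A.image (fun a => Np p a b') = A.image (fun a => Np p a b) := by
    intro b'
    apply Finset.image_congr
    intro a ha
    exact hbind b' a (Finset.mem_coe.1 ha)
  refine ⟨?_, himgb⟩
  have h4 : (4 : ℤ) ∈ A := by
    rw [hA, Finset.mem_filter, Finset.mem_Ioo]
    have h2 : ((2 : ℤ) : ZMod p) ≠ 0 := by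
      intro h
      rw [ZMod.intCast_zmod_eq_zero_iff_dvd] at h
      have := Int.le_of_dvd (by norm_num) h
      omega
    refine ⟨⟨by norm_num, by exact_mod_cast (by omega : 4 < p)⟩, ?_⟩
    have := legendreSym.sq_one' (p := p) (a := 2) h2
    norm_num at this
    exact this
  have hp14 : p % 4 = 1 ∨ p % 4 = 3 := by omega
  rcases hp14 with hp4 | hp4
  · have hQeq : Qsum (1 : ZMod p) = Qsum ν := Qsum_eq_of_one_mod_four hp3 hp4 hν0 hνns
    have hconst : ∀ a ∈ A, Np p a b = Np p 4 b := by
      intro a ha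
      apply hcancel
      rw [hval b a ha, hval b 4 h4, hQeq]
      simp
    have himg1 : A.image (fun a => Np p a b) = {Np p 4 b} := by
      apply Finset.eq_singleton_iff_unique_mem.2
      refine ⟨Finset.mem_image_of_mem _ h4, ?_⟩
      intro y hy
      obtain ⟨a, ha, rfl⟩ := Finset.mem_image.1 hy
      exact hconst a ha
    rw [himg1, Finset.card_singleton]
    have hleg : legendreSym p (-1) = 1 := by
      rw [legendreSym.at_neg_one (by omega : p ≠ 2)]
      exact ZMod.χ₄_nat_one_mod_four hp4
    rw [hleg]
    norm_num
  · obtain ⟨⟨z₁, ⟨hz10, hz11, hz1s⟩, hz1sq⟩, ⟨z₂, ⟨hz20, hz21, hz2s⟩, hz2ns⟩⟩ :=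
      exists_pair hp3 hp4
    obtain ⟨ha1A, ha1c⟩ := lift_mem hp3 hz10 hz11 hz1s
    obtain ⟨ha2A, ha2c⟩ := lift_mem hp3 hz20 hz21 hz2s
    set a₁ : ℤ := ((z₁.val : ℤ)) with ha₁
    set a₂ : ℤ := ((z₂.val : ℤ)) with ha₂
    have hv1 : (p : ℤ) * Np p a₁ b = p * (((p - 1) / 2 : ℕ) : ℤ) - Qsum (1 : ZMod p) := by
      rw [hval b a₁ ha1A, ha1c, if_pos hz1sq]
    have hv2 : (p : ℤ) * Np p a₂ b = p * (((p - 1) / 2 : ℕ) : ℤ) - Qsum ν := by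
      rw [hval b a₂ ha2A, ha2c, if_neg hz2ns]
    have hQQ : 2 * (Qsum (1 : ZMod p) + Qsum ν) = p * (p - 1) := Qsum_add_eq hp3 hν0 hνns
    have hne : Np p a₁ b ≠ Np p a₂ b := by
      intro h
      have hQ : Qsum (1 : ZMod p) = Qsum ν := by
        rw [h] at hv1
        linarith
      rw [← hQ] at hQQ
      have hm : ((p : ℤ)) % 4 = 3 := by
        have h' : ((p % 4 : ℕ) : ℤ) = (p : ℤ) % 4 := by push_cast; ring
        rw [hp4] at h'
        exact_mod_cast h'.symm
      obtain ⟨k, hk⟩ : ∃ k : ℤ, (p : ℤ) = 4 * k + 3 := ⟨(p : ℤ) / 4, by omega⟩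
      rw [hk] at hQQ
      have hw : (4 : ℤ) * Qsum (1 : ZMod p) = 4 * (4 * k ^ 2 + 5 * k + 1) + 2 := by
        linear_combination hQQ
      set m : ℤ := Qsum (1 : ZMod p) - (4 * k ^ 2 + 5 * k + 1) with hm2
      have h42 : 4 * m = 2 := by
        rw [hm2]
        linarith
      omega
    have himg2 : A.image (fun a => Np p a b) = {Np p a₁ b, Np p a₂ b} := by
      apply Finset.Subset.antisymm
      · intro y hy
        obtain ⟨a, ha, rfl⟩ := Finset.mem_image.1 hy
        simp only [Finset.mem_insert, Finset.mem_singleton]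
        by_cases hcase : IsSquare (1 - (a : ZMod p))
        · left
          apply hcancel
          rw [hval b a ha, if_pos hcase, hv1]
        · right
          apply hcancel
          rw [hval b a ha, if_neg hcase, hv2]
      · intro y hy
        rcases Finset.mem_insert.1 hy with rfl | hy2
        · exact Finset.mem_image_of_mem _ ha1A
        · rw [Finset.mem_singleton] at hy2
          subst hy2
          exact Finset.mem_image_of_mem _ ha2A
    rw [himg2, Finset.card_pair hne]
    have hleg : legendreSym p (-1) = -1 := by
      rw [legendreSym.at_neg_one (by omega : p ≠ 2)]
      exact ZMod.χ₄_nat_three_mod_four hp4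
    rw [hleg]
    norm_num
end

section
/- Let p be an odd prime and let a, b be integers with 2 ≤ a ≤ p-1. Then N_p(a,b) = (p-1)/2 + Σ_{x: (x/p)=1} {(x+b)/p} - Σ_{y: (y/p)=(a/p)} {(y+b)/p} - Σ_{z: (z/p)=((1-a)/p)} z/p, where all sums range over residues in {1, ..., p-1} with the indicated Legendre symbol value. -/
-- Key pointwise identity: indicator of {u}_p > {v}_p in terms of fractional parts.
lemma indicator_frac (p : ℕ) (hp : 0 < p) (u v : ℤ) :
    (if u % (p:ℤ) > v % (p:ℤ) then (1:ℝ) else 0)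
      = Int.fract ((u:ℝ)/p) - Int.fract ((v:ℝ)/p) + Int.fract (((v - u : ℤ):ℝ)/p) := by
  rw [Int.fract_div_intCast_eq_div_intCast_mod, Int.fract_div_intCast_eq_div_intCast_mod,
    Int.fract_div_intCast_eq_div_intCast_mod]
  have hP : (0:ℤ) < (p:ℤ) := by exact_mod_cast hp
  have hu := Int.emod_nonneg u (by omega : (p:ℤ) ≠ 0)
  have hu' := Int.emod_lt_of_pos u hP
  have hv := Int.emod_nonneg v (by omega : (p:ℤ) ≠ 0)
  have hv' := Int.emod_lt_of_pos v hP
  have hsub : (v - u) % (p:ℤ) = (v % p - u % p) % p := Int.sub_emod v u p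
  have hpne : ((p:ℝ)) ≠ 0 := by positivity
  by_cases h : u % (p:ℤ) > v % (p:ℤ)
  · rw [if_pos h, hsub]
    have h2 : (v % (p:ℤ) - u % p) % p = v % p - u % p + p := by
      rw [show v % (p:ℤ) - u % p = (v % p - u % p + p) - p by ring, Int.sub_emod_right,
        Int.emod_eq_of_lt (by omega) (by omega)]
      omega
    rw [h2]
    push_cast
    field_simp
    ring
  · rw [if_neg h, hsub]
    have h2 : (v % (p:ℤ) - u % p) % p = v % p - u % p :=
      Int.emod_eq_of_lt (by omega) (by omega)
    rw [h2]
    push_cast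
    field_simp
    ring

-- The bijection x ↦ (c·x²) mod p between [1,(p-1)/2] and residues with Legendre symbol = (c/p).
lemma sumB (p : ℕ) [Fact p.Prime] (hodd : Odd p) (c : ℤ) (hc : ¬ ((p:ℤ) ∣ c)) (f : ℤ → ℝ) :
    ∑ x ∈ Finset.Icc 1 ((p - 1) / 2), f ((c * (x:ℤ)^2) % p)
      = ∑ y ∈ (Finset.Icc (1:ℤ) ((p:ℤ)-1)).filter
          (fun y => legendreSym p y = legendreSym p c), f y := by
  have hp : p.Prime := Fact.out
  have hp2 : p % 2 = 1 := Nat.odd_iff.mp hodd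
  have hp3 : 3 ≤ p := by
    have := hp.two_le; omega
  have hP : (0:ℤ) < (p:ℤ) := by exact_mod_cast (by omega : 0 < p)
  have hcz : ((c : ZMod p)) ≠ 0 := by
    rw [Ne, ZMod.intCast_zmod_eq_zero_iff_dvd]; exact hc
  -- for x in range, p ∤ x
  have hxne : ∀ x : ℕ, x ∈ Finset.Icc 1 ((p - 1) / 2) → (((x:ℤ) : ZMod p)) ≠ 0 := by
    intro x hx
    simp only [Finset.mem_Icc] at hx
    rw [Ne, ZMod.intCast_zmod_eq_zero_iff_dvd]
    intro hdvd
    have : (p:ℤ) ≤ (x:ℤ) := Int.le_of_dvd (by exact_mod_cast (by omega : 0 < x)) hdvd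
    have : p ≤ x := by exact_mod_cast this
    omega
  have hleg : ∀ x : ℕ, x ∈ Finset.Icc 1 ((p - 1) / 2) →
      legendreSym p ((c * (x:ℤ)^2) % p) = legendreSym p c := by
    intro x hx
    rw [← legendreSym.mod, legendreSym.mul, legendreSym.sq_one' p (hxne x hx), mul_one]
  apply Finset.sum_bij (i := fun (x : ℕ) (_ : x ∈ Finset.Icc 1 ((p - 1) / 2)) =>
    (c * (x:ℤ)^2) % (p:ℤ))
  · -- maps into
    intro x hx
    simp only [Finset.mem_filter, Finset.mem_Icc]
    refine ⟨⟨?_, ?_⟩, hleg x hx⟩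
    · have h0 : 0 ≤ (c * (x:ℤ)^2) % p := Int.emod_nonneg _ (by omega)
      have hne : (c * (x:ℤ)^2) % (p:ℤ) ≠ 0 := by
        intro h0'
        have : legendreSym p ((c * (x:ℤ)^2) % p) = 0 := by rw [h0']; exact legendreSym.at_zero p
        rw [hleg x hx] at this
        exact hcz ((legendreSym.eq_zero_iff p c).mp this)
      omega
    · have := Int.emod_lt_of_pos (c * (x:ℤ)^2) hP
      omega
  · -- injective
    intro x₁ hx₁ x₂ hx₂ heq
    simp only [Finset.mem_Icc] at hx₁ hx₂
    have hmod : ((c * (x₁:ℤ)^2 : ℤ) : ZMod p) = ((c * (x₂:ℤ)^2 : ℤ) : ZMod p) := by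
      rw [ZMod.intCast_eq_intCast_iff']; exact heq
    have hP' : Prime ((p:ℤ)) := Nat.prime_iff_prime_int.mp hp
    have hdvd : (p:ℤ) ∣ (c * (x₂:ℤ)^2 - c * (x₁:ℤ)^2) := by
      rw [← ZMod.intCast_zmod_eq_zero_iff_dvd]
      push_cast
      push_cast at hmod
      rw [← hmod]; ring
    have hfac : (p:ℤ) ∣ c * (((x₂:ℤ) - x₁) * ((x₂:ℤ) + x₁)) := by
      have : c * (((x₂:ℤ) - x₁) * ((x₂:ℤ) + x₁)) = c * (x₂:ℤ)^2 - c * (x₁:ℤ)^2 := by ring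
      rw [this]; exact hdvd
    rcases hP'.dvd_mul.mp hfac with h | h
    · exact absurd h hc
    rcases hP'.dvd_mul.mp h with h | h
    · have : (x₂:ℤ) - x₁ = 0 := Int.eq_zero_of_abs_lt_dvd h (by
        rw [abs_lt]
        constructor <;> [skip; skip] <;>
          · push_cast; omega)
      have : x₂ = x₁ := by exact_mod_cast sub_eq_zero.mp this
      omega
    · exfalso
      have hle : (p:ℤ) ≤ (x₂:ℤ) + x₁ := Int.le_of_dvd (by push_cast; omega) h
      have : p ≤ x₂ + x₁ := by exact_mod_cast hle
      omega
  · -- surjective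
    intro y hy
    simp only [Finset.mem_filter, Finset.mem_Icc] at hy
    obtain ⟨⟨hy1, hy2⟩, hyl⟩ := hy
    have hlc : legendreSym p c ≠ 0 := fun h0 => hcz ((legendreSym.eq_zero_iff p c).mp h0)
    have hyz : ((y : ZMod p)) ≠ 0 := by
      intro h0
      exact hlc (hyl ▸ ((legendreSym.eq_zero_iff p y).mpr h0))
    have h1 : legendreSym p (y * c) = 1 := by
      rw [legendreSym.mul, hyl]
      rcases legendreSym.eq_one_or_neg_one p hcz with h | h <;> rw [h] <;> norm_num
    have hyc : ((y * c : ℤ) : ZMod p) ≠ 0 := by push_cast; exact mul_ne_zero hyz hcz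
    obtain ⟨z, hz⟩ := (legendreSym.eq_one_iff p hyc).mp h1
    have hz0 : z ≠ 0 := by
      intro h0; rw [h0, mul_zero] at hz; exact hyc hz
    set w : ZMod p := z * (c : ZMod p)⁻¹ with hw
    have hw0 : w ≠ 0 := mul_ne_zero hz0 (inv_ne_zero hcz)
    have hcw : (c : ZMod p) * w ^ 2 = (y : ZMod p) := by
      have hz' : (y : ZMod p) * (c : ZMod p) = z * z := by push_cast at hz; exact hz
      rw [hw]
      field_simp
      linear_combination -hz'
    haveI : NeZero p := ⟨by omega⟩
    have hv1 : w.val < p := ZMod.val_lt w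
    have hv0 : w.val ≠ 0 := fun h0 => hw0 ((ZMod.val_eq_zero w).mp h0)
    set x : ℕ := if w.val ≤ (p - 1) / 2 then w.val else p - w.val with hxdef
    have hxmem : x ∈ Finset.Icc 1 ((p - 1) / 2) := by
      simp only [Finset.mem_Icc]
      rw [hxdef]
      split <;> omega
    have hxsq : (((x:ℤ)) : ZMod p)^2 = w^2 := by
      have hcast : ((x : ℕ) : ZMod p) = w ∨ ((x : ℕ) : ZMod p) = -w := by
        rw [hxdef]
        split
        · left; exact ZMod.natCast_rightInverse w
        · right
          push_cast [Nat.cast_sub (le_of_lt hv1)]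
          rw [ZMod.natCast_self, ZMod.natCast_rightInverse w]
          ring
        
      push_cast
      rcases hcast with h | h <;> rw [h]
      ring
    refine ⟨x, hxmem, ?_⟩
    have hmod : ((c * (x:ℤ)^2 : ℤ) : ZMod p) = ((y : ℤ) : ZMod p) := by
      push_cast
      push_cast at hxsq
      rw [hxsq, hcw]
    rw [ZMod.intCast_eq_intCast_iff'] at hmod
    rw [hmod, Int.emod_eq_of_lt (by omega) (by omega)]
  · intro x hx
    rfl

lemma legendre_p_sub (p : ℕ) [Fact p.Prime] (t : ℤ) :
    legendreSym p ((p:ℤ) - t) = legendreSym p (-1) * legendreSym p t := by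
  have h1 : legendreSym p ((p:ℤ) - t) = legendreSym p (-t) := by
    rw [show (p:ℤ) - t = -t + p by ring, legendreSym.mod p (-t + p), legendreSym.mod p (-t),
      ← Int.emod_eq_add_self_emod]
  rw [h1, show (-t : ℤ) = -1 * t by ring, legendreSym.mul]

theorem stmt_17 (p : ℕ) [Fact p.Prime] (hodd : Odd p) (a b : ℤ)
    (ha : 2 ≤ a) (ha' : a ≤ (p : ℤ) - 1) :
    (Np p a b : ℝ) = ((p : ℝ) - 1) / 2
      + (∑ x ∈ (Finset.Icc (1 : ℤ) ((p : ℤ) - 1)).filter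
          (fun x => legendreSym p x = 1), Int.fract (((x + b : ℤ) : ℝ) / p))
      - (∑ y ∈ (Finset.Icc (1 : ℤ) ((p : ℤ) - 1)).filter
          (fun y => legendreSym p y = legendreSym p a),
            Int.fract (((y + b : ℤ) : ℝ) / p))
      - (∑ z ∈ (Finset.Icc (1 : ℤ) ((p : ℤ) - 1)).filter
          (fun z => legendreSym p z = legendreSym p (1 - a)), (z : ℝ) / p) := by
  have hp : p.Prime := Fact.out
  have hp2 : p % 2 = 1 := Nat.odd_iff.mp hodd
  have hp3 : 3 ≤ p := by have := hp.two_le; omega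
  have hP : (0:ℤ) < (p:ℤ) := by exact_mod_cast (by omega : 0 < p)
  have hPr : (0:ℝ) < (p:ℝ) := by exact_mod_cast (by omega : 0 < p)
  have hpa : ¬ ((p:ℤ) ∣ a) := by
    intro h; have := Int.le_of_dvd (by omega) h; omega
  have hpa1 : ¬ ((p:ℤ) ∣ (a - 1)) := by
    intro h; have := Int.le_of_dvd (by omega) h; omega
  have hpa1' : ¬ ((p:ℤ) ∣ (1 - a)) := by
    intro h
    exact hpa1 (by simpa using (dvd_neg.mpr h))
  have hp1 : ¬ ((p:ℤ) ∣ (1:ℤ)) := by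
    intro h; have := Int.le_of_dvd (by omega) h; omega
  haveI : Fact (1 < p) := ⟨by omega⟩
  have hm1 : ((-1 : ℤ) : ZMod p) ≠ 0 := by
    push_cast
    exact neg_ne_zero.mpr one_ne_zero
  have hleg1 : legendreSym p 1 = 1 := by
    have := legendreSym.sq_one' p (a := 1) (by push_cast; exact one_ne_zero)
    simpa using this
  have hlegm1sq : legendreSym p (-1) * legendreSym p (-1) = 1 := by
    have := legendreSym.sq_one p (a := -1) hm1
    nlinarith [this]
  -- the functions
  set fA : ℤ → ℝ := fun t => Int.fract (((t + b : ℤ) : ℝ) / p) with hfA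
  set fC : ℤ → ℝ := fun t => ((t : ℝ)) / p with hfC
  -- Step 1: the count as a sum of indicators
  have h0 : (Np p a b : ℝ) = ∑ x ∈ Finset.Icc 1 ((p-1)/2),
      (if ((x:ℤ)^2 + b) % p > (a*(x:ℤ)^2 + b) % p then (1:ℝ) else 0) := by
    rw [Np, Finset.card_filter]
    push_cast
    rfl
  -- Step 2: pointwise rewrite
  have h1 : (Np p a b : ℝ) =
      (∑ x ∈ Finset.Icc 1 ((p-1)/2), fA ((1 * (x:ℤ)^2) % p))
      - (∑ x ∈ Finset.Icc 1 ((p-1)/2), fA ((a * (x:ℤ)^2) % p))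
      + (∑ x ∈ Finset.Icc 1 ((p-1)/2), fC (((a-1) * (x:ℤ)^2) % p)) := by
    rw [h0, ← Finset.sum_sub_distrib, ← Finset.sum_add_distrib]
    apply Finset.sum_congr rfl
    intro x _
    rw [indicator_frac p (by omega) ((x:ℤ)^2 + b) (a*(x:ℤ)^2 + b)]
    have e1 : fA ((1 * (x:ℤ)^2) % p) = Int.fract ((((x:ℤ)^2 + b : ℤ):ℝ)/p) := by
      rw [hfA]
      simp only
      rw [Int.fract_div_intCast_eq_div_intCast_mod, Int.fract_div_intCast_eq_div_intCast_mod,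
        one_mul, Int.emod_add_emod]
    have e2 : fA ((a * (x:ℤ)^2) % p) = Int.fract (((a*(x:ℤ)^2 + b : ℤ):ℝ)/p) := by
      rw [hfA]
      simp only
      rw [Int.fract_div_intCast_eq_div_intCast_mod, Int.fract_div_intCast_eq_div_intCast_mod,
        Int.emod_add_emod]
    have e3 : fC (((a-1) * (x:ℤ)^2) % p) =
        Int.fract ((((a*(x:ℤ)^2 + b) - ((x:ℤ)^2 + b) : ℤ):ℝ)/p) := by
      rw [hfC]
      simp only
      rw [show (a*(x:ℤ)^2 + b) - ((x:ℤ)^2 + b) = (a-1) * (x:ℤ)^2 by ring,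
        Int.fract_div_intCast_eq_div_intCast_mod]
    rw [e1, e2, e3]
  rw [h1, sumB p hodd 1 hp1 fA, sumB p hodd a hpa fA, sumB p hodd (a-1) hpa1 fC]
  -- counting lemma: the filter for (1-a) has (p-1)/2 elements
  have hcard : ∑ z ∈ (Finset.Icc (1:ℤ) ((p:ℤ)-1)).filter
      (fun y => legendreSym p y = legendreSym p (1-a)), (1:ℝ) = ((p:ℝ) - 1)/2 := by
    rw [← sumB p hodd (1-a) hpa1' (fun _ => (1:ℝ))]
    simp only [Finset.sum_const, Nat.card_Icc, nsmul_eq_mul, mul_one]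
    have h3 : (p - 1) / 2 + 1 - 1 = (p-1)/2 := by omega
    rw [h3]
    rw [eq_div_iff (by norm_num : (2:ℝ) ≠ 0)]
    have h4 : (p-1)/2 * 2 = p - 1 := by omega
    have h5 : ((((p-1)/2 : ℕ)) : ℝ) * ((2:ℕ):ℝ) = (((p - 1 : ℕ)) : ℝ) := by
      rw [← Nat.cast_mul, h4]
    have h6 : (((p - 1 : ℕ)) : ℝ) = (p:ℝ) - 1 := by
      push_cast [Nat.cast_sub (by omega : 1 ≤ p)]
      ring
    rw [← h6]
    rw [← h5]
    norm_num
  -- relate the (a-1)-sum with the (1-a)-sum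
  have hflip : ∑ y ∈ (Finset.Icc (1:ℤ) ((p:ℤ)-1)).filter
      (fun y => legendreSym p y = legendreSym p (a-1)), fC y
      = ((p:ℝ) - 1)/2 - ∑ z ∈ (Finset.Icc (1:ℤ) ((p:ℤ)-1)).filter
          (fun z => legendreSym p z = legendreSym p (1-a)), (z:ℝ)/p := by
    have hbij : ∑ z ∈ (Finset.Icc (1:ℤ) ((p:ℤ)-1)).filter
        (fun z => legendreSym p z = legendreSym p (1-a)), fC ((p:ℤ) - z)
        = ∑ y ∈ (Finset.Icc (1:ℤ) ((p:ℤ)-1)).filter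
            (fun y => legendreSym p y = legendreSym p (a-1)), fC y := by
      apply Finset.sum_nbij' (i := fun z => (p:ℤ) - z) (j := fun y => (p:ℤ) - y)
      · intro z hz
        simp only [Finset.mem_filter, Finset.mem_Icc] at hz ⊢
        obtain ⟨⟨hz1, hz2⟩, hzl⟩ := hz
        refine ⟨⟨by omega, by omega⟩, ?_⟩
        rw [legendre_p_sub, hzl, show (1 - a : ℤ) = -1 * (a - 1) by ring, legendreSym.mul,
          ← mul_assoc, hlegm1sq, one_mul]
      · intro y hy
        simp only [Finset.mem_filter, Finset.mem_Icc] at hy ⊢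
        obtain ⟨⟨hy1, hy2⟩, hyl⟩ := hy
        refine ⟨⟨by omega, by omega⟩, ?_⟩
        rw [legendre_p_sub, hyl, show (1 - a : ℤ) = -1 * (a - 1) by ring, legendreSym.mul]
      · intro z _; ring
      · intro y _; ring
      · intro z _; rfl
    rw [← hbij]
    have : ∀ z ∈ (Finset.Icc (1:ℤ) ((p:ℤ)-1)).filter
        (fun z => legendreSym p z = legendreSym p (1-a)),
        fC ((p:ℤ) - z) = 1 - (z:ℝ)/p := by
      intro z _
      rw [hfC]
      simp only
      push_cast
      field_simp
    rw [Finset.sum_congr rfl this, Finset.sum_sub_distrib, hcard]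
  rw [hflip, hleg1]
  have hfCeq : ∀ y ∈ (Finset.Icc (1:ℤ) ((p:ℤ)-1)).filter
      (fun y => legendreSym p y = 1), fA y = Int.fract (((y + b : ℤ) : ℝ) / p) := by
    intro y _; rfl
  ring
end

section
/- Let p ≡ 1 (mod 4) be a prime and let a be an integer with p ∤ a. Then the number of x with 1 ≤ x ≤ (p-1)/2 and {x^2}_p > {a·x^2}_p equals the number of x with 1 ≤ x ≤ (p-1)/2 and {x^2}_p < {a·x^2}_p. -/
private lemma compl_lemma {p : ℕ} (hp : 0 < p) {m n : ℤ} (h : (p : ℤ) ∣ m + n)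
    (hn : ¬ (p : ℤ) ∣ n) : m % p = p - n % p := by
  have hp' : (0:ℤ) < p := by exact_mod_cast hp
  have hm : ¬ (p : ℤ) ∣ m := by
    intro hm; exact hn (by simpa using dvd_sub h hm)
  have hu0 : m % p ≠ 0 := fun h0 => hm (Int.dvd_of_emod_eq_zero h0)
  have hv0 : n % p ≠ 0 := fun h0 => hn (Int.dvd_of_emod_eq_zero h0)
  have hub : 0 ≤ m % p ∧ m % p < p := ⟨Int.emod_nonneg m (by positivity), Int.emod_lt_of_pos m hp'⟩
  have hvb : 0 ≤ n % p ∧ n % p < p := ⟨Int.emod_nonneg n (by positivity), Int.emod_lt_of_pos n hp'⟩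
  have hd : (p : ℤ) ∣ m % p + n % p := by
    have h1 : (p:ℤ) ∣ m - m % p := ⟨m / p, by rw [Int.emod_def]; ring⟩
    have h2 : (p:ℤ) ∣ n - n % p := ⟨n / p, by rw [Int.emod_def]; ring⟩
    have h3 := dvd_sub h (dvd_add h1 h2)
    have : m % ↑p + n % ↑p = m + n - (m - m % ↑p + (n - n % ↑p)) := by ring
    rw [this]; exact h3
  obtain ⟨k, hk⟩ := hd
  have hu : 0 < m % p := lt_of_le_of_ne hub.1 (Ne.symm hu0)
  have hv : 0 < n % p := lt_of_le_of_ne hvb.1 (Ne.symm hv0)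
  have hk0 : 0 < k := by nlinarith
  have hk2 : k < 2 := by nlinarith
  have hk1 : k = 1 := by omega
  rw [hk1, mul_one] at hk
  linarith

theorem stmt_18 (p : ℕ) (hp : p.Prime) (hp4 : p % 4 = 1) (a : ℤ)
    (ha : ¬ (p : ℤ) ∣ a) :
    ((Finset.Icc 1 ((p - 1) / 2)).filter
      (fun x : ℕ => ((x : ℤ) ^ 2) % p > (a * (x : ℤ) ^ 2) % p)).card
    = ((Finset.Icc 1 ((p - 1) / 2)).filter
      (fun x : ℕ => ((x : ℤ) ^ 2) % p < (a * (x : ℤ) ^ 2) % p)).card := by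
  haveI : Fact p.Prime := ⟨hp⟩
  have hp5 : 5 ≤ p := by have := hp.two_le; omega
  obtain ⟨i, hi⟩ : IsSquare (-1 : ZMod p) :=
    (ZMod.exists_sq_eq_neg_one_iff).mpr (by omega)
  have hi2 : i * i = -1 := hi.symm
  have hi0 : i ≠ 0 := by
    intro h; rw [h, mul_zero] at hi2
    have h1 : ((1:ℕ) : ZMod p) = 0 := by push_cast; linear_combination hi2
    rw [ZMod.natCast_eq_zero_iff] at h1
    exact absurd (Nat.le_of_dvd one_pos h1) (by omega)
  set q : ℕ := i.val with hqdef
  have hiq : ((q : ZMod p)) = i := by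
    rw [hqdef, ZMod.natCast_val, ZMod.cast_id]
  set f : ℕ → ℕ := fun x => if (q * x) % p ≤ (p - 1) / 2 then (q * x) % p else p - (q * x) % p
    with hfdef
  -- nonzero residues for x in range
  have hxne : ∀ x ∈ Finset.Icc 1 ((p - 1) / 2), (x : ZMod p) ≠ 0 := by
    intro x hx
    rw [Finset.mem_Icc] at hx
    rw [Ne, ZMod.natCast_eq_zero_iff]
    intro hdvd
    have := Nat.le_of_dvd (by omega) hdvd
    omega
  have hrne : ∀ x ∈ Finset.Icc 1 ((p - 1) / 2), (q * x) % p ≠ 0 := by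
    intro x hx h0
    have : ((q * x : ℕ) : ZMod p) = 0 := by
      rw [← ZMod.natCast_mod, h0, Nat.cast_zero]
    rw [Nat.cast_mul, hiq] at this
    exact (mul_ne_zero hi0 (hxne x hx)) this
  have hmemf : ∀ x ∈ Finset.Icc 1 ((p - 1) / 2), f x ∈ Finset.Icc 1 ((p - 1) / 2) := by
    intro x hx
    have h0 := hrne x hx
    have hlt : (q * x) % p < p := Nat.mod_lt _ (by omega)
    rw [hfdef]
    simp only [Finset.mem_Icc]
    split <;> omega
  have hcast : ∀ x, ((f x : ZMod p) = i * x ∨ (f x : ZMod p) = -(i * x)) := by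
    intro x
    rw [hfdef]
    simp only
    split
    · left; rw [ZMod.natCast_mod, Nat.cast_mul, hiq]
    · right
      have hlt : (q * x) % p < p := Nat.mod_lt _ (by omega)
      rw [Nat.cast_sub hlt.le, ZMod.natCast_self, zero_sub, ZMod.natCast_mod,
        Nat.cast_mul, hiq]
  -- squares are negated
  have hsqdvd : ∀ x : ℕ, (p : ℤ) ∣ ((f x : ℤ) ^ 2 + (x : ℤ) ^ 2) := by
    intro x
    rw [← ZMod.intCast_zmod_eq_zero_iff_dvd]
    push_cast
    rcases hcast x with h | h <;> rw [h] <;> ring_nf <;>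
      rw [show (i:ZMod p)^2 = -1 by rw [sq]; exact hi2] <;> ring
  have hsqadvd : ∀ x : ℕ, (p : ℤ) ∣ (a * (f x : ℤ) ^ 2 + a * (x : ℤ) ^ 2) := by
    intro x
    have := hsqdvd x
    have : (p:ℤ) ∣ a * ((f x : ℤ) ^ 2 + (x : ℤ) ^ 2) := Dvd.dvd.mul_left this a
    convert this using 1; ring
  have hxsqnd : ∀ x ∈ Finset.Icc 1 ((p - 1) / 2), ¬ (p : ℤ) ∣ (x : ℤ) ^ 2 := by
    intro x hx hdvd
    rw [← ZMod.intCast_zmod_eq_zero_iff_dvd] at hdvd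
    push_cast at hdvd
    exact pow_ne_zero 2 (hxne x hx) hdvd
  have haxsqnd : ∀ x ∈ Finset.Icc 1 ((p - 1) / 2), ¬ (p : ℤ) ∣ a * (x : ℤ) ^ 2 := by
    intro x hx hdvd
    rcases (Int.Prime.dvd_mul' (by exact_mod_cast hp) hdvd) with h | h
    · exact ha h
    · exact hxsqnd x hx h
  have hkey : ∀ x ∈ Finset.Icc 1 ((p - 1) / 2),
      ((f x : ℤ) ^ 2) % p = p - ((x : ℤ) ^ 2) % p ∧
      (a * (f x : ℤ) ^ 2) % p = p - (a * (x : ℤ) ^ 2) % p := by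
    intro x hx
    exact ⟨compl_lemma hp.pos (hsqdvd x) (hxsqnd x hx),
      compl_lemma hp.pos (hsqadvd x) (haxsqnd x hx)⟩
  -- uniqueness
  have huniq : ∀ n m : ℕ, n ∈ Finset.Icc 1 ((p - 1) / 2) → m ∈ Finset.Icc 1 ((p - 1) / 2) →
      ((n : ZMod p) = m ∨ (n : ZMod p) = -m) → n = m := by
    intro n m hn hm h
    rw [Finset.mem_Icc] at hn hm
    rcases h with h | h
    · have := congrArg ZMod.val h
      rwa [ZMod.val_cast_of_lt (by omega), ZMod.val_cast_of_lt (by omega)] at this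
    · exfalso
      have : ((n + m : ℕ) : ZMod p) = 0 := by push_cast; rw [h]; ring
      rw [ZMod.natCast_eq_zero_iff] at this
      have := Nat.le_of_dvd (by omega) this
      omega
  have hinv : ∀ x ∈ Finset.Icc 1 ((p - 1) / 2), f (f x) = x := by
    intro x hx
    apply huniq _ _ (hmemf _ (hmemf x hx)) hx
    rcases hcast (f x) with h1 | h1 <;> rcases hcast x with h2 | h2 <;>
      rw [h1, h2] <;>
      [right; left; left; right] <;>
      · ring_nf
        rw [show (i:ZMod p)^2 = -1 by rw [sq]; exact hi2] <;> ring
  -- the condition flips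
  have hcond : ∀ x ∈ Finset.Icc 1 ((p - 1) / 2),
      ((((f x : ℕ) : ℤ) ^ 2) % p < (a * ((f x : ℕ) : ℤ) ^ 2) % p ↔
        ((x : ℤ) ^ 2) % p > (a * (x : ℤ) ^ 2) % p) := by
    intro x hx
    obtain ⟨h1, h2⟩ := hkey x hx
    rw [h1, h2]
    constructor <;> intro h <;> [skip; skip] <;> simp only [gt_iff_lt] at * <;> linarith
  apply Finset.card_bij' (fun x _ => f x) (fun x _ => f x)
  · intro x hx
    rw [Finset.mem_filter] at hx ⊢
    exact ⟨hmemf x hx.1, (hcond x hx.1).mpr hx.2⟩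
  · intro x hx
    rw [Finset.mem_filter] at hx ⊢
    refine ⟨hmemf x hx.1, ?_⟩
    obtain ⟨h1, h2⟩ := hkey x hx.1
    have hx2 := hx.2
    simp only [gt_iff_lt] at hx2 ⊢
    rw [h1, h2]
    linarith
  · intro x hx; exact hinv x (Finset.mem_filter.mp hx).1
  · intro x hx; exact hinv x (Finset.mem_filter.mp hx).1
end

section
/- Let n be a positive odd integer and let a be an integer with gcd(a(1-a), n) = 1. Then (-1)^{|{1 ≤ k ≤ (n-1)/2 : {ka}_n > k}|} = (2a(1-a)/n), where (·/n) is the Jacobi symbol. -/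
open Finset

namespace Stmt19Aux

/-- Gauss-lemma count: number of `k ∈ [1,(n-1)/2]` with `{kc}_n > n/2`. -/
def G (n : ℕ) (c : ℤ) : ℕ :=
  ((Finset.Icc 1 ((n - 1) / 2)).filter fun k : ℕ => (n : ℤ) < 2 * (((k : ℤ) * c) % n)).card

/-- folding map -/
def fold (n : ℕ) (c : ℤ) (k : ℕ) : ℕ :=
  if 2 * (((k : ℤ) * c) % n) < n then (((k : ℤ) * c) % n).toNat
  else ((n : ℤ) - ((k : ℤ) * c) % n).toNat

lemma mem_Icc1M {n k : ℕ} (hn : Odd n) : k ∈ Finset.Icc 1 ((n - 1) / 2) ↔ 1 ≤ k ∧ 2 * k < n := by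
  obtain ⟨t, ht⟩ := hn
  simp only [Finset.mem_Icc]
  omega

lemma emod_pos {n : ℕ} (hpos : 0 < n) {c : ℤ} (hc : IsCoprime c (n : ℤ)) {k : ℕ}
    (h1 : 1 ≤ k) (h2 : k < n) : 0 < ((k : ℤ) * c) % n ∧ ((k : ℤ) * c) % n < n := by
  have hn0 : (n : ℤ) ≠ 0 := by exact_mod_cast hpos.ne'
  have hnn := Int.emod_nonneg ((k : ℤ) * c) hn0
  have hlt := Int.emod_lt_of_pos ((k : ℤ) * c) (show (0:ℤ) < (n:ℤ) by exact_mod_cast hpos)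
  refine ⟨?_, hlt⟩
  rcases hnn.lt_or_eq with h | h
  · exact h
  · exfalso
    have hdvd : (n : ℤ) ∣ (k : ℤ) * c := Int.dvd_of_emod_eq_zero h.symm
    have hd2 : (n : ℤ) ∣ (k : ℤ) := hc.symm.dvd_of_dvd_mul_right hdvd
    have hd3 : (n : ℕ) ∣ k := by exact_mod_cast hd2
    have := Nat.le_of_dvd (by omega) hd3
    omega

lemma fold_mem {n : ℕ} (hn : Odd n) (hpos : 0 < n) {c : ℤ} (hc : IsCoprime c (n : ℤ)) {k : ℕ}
    (hk : k ∈ Finset.Icc 1 ((n - 1) / 2)) : fold n c k ∈ Finset.Icc 1 ((n - 1) / 2) := by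
  rw [mem_Icc1M hn] at hk ⊢
  obtain ⟨hr0, hrn⟩ := emod_pos hpos hc hk.1 (by omega)
  obtain ⟨t, ht⟩ := hn
  unfold fold
  split_ifs with h
  · constructor <;> omega
  · constructor <;> omega

lemma fold_congr {n : ℕ} {c c' : ℤ} (h : c % n = c' % n) (k : ℕ) : fold n c k = fold n c' k := by
  have : ((k : ℤ) * c) % n = ((k : ℤ) * c') % n := by
    rw [Int.mul_emod, h, ← Int.mul_emod]
  unfold fold
  rw [this]

lemma G_congr {n : ℕ} {c c' : ℤ} (h : c % n = c' % n) : G n c = G n c' := by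
  unfold G
  congr 1
  apply Finset.filter_congr
  intro k _
  have : ((k : ℤ) * c) % n = ((k : ℤ) * c') % n := by
    rw [Int.mul_emod, h, ← Int.mul_emod]
  rw [this]

lemma fold_one {n : ℕ} (hn : Odd n) {k : ℕ} (hk : k ∈ Finset.Icc 1 ((n - 1) / 2)) :
    fold n 1 k = k := by
  rw [mem_Icc1M hn] at hk
  have h1 : ((k : ℤ) * 1) % n = k := by
    rw [mul_one, Int.emod_eq_of_lt (by positivity) (by exact_mod_cast hk.2.le.trans' (by omega))]
  unfold fold
  rw [h1]
  rw [if_pos (by exact_mod_cast hk.2)]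
  simp


lemma emod_mul_aux {n : ℕ} (x y : ℤ) : (x % n * y) % n = (x * y) % n := by
  rw [Int.mul_emod (x % n) y, Int.emod_emod_of_dvd _ dvd_rfl, ← Int.mul_emod]

lemma neg_emod_eq {n : ℕ} (x : ℤ) (h : 0 < x % n) : (-x) % n = (n : ℤ) - x % n := by
  rcases Nat.eq_zero_or_pos n with h0 | h0
  · subst h0; simp
  have hn : (0:ℤ) < n := by exact_mod_cast h0
  have hlt := Int.emod_lt_of_pos x hn
  have hmod : Int.ModEq n (-x) ((n : ℤ) - x % n) :=
    Int.modEq_iff_dvd.mpr ⟨1 + x / n, by linarith [Int.mul_ediv_add_emod x (n : ℤ)]⟩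
  rw [Int.ModEq] at hmod
  rw [hmod, Int.emod_eq_of_lt (by omega) (by omega)]

lemma fold_def (n : ℕ) (c : ℤ) (k : ℕ) :
    fold n c k = if 2 * (((k : ℤ) * c) % n) < n then (((k : ℤ) * c) % n).toNat
      else ((n : ℤ) - ((k : ℤ) * c) % n).toNat := rfl

lemma fold_fold {n : ℕ} (hn : Odd n) (hpos : 0 < n) {c d : ℤ} (hc : IsCoprime c (n : ℤ))
    (hd : IsCoprime d (n : ℤ)) {k : ℕ} (hk : k ∈ Finset.Icc 1 ((n - 1) / 2)) :
    fold n d (fold n c k) = fold n (c * d) k := by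
  obtain ⟨t, ht⟩ := hn
  rw [mem_Icc1M ⟨t, ht⟩] at hk
  obtain ⟨hr0, hrn⟩ := emod_pos hpos hc hk.1 (by omega)
  obtain ⟨hs0, hsn⟩ := emod_pos hpos (hc.mul_left hd) hk.1 (by omega)
  have hassoc : ((k : ℤ) * c) * d = (k : ℤ) * (c * d) := by ring
  by_cases h : 2 * (((k : ℤ) * c) % n) < n
  · have hfold : fold n c k = (((k : ℤ) * c) % n).toNat := if_pos h
    have key : ((fold n c k : ℤ) * d) % n = ((k : ℤ) * (c * d)) % n := by
      rw [hfold, Int.toNat_of_nonneg hr0.le, emod_mul_aux, hassoc]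
    rw [fold_def n d, fold_def n (c*d), key]
  · have hfold : fold n c k = ((n : ℤ) - ((k : ℤ) * c) % n).toNat := if_neg h
    have key : ((fold n c k : ℤ) * d) % n = (n : ℤ) - ((k : ℤ) * (c * d)) % n := by
      rw [hfold, Int.toNat_of_nonneg (by omega : (0:ℤ) ≤ (n : ℤ) - ((k : ℤ) * c) % n)]
      have e1 : ((n : ℤ) - ((k : ℤ) * c) % n) * d = -(((k : ℤ) * c) % n * d) + (n : ℤ) * d := by
        ring
      rw [e1, Int.add_mul_emod_self_left, neg_emod_eq, emod_mul_aux, hassoc]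
      rw [emod_mul_aux, hassoc]
      exact hs0
    rw [fold_def n d, fold_def n (c*d), key]
    have hcast : (n : ℤ) = 2 * (t : ℤ) + 1 := by exact_mod_cast congrArg (Nat.cast : ℕ → ℤ) ht
    split_ifs <;> omega


lemma exists_inv {n : ℕ} {c : ℤ} (hc : IsCoprime c (n : ℤ)) :
    ∃ u : ℤ, IsCoprime u (n : ℤ) ∧ (c * u) % n = 1 % n ∧ (u * c) % n = 1 % n := by
  obtain ⟨a, b, h⟩ := hc
  refine ⟨a, ⟨c, b, by linear_combination h⟩, ?_, ?_⟩
  · exact Int.modEq_iff_dvd.mpr ⟨b, by linear_combination -h⟩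
  · exact Int.modEq_iff_dvd.mpr ⟨b, by linear_combination -h⟩

lemma sum_fold_reindex {n : ℕ} (hn : Odd n) (hpos : 0 < n) {c : ℤ} (hc : IsCoprime c (n : ℤ))
    {β : Type*} [AddCommMonoid β] (f : ℕ → β) :
    ∑ k ∈ Finset.Icc 1 ((n - 1) / 2), f (fold n c k) = ∑ j ∈ Finset.Icc 1 ((n - 1) / 2), f j := by
  obtain ⟨u, hu, hcu, huc⟩ := exists_inv hc
  refine Finset.sum_nbij' (fold n c) (fold n u) (fun k hk => fold_mem hn hpos hc hk)
    (fun j hj => fold_mem hn hpos hu hj) ?_ ?_ (fun k hk => rfl)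
  · intro k hk
    rw [fold_fold hn hpos hc hu hk, fold_congr hcu k, fold_one hn hk]
  · intro j hj
    rw [fold_fold hn hpos hu hc hj, fold_congr huc j, fold_one hn hj]

lemma ind_mul_point {n : ℕ} (hn : Odd n) (hpos : 0 < n) {c d : ℤ} (hc : IsCoprime c (n : ℤ))
    (hd : IsCoprime d (n : ℤ)) {k : ℕ} (hk : k ∈ Finset.Icc 1 ((n - 1) / 2)) :
    (if (n : ℤ) < 2 * (((k : ℤ) * (c * d)) % n) then (1 : ZMod 2) else 0)
      = (if (n : ℤ) < 2 * (((k : ℤ) * c) % n) then (1 : ZMod 2) else 0)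
        + (if (n : ℤ) < 2 * (((fold n c k : ℤ) * d) % n) then (1 : ZMod 2) else 0) := by
  obtain ⟨t, ht⟩ := hn
  rw [mem_Icc1M ⟨t, ht⟩] at hk
  have hcast : (n : ℤ) = 2 * (t : ℤ) + 1 := by exact_mod_cast congrArg (Nat.cast : ℕ → ℤ) ht
  obtain ⟨hr0, hrn⟩ := emod_pos hpos hc hk.1 (by omega)
  obtain ⟨hs0, hsn⟩ := emod_pos hpos (hc.mul_left hd) hk.1 (by omega)
  have hassoc : ((k : ℤ) * c) * d = (k : ℤ) * (c * d) := by ring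
  by_cases h : 2 * (((k : ℤ) * c) % n) < n
  · have hfold : fold n c k = (((k : ℤ) * c) % n).toNat := if_pos h
    have key : ((fold n c k : ℤ) * d) % n = ((k : ℤ) * (c * d)) % n := by
      rw [hfold, Int.toNat_of_nonneg hr0.le, emod_mul_aux, hassoc]
    rw [key, if_neg (show ¬ (n : ℤ) < 2 * (((k : ℤ) * c) % n) by omega), zero_add]
  · have hfold : fold n c k = ((n : ℤ) - ((k : ℤ) * c) % n).toNat := if_neg h
    have key : ((fold n c k : ℤ) * d) % n = (n : ℤ) - ((k : ℤ) * (c * d)) % n := by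
      rw [hfold, Int.toNat_of_nonneg (by omega : (0:ℤ) ≤ (n : ℤ) - ((k : ℤ) * c) % n)]
      have e1 : ((n : ℤ) - ((k : ℤ) * c) % n) * d = -(((k : ℤ) * c) % n * d) + (n : ℤ) * d := by
        ring
      rw [e1, Int.add_mul_emod_self_left, neg_emod_eq, emod_mul_aux, hassoc]
      rw [emod_mul_aux, hassoc]
      exact hs0
    rw [key, if_pos (show (n : ℤ) < 2 * (((k : ℤ) * c) % n) by omega)]
    by_cases h2 : 2 * (((k : ℤ) * (c * d)) % n) < n
    · rw [if_neg (show ¬ (n : ℤ) < 2 * (((k : ℤ) * (c * d)) % n) by omega),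
        if_pos (show (n : ℤ) < 2 * ((n : ℤ) - ((k : ℤ) * (c * d)) % n) by omega)]
      decide
    · rw [if_pos (show (n : ℤ) < 2 * (((k : ℤ) * (c * d)) % n) by omega),
        if_neg (show ¬ (n : ℤ) < 2 * ((n : ℤ) - ((k : ℤ) * (c * d)) % n) by omega)]
      decide

lemma G_mul {n : ℕ} (hn : Odd n) (hpos : 0 < n) {c d : ℤ} (hc : IsCoprime c (n : ℤ))
    (hd : IsCoprime d (n : ℤ)) :
    (G n (c * d) : ZMod 2) = (G n c : ZMod 2) + (G n d : ZMod 2) := by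
  unfold G
  rw [Finset.card_filter, Finset.card_filter, Finset.card_filter]
  push_cast
  rw [← sum_fold_reindex hn hpos hc
    (f := fun j => if (n : ℤ) < 2 * (((j : ℤ) * d) % n) then (1 : ZMod 2) else 0),
    ← Finset.sum_add_distrib]
  refine Finset.sum_congr rfl fun k hk => ?_
  exact ind_mul_point hn hpos hc hd hk


lemma natCast_odd_zmod2 {n : ℕ} (hn : Odd n) : (n : ZMod 2) = 1 := by
  rw [← ZMod.natCast_mod n 2, Nat.odd_iff.mp hn, Nat.cast_one]

lemma intCast_odd_zmod2 {n : ℕ} (hn : Odd n) : (((n : ℤ)) : ZMod 2) = 1 := by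
  rw [Int.cast_natCast]
  exact natCast_odd_zmod2 hn

lemma two_zmod2 : (2 : ZMod 2) = 0 := by decide

lemma natCast_toNat_zmod2 {r : ℤ} (hr : 0 ≤ r) : ((r.toNat : ℕ) : ZMod 2) = ((r : ℤ) : ZMod 2) := by
  rw [← Int.cast_natCast (R := ZMod 2), Int.toNat_of_nonneg hr]

/-- parity of the sum of residues -/
lemma sum_emod_parity {n : ℕ} (hn : Odd n) (hpos : 0 < n) {c : ℤ} (hc : IsCoprime c (n : ℤ)) :
    ((∑ k ∈ Finset.Icc 1 ((n - 1) / 2), ((k : ℤ) * c) % n : ℤ) : ZMod 2)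
      = ((∑ k ∈ Finset.Icc 1 ((n - 1) / 2), (k : ℤ) : ℤ) : ZMod 2) + (G n c : ZMod 2) := by
  unfold G
  rw [Finset.card_filter]
  have hTT : ((∑ k ∈ Finset.Icc 1 ((n - 1) / 2), (k : ℤ) : ℤ) : ZMod 2)
      = ∑ k ∈ Finset.Icc 1 ((n - 1) / 2), ((k : ℕ) : ZMod 2) := by
    push_cast
    rfl
  rw [hTT, Int.cast_sum, Nat.cast_sum]
  rw [← sum_fold_reindex hn hpos hc (f := fun j => ((j : ℕ) : ZMod 2)), ← Finset.sum_add_distrib]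
  refine Finset.sum_congr rfl fun k hk => ?_
  rw [apply_ite (fun x : ℕ => (x : ZMod 2)), Nat.cast_one, Nat.cast_zero]
  obtain ⟨t, ht⟩ := hn
  rw [mem_Icc1M ⟨t, ht⟩] at hk
  have hcast : (n : ℤ) = 2 * (t : ℤ) + 1 := by exact_mod_cast congrArg (Nat.cast : ℕ → ℤ) ht
  obtain ⟨hr0, hrn⟩ := emod_pos hpos hc hk.1 (by omega)
  have hn2 : (((n : ℤ)) : ZMod 2) = 1 := intCast_odd_zmod2 ⟨t, ht⟩
  by_cases h : 2 * (((k : ℤ) * c) % n) < n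
  · have hfold : fold n c k = (((k : ℤ) * c) % n).toNat := if_pos h
    rw [if_neg (show ¬ (n : ℤ) < 2 * (((k : ℤ) * c) % n) by omega), add_zero, hfold,
      natCast_toNat_zmod2 hr0.le]
  · have hfold : fold n c k = ((n : ℤ) - ((k : ℤ) * c) % n).toNat := if_neg h
    rw [if_pos (show (n : ℤ) < 2 * (((k : ℤ) * c) % n) by omega), hfold,
      natCast_toNat_zmod2 (by omega : (0:ℤ) ≤ (n : ℤ) - ((k : ℤ) * c) % n), Int.cast_sub, hn2]
    linear_combination (((((k : ℤ) * c % (n : ℤ)) : ℤ) : ZMod 2) - 1) * two_zmod2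

/-- parity of the sum of floors -/
lemma sum_ediv_parity {n : ℕ} (hn : Odd n) (hpos : 0 < n) {c : ℤ} (hc : IsCoprime c (n : ℤ)) :
    ((∑ k ∈ Finset.Icc 1 ((n - 1) / 2), ((k : ℤ) * c) / n : ℤ) : ZMod 2)
      = ((c : ZMod 2) + 1) * ((∑ k ∈ Finset.Icc 1 ((n - 1) / 2), (k : ℤ) : ℤ) : ZMod 2)
        + (G n c : ZMod 2) := by
  have hsplit : (∑ k ∈ Finset.Icc 1 ((n - 1) / 2), ((k : ℤ) * c) : ℤ)
      = (n : ℤ) * (∑ k ∈ Finset.Icc 1 ((n - 1) / 2), ((k : ℤ) * c) / n)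
        + ∑ k ∈ Finset.Icc 1 ((n - 1) / 2), ((k : ℤ) * c) % n := by
    rw [Finset.mul_sum, ← Finset.sum_add_distrib]
    exact Finset.sum_congr rfl fun k _ => (Int.mul_ediv_add_emod _ _).symm
  have hmul : (∑ k ∈ Finset.Icc 1 ((n - 1) / 2), ((k : ℤ) * c) : ℤ)
      = (∑ k ∈ Finset.Icc 1 ((n - 1) / 2), (k : ℤ)) * c := by
    rw [← Finset.sum_mul]
  rw [hmul] at hsplit
  have hE := congrArg (fun x : ℤ => (x : ZMod 2)) hsplit
  simp only [Int.cast_add, Int.cast_mul, intCast_odd_zmod2 hn, one_mul] at hE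
  rw [sum_emod_parity hn hpos hc] at hE
  linear_combination -hE - (((∑ k ∈ Finset.Icc 1 ((n - 1) / 2), (k : ℤ) : ℤ) : ZMod 2)
    + (G n c : ZMod 2)) * two_zmod2


lemma G_two {n : ℕ} (hn : Odd n) (hpos : 0 < n) : ((-1 : ℤ)) ^ G n 2 = jacobiSym 2 n := by
  obtain ⟨t, ht⟩ := hn
  have hG : G n 2 = (n - 1) / 2 - n / 4 := by
    unfold G
    rw [Finset.filter_congr (fun k hk => ?_ :
      ∀ k ∈ Finset.Icc 1 ((n - 1) / 2), ((n : ℤ) < 2 * (((k : ℤ) * 2) % n) ↔ n < 4 * k))]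
    · rw [show (Finset.Icc 1 ((n - 1) / 2)).filter (fun k : ℕ => n < 4 * k)
          = Finset.Icc (n / 4 + 1) ((n - 1) / 2) from by
        ext k
        simp only [Finset.mem_filter, Finset.mem_Icc]
        omega]
      rw [Nat.card_Icc]
      omega
    · rw [mem_Icc1M ⟨t, ht⟩] at hk
      have h2k : ((k : ℤ) * 2) % n = 2 * k := by
        rw [Int.emod_eq_of_lt (by positivity) (by exact_mod_cast (by omega : k * 2 < n))]
        ring
      rw [h2k]
      omega
  rw [hG, jacobiSym.at_two ⟨t, ht⟩, ZMod.χ₈_nat_eq_if_mod_eight,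
    if_neg (by omega : ¬ n % 2 = 0)]
  have h8 : n % 8 = 1 ∨ n % 8 = 3 ∨ n % 8 = 5 ∨ n % 8 = 7 := by omega
  rcases h8 with h | h | h | h
  · rw [if_pos (by omega), Even.neg_one_pow (by rw [Nat.even_iff]; omega)]
  · rw [if_neg (by omega), Odd.neg_one_pow (by rw [Nat.odd_iff]; omega)]
  · rw [if_neg (by omega), Odd.neg_one_pow (by rw [Nat.odd_iff]; omega)]
  · rw [if_pos (by omega), Even.neg_one_pow (by rw [Nat.even_iff]; omega)]


lemma zmod2_to_mod {x y : ℕ} (h : (x : ZMod 2) = (y : ZMod 2)) : x % 2 = y % 2 :=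
  (ZMod.natCast_eq_natCast_iff' x y 2).mp h

lemma neg_one_pow_congr {x y : ℕ} (h : x % 2 = y % 2) : ((-1 : ℤ)) ^ x = (-1) ^ y := by
  conv_lhs => rw [← Nat.div_add_mod x 2]
  conv_rhs => rw [← Nat.div_add_mod y 2]
  rw [pow_add, pow_add, pow_mul, pow_mul, neg_one_sq, one_pow, one_pow, one_mul, one_mul, h]

lemma coprime_nat_int {q n : ℕ} (h : Nat.Coprime q n) : IsCoprime ((q : ℤ)) ((n : ℤ)) := by
  rw [Int.isCoprime_iff_gcd_eq_one, Int.gcd_natCast_natCast]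
  exact h

lemma G_odd_prime {n : ℕ} (hn : Odd n) (hpos : 0 < n) {q : ℕ} (hq : q.Prime) (hq2 : q ≠ 2)
    (hqn : ¬ q ∣ n) : ((-1 : ℤ)) ^ G n (q : ℤ) = jacobiSym (q : ℤ) n := by
  haveI : Fact q.Prime := ⟨hq⟩
  have hqcop : Nat.Coprime q n := (Nat.Prime.coprime_iff_not_dvd hq).mpr hqn
  have hcop : IsCoprime ((q : ℤ)) ((n : ℤ)) := coprime_nat_int hqcop
  have hq_odd : Odd q := hq.odd_of_ne_two hq2
  have hpar := sum_ediv_parity hn hpos hcop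
  rw [intCast_odd_zmod2 hq_odd, show ((1 : ZMod 2) + 1) = 0 from by decide, zero_mul,
    zero_add] at hpar
  have hdiv : (∑ k ∈ Finset.Icc 1 ((n - 1) / 2), ((k : ℤ) * (q : ℤ)) / (n : ℤ))
      = ((∑ k ∈ Finset.Icc 1 ((n - 1) / 2), k * q / n : ℕ) : ℤ) := by
    push_cast
    rfl
  rw [hdiv, Int.cast_natCast] at hpar
  have hG2 := zmod2_to_mod hpar
  have hNo : (n : ZMod q) ≠ 0 := by
    rw [Ne, ZMod.natCast_eq_zero_iff]
    exact hqn
  have hrec := ZMod.sum_mul_div_add_sum_mul_div_eq_mul q n hNo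
  have heis := ZMod.eisenstein_lemma hq2 (Nat.odd_iff.mp hn) hNo
  have hIco : Finset.Ico 1 ((n / 2).succ) = Finset.Icc 1 ((n - 1) / 2) := by
    rw [Nat.succ_eq_add_one, Finset.Ico_add_one_right_eq_Icc, show n / 2 = (n - 1) / 2 from by obtain ⟨t, ht⟩ := hn; omega]
  rw [hIco] at hrec
  have hqq : jacobiSym (q : ℤ) n = (-1) ^ (q / 2 * (n / 2)) * legendreSym q (n : ℤ) := by
    rw [jacobiSym.legendreSym.to_jacobiSym]
    exact jacobiSym.quadratic_reciprocity hq_odd hn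
  rw [hqq, heis, ← pow_add]
  exact neg_one_pow_congr (by omega)


lemma G_one {n : ℕ} (hn : Odd n) (hpos : 0 < n) : G n 1 = 0 := by
  unfold G
  rw [Finset.card_eq_zero, Finset.filter_eq_empty_iff]
  intro k hk
  rw [mem_Icc1M hn] at hk
  have hk2 : ((k : ℤ) * 1) % n = k := by
    rw [mul_one, Int.emod_eq_of_lt (by positivity) (by exact_mod_cast (by omega : k < n))]
  rw [hk2]
  omega

lemma jenkins_nat {n : ℕ} (hn : Odd n) (hpos : 0 < n) :
    ∀ c : ℕ, Nat.Coprime c n → ((-1 : ℤ)) ^ G n (c : ℤ) = jacobiSym (c : ℤ) n := by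
  intro c
  induction c using Nat.strong_induction_on with
  | _ c ih =>
    intro hco
    rcases Nat.lt_or_ge c 2 with hc2 | hc2
    · interval_cases c
      · have hn1 : n = 1 := by simpa [Nat.coprime_zero_left] using hco
        subst hn1
        simp [G, jacobiSym.one_right]
      · rw [Nat.cast_one, G_one hn hpos, pow_zero, jacobiSym.one_left]
    · set q := c.minFac with hqdef
      have hq : q.Prime := Nat.minFac_prime (by omega)
      have hqd : q ∣ c := Nat.minFac_dvd c
      obtain ⟨d, hd⟩ := hqd
      have hq2 : 2 ≤ q := hq.two_le
      have hdlt : d < c := by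
        rcases Nat.eq_zero_or_pos d with h0 | h0
        · omega
        · calc d < q * d := by nlinarith
            _ = c := hd.symm
      have hdco : Nat.Coprime d n := Nat.Coprime.coprime_dvd_left ⟨q, by rw [hd, mul_comm]⟩ hco
      have hqco : Nat.Coprime q n := Nat.Coprime.coprime_dvd_left ⟨d, hd⟩ hco
      have hGm := G_mul hn hpos (coprime_nat_int hqco) (coprime_nat_int hdco)
      have hcast : (c : ℤ) = (q : ℤ) * (d : ℤ) := by exact_mod_cast congrArg (Nat.cast : ℕ → ℤ) hd
      have hsplit : ((-1 : ℤ)) ^ G n (c : ℤ) = (-1) ^ G n (q : ℤ) * (-1) ^ G n (d : ℤ) := by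
        rw [← pow_add]
        refine neg_one_pow_congr (zmod2_to_mod ?_)
        rw [hcast]
        push_cast [hGm]
        ring
      rw [hsplit, hcast, jacobiSym.mul_left]
      congr 1
      · rcases eq_or_ne q 2 with h2 | h2
        · rw [h2]
          exact_mod_cast G_two hn hpos
        · exact G_odd_prime hn hpos hq h2 ((Nat.Prime.coprime_iff_not_dvd hq).mp hqco)
      · exact ih d hdlt hdco

lemma jenkins {n : ℕ} (hn : Odd n) (hpos : 0 < n) {c : ℤ} (hc : IsCoprime c (n : ℤ)) :
    ((-1 : ℤ)) ^ G n c = jacobiSym c n := by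
  have hn0 : ((n : ℤ)) ≠ 0 := by exact_mod_cast hpos.ne'
  set c' := (c % n).toNat with hc'def
  have hc' : ((c' : ℕ) : ℤ) = c % n := Int.toNat_of_nonneg (Int.emod_nonneg c hn0)
  have hGc : G n c = G n (c' : ℤ) := by
    refine G_congr ?_
    rw [hc', Int.emod_emod_of_dvd _ dvd_rfl]
  have hcop' : IsCoprime ((c' : ℤ)) ((n : ℤ)) := by
    rw [hc', Int.emod_def, sub_eq_add_neg, ← mul_neg]
    exact hc.add_mul_left_left _
  have hcopn : Nat.Coprime c' n := by
    have := Int.isCoprime_iff_gcd_eq_one.mp hcop'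
    rwa [Int.gcd_natCast_natCast] at this
  rw [hGc, jenkins_nat hn hpos c' hcopn, jacobiSym.mod_left c n, ← hc']


lemma point_aux {n : ℕ} {k x y q1 q0 r1 r0 : ℤ} (hn : 0 < n)
    (hx : x = (n : ℤ) * q1 + r1) (hy : y = (n : ℤ) * q0 + r0) (hxy : x - y = k)
    (hr1 : 0 ≤ r1) (hr1' : r1 < n) (hr0 : 0 < r0) (hr0' : r0 < n)
    (hk1 : 1 ≤ k) (hk2 : 2 * k < n) :
    (if r1 > k then (1 : ℤ) else 0) = 1 - (q1 - q0) := by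
  have hN : (0 : ℤ) < n := by exact_mod_cast hn
  have heq : (n : ℤ) * (q1 - q0) = k - r1 + r0 := by linear_combination -hx + hy + hxy
  have hlb : (-1 : ℤ) < q1 - q0 := by
    by_contra hcon
    push_neg at hcon
    nlinarith
  have hub : q1 - q0 < 2 := by
    by_contra hcon
    push_neg at hcon
    nlinarith
  have he : q1 - q0 = 0 ∨ q1 - q0 = 1 := by omega
  rcases he with he | he
  · rw [he, mul_zero] at heq
    split_ifs with h <;> omega
  · rw [he, mul_one] at heq
    split_ifs with h <;> omega

lemma count_eq {n : ℕ} (hn : Odd n) (hpos : 0 < n) {a : ℤ} (hA : IsCoprime a (n : ℤ))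
    (hA1 : IsCoprime (a - 1) (n : ℤ)) :
    ((((Finset.Icc 1 ((n - 1) / 2)).filter
        (fun k : ℕ => ((k : ℤ) * a) % n > (k : ℤ))).card : ℤ))
      = (((n - 1) / 2 : ℕ) : ℤ) - (∑ k ∈ Finset.Icc 1 ((n - 1) / 2), ((k : ℤ) * a) / n)
        + ∑ k ∈ Finset.Icc 1 ((n - 1) / 2), ((k : ℤ) * (a - 1)) / n := by
  rw [Finset.card_filter, Nat.cast_sum]
  simp only [apply_ite (fun x : ℕ => (x : ℤ)), Nat.cast_one, Nat.cast_zero]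
  rw [show ∀ z w v : ℤ, z - w + v = z - (w - v) from fun z w v => by ring]
  rw [← Finset.sum_sub_distrib]
  have hM : (((n - 1) / 2 : ℕ) : ℤ) = ∑ _k ∈ Finset.Icc 1 ((n - 1) / 2), (1 : ℤ) := by
    rw [Finset.sum_const, Nat.card_Icc]
    simp
  rw [hM, ← Finset.sum_sub_distrib]
  refine Finset.sum_congr rfl fun k hk => ?_
  rw [mem_Icc1M hn] at hk
  have hx := (Int.mul_ediv_add_emod ((k : ℤ) * a) n).symm
  have hy := (Int.mul_ediv_add_emod ((k : ℤ) * (a - 1)) n).symm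
  have hr1 : (0 : ℤ) ≤ ((k : ℤ) * a) % n := Int.emod_nonneg _ (by exact_mod_cast hpos.ne')
  have hr1' : ((k : ℤ) * a) % n < n :=
    Int.emod_lt_of_pos _ (show (0:ℤ) < (n:ℤ) by exact_mod_cast hpos)
  obtain ⟨hr0, hr0'⟩ := emod_pos hpos hA1 hk.1 (by omega)
  have hxy : (k : ℤ) * a - (k : ℤ) * (a - 1) = (k : ℤ) := by ring
  exact point_aux hpos hx hy hxy hr1 hr1' hr0 hr0' (by exact_mod_cast hk.1)
    (by exact_mod_cast hk.2)

lemma T_mod4 (M : ℕ) :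
    (∑ k ∈ Finset.Icc 1 M, k) % 2 = if M % 4 = 1 ∨ M % 4 = 2 then 1 else 0 := by
  induction M with
  | zero => simp
  | succ m ih =>
    rw [Finset.sum_Icc_succ_top (by omega : 1 ≤ m + 1)]
    split_ifs at ih ⊢ <;> omega

lemma neg_one_pow_T_eq_chi8 {n : ℕ} (hn : Odd n) :
    ((-1 : ℤ)) ^ (∑ k ∈ Finset.Icc 1 ((n - 1) / 2), k) = ZMod.χ₈ n := by
  have hT := T_mod4 ((n - 1) / 2)
  obtain ⟨t, ht⟩ := hn
  rw [ZMod.χ₈_nat_eq_if_mod_eight, if_neg (by omega : ¬ n % 2 = 0)]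
  have h8 : n % 8 = 1 ∨ n % 8 = 3 ∨ n % 8 = 5 ∨ n % 8 = 7 := by omega
  rcases h8 with h | h | h | h
  · rw [if_pos (by omega)]
    apply Even.neg_one_pow
    rw [Nat.even_iff]
    split_ifs at hT <;> omega
  · rw [if_neg (by omega)]
    apply Odd.neg_one_pow
    rw [Nat.odd_iff]
    split_ifs at hT <;> omega
  · rw [if_neg (by omega)]
    apply Odd.neg_one_pow
    rw [Nat.odd_iff]
    split_ifs at hT <;> omega
  · rw [if_pos (by omega)]
    apply Even.neg_one_pow
    rw [Nat.even_iff]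
    split_ifs at hT <;> omega

end Stmt19Aux

open Stmt19Aux

theorem stmt_19 (n : ℕ) (hn : Odd n) (hpos : 0 < n) (a : ℤ)
    (ha : IsCoprime (a * (1 - a)) (n : ℤ)) :
    ((-1 : ℤ) ^ ((Finset.Icc 1 ((n - 1) / 2)).filter
        (fun k : ℕ => ((k : ℤ) * a) % n > (k : ℤ))).card
      = jacobiSym (2 * a * (1 - a)) n) := by
  have hA : IsCoprime a (n : ℤ) := ha.of_mul_left_left
  have h1A : IsCoprime (1 - a) (n : ℤ) := ha.of_mul_left_right
  have hA1 : IsCoprime (a - 1) (n : ℤ) := by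
    have := h1A.neg_left
    rwa [neg_sub] at this
  have hcnt := count_eq hn hpos hA hA1
  have hEa := sum_ediv_parity hn hpos hA
  have hEa1 := sum_ediv_parity hn hpos hA1
  simp only [Int.cast_sub, Int.cast_one] at hEa1
  have hE := congrArg (fun x : ℤ => (x : ZMod 2)) hcnt
  simp only [Int.cast_sub, Int.cast_add, Int.cast_natCast] at hE
  rw [hEa, hEa1] at hE
  have hTT : ((∑ k ∈ Finset.Icc 1 ((n - 1) / 2), (k : ℤ) : ℤ) : ZMod 2)
      = ((∑ k ∈ Finset.Icc 1 ((n - 1) / 2), k : ℕ) : ZMod 2) := by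
    push_cast
    rfl
  rw [hTT] at hE
  have hpar : ((((Finset.Icc 1 ((n - 1) / 2)).filter
        (fun k : ℕ => ((k : ℤ) * a) % n > (k : ℤ))).card : ℕ) : ZMod 2)
      = (((n - 1) / 2 + (∑ k ∈ Finset.Icc 1 ((n - 1) / 2), k) + G n a + G n (a - 1) : ℕ)
          : ZMod 2) := by
    rw [Nat.cast_add, Nat.cast_add, Nat.cast_add]
    linear_combination hE - (((∑ k ∈ Finset.Icc 1 ((n - 1) / 2), k : ℕ) : ZMod 2)
      + ((G n a : ℕ) : ZMod 2)) * two_zmod2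
  rw [neg_one_pow_congr (zmod2_to_mod hpar)]
  rw [jacobiSym.mul_left, jacobiSym.mul_left]
  rw [jacobiSym.at_two hn, ← neg_one_pow_T_eq_chi8 hn, ← jenkins hn hpos hA]
  have h1a : jacobiSym (1 - a) n = ((-1 : ℤ)) ^ ((n - 1) / 2) * (-1) ^ G n (a - 1) := by
    rw [show (1 - a : ℤ) = -(a - 1) from by ring, jacobiSym.neg _ hn, ← jenkins hn hpos hA1]
    congr 1
    rw [ZMod.χ₄_eq_neg_one_pow (Nat.odd_iff.mp hn)]
    congr 1
    obtain ⟨t, ht⟩ := hn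
    omega
  rw [h1a, ← pow_add, ← pow_add, ← pow_add]
  exact neg_one_pow_congr (by omega)
end
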